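/- arXiv:2501.00991 — 4 statements merged into one kernel-verified Lean document; each statement's English description precedes it below -/
import Mathlib

section
/- Let G be a prime graph of twin-width 1 with realiser (σ, τ), and let G_n, …, G_1 be any 1-contraction sequence of G. Then the two vertices u, v contracted in the first contraction (from G_n to G_{n-1}) satisfy: for one ordering π ∈ {σ, τ}, |π(u) − π(v)| = 1 (they are consecutive), and for the other ordering π′, |π′(u) − π′(v)| = 2 (exactly one vertex lies strictly between them). -/
open Finset

/-- Two vertex sets are *homogeneous* in `G` if they are complete or anticomplete
to each other. A red edge of a trigraph in a contraction sequence joins two parts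
that are not homogeneous. -/
def Homogeneous {V : Type*} (G : SimpleGraph V) (X Y : Finset V) : Prop :=
  (∀ x ∈ X, ∀ y ∈ Y, G.Adj x y) ∨ (∀ x ∈ X, ∀ y ∈ Y, ¬ G.Adj x y)

/-- A contraction sequence of a graph on vertex type `V` (with `n = Fintype.card V`),
encoded by the partitions of `V` into the parts of the trigraphs `G_n, …, G_1`:
`parts i` is the partition whose blocks are the parts of the vertices of `G_i`.
`G_n` is the discrete partition, and `G_i` is obtained from `G_{i+1}` by merging two parts. -/
structure ContractionSeq (V : Type*) [Fintype V] [DecidableEq V] where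
  parts : ℕ → Finpartition (Finset.univ : Finset V)
  parts_card : ∀ i, 1 ≤ i → i ≤ Fintype.card V → (parts i).parts.card = i
  parts_top : ∀ X ∈ (parts (Fintype.card V)).parts, X.card = 1
  merge : ∀ i, 1 ≤ i → i < Fintype.card V →
    ∃ X ∈ (parts (i + 1)).parts, ∃ Y ∈ (parts (i + 1)).parts, X ≠ Y ∧
      (parts i).parts = insert (X ∪ Y) ((((parts (i + 1)).parts).erase X).erase Y)

/-- Every part of the partition `P` (i.e. every vertex of the corresponding trigraph)
is incident to at most `d` red edges. -/
def RedDegLE {V : Type*} [Fintype V] [DecidableEq V] (G : SimpleGraph V)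
    (P : Finpartition (Finset.univ : Finset V)) (d : ℕ) : Prop :=
  ∀ X ∈ P.parts, {Y | Y ∈ P.parts ∧ Y ≠ X ∧ ¬ Homogeneous G X Y}.ncard ≤ d

/-- `C` is a `d`-sequence of `G`: every trigraph in it has maximum red degree at most `d`. -/
def IsDSeq {V : Type*} [Fintype V] [DecidableEq V] (G : SimpleGraph V)
    (C : ContractionSeq V) (d : ℕ) : Prop :=
  ∀ i, 1 ≤ i → i ≤ Fintype.card V → RedDegLE G (C.parts i) d

/-- The twin-width of `G`: the least `d` such that `G` has a `d`-sequence. -/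
noncomputable def tww {V : Type*} [Fintype V] [DecidableEq V] (G : SimpleGraph V) : ℕ :=
  sInf {d | ∃ C : ContractionSeq V, IsDSeq G C d}

/-- `(σ, τ)` is a realiser of `G` as a permutation graph. -/
def IsRealiser {V : Type*} [Fintype V] (G : SimpleGraph V)
    (σ τ : V ≃ Fin (Fintype.card V)) : Prop :=
  ∀ u v : V, G.Adj u v ↔ ((σ u < σ v ∧ τ v < τ u) ∨ (σ v < σ u ∧ τ u < τ v))

/-- `G` is a permutation graph. -/
def IsPermutationGraph {V : Type*} [Fintype V] (G : SimpleGraph V) : Prop :=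
  ∃ σ τ : V ≃ Fin (Fintype.card V), IsRealiser G σ τ

/-- `I` is an interval for the ordering `σ` (its image is a set of consecutive integers,
equivalently it is convex). -/
def IsIntervalFor {V : Type*} {n : ℕ} (σ : V ≃ Fin n) (I : Set V) : Prop :=
  ∀ u v w : V, u ∈ I → w ∈ I → σ u ≤ σ v → σ v ≤ σ w → v ∈ I

/-- `M` is a module of `G`. -/
def IsModule {V : Type*} (G : SimpleGraph V) (M : Set V) : Prop :=
  ∀ v ∉ M, (∀ m ∈ M, G.Adj v m) ∨ (∀ m ∈ M, ¬ G.Adj v m)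

/-- `G` is prime (w.r.t. modules): all its modules are trivial. -/
def IsPrimeGraph {V : Type*} (G : SimpleGraph V) : Prop :=
  ∀ M : Set V, IsModule G M → M.Subsingleton ∨ M = Set.univ

/-- `M` is a strong module of `G`. -/
def IsStrongModule {V : Type*} (G : SimpleGraph V) (M : Set V) : Prop :=
  IsModule G M ∧ ∀ M' : Set V, IsModule G M' → M ⊆ M' ∨ M' ⊆ M ∨ M ∩ M' = ∅

/-- The underlying graph of the trigraph corresponding to the partition `P` in a
contraction sequence of `G`: parts `X ≠ Y` are adjacent (by a black or red edge)
iff some edge of `G` joins them. -/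
def QuotientGraph {V : Type*} [Fintype V] [DecidableEq V] (G : SimpleGraph V)
    (P : Finpartition (Finset.univ : Finset V)) :
    SimpleGraph {X : Finset V // X ∈ P.parts} where
  Adj X Y := X ≠ Y ∧ ∃ x ∈ X.1, ∃ y ∈ Y.1, G.Adj x y
  symm := by
    constructor
    rintro X Y ⟨hne, x, hx, y, hy, hadj⟩
    exact ⟨hne.symm, y, hy, x, hx, hadj.symm⟩
  loopless := by constructor; rintro X ⟨hne, -⟩; exact hne rfl

/-- `w` lies strictly between `a` and `b` in the ordering `σ`. -/
def StrictlyBetween {V : Type*} {n : ℕ} (σ : V ≃ Fin n) (a w b : V) : Prop :=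
  (σ a < σ w ∧ σ w < σ b) ∨ (σ b < σ w ∧ σ w < σ a)

/-- `G` is distance-hereditary. -/
def DistanceHereditary {V : Type*} (G : SimpleGraph V) : Prop :=
  ∀ S : Set V, (G.induce S).Connected →
    ∀ u v : S, (G.induce S).dist u v = G.dist ↑u ↑v

/-- There is a path from `a` to `b` in `G` containing no vertex equal or adjacent to `c`. -/
def AvoidingPath {V : Type*} (G : SimpleGraph V) (a b c : V) : Prop :=
  ∃ w : G.Walk a b, w.IsPath ∧ ∀ v ∈ w.support, v ≠ c ∧ ¬ G.Adj c v

/-- `x, y, z` form an asteroidal triple of `G`. -/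
def AsteroidalTriple {V : Type*} (G : SimpleGraph V) (x y z : V) : Prop :=
  x ≠ y ∧ y ≠ z ∧ x ≠ z ∧
    AvoidingPath G x y z ∧ AvoidingPath G y z x ∧ AvoidingPath G x z y

/-- `G` is asteroidal triple-free. -/
def ATFree {V : Type*} (G : SimpleGraph V) : Prop :=
  ∀ x y z : V, ¬ AsteroidalTriple G x y z

/-- `G` is a cograph: it has no induced path on four vertices. -/
def IsCograph {V : Type*} (G : SimpleGraph V) : Prop :=
  IsEmpty (SimpleGraph.pathGraph 4 ↪g G)

namespace Stmt4Aux

variable {V : Type*}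

section Homog
variable {G : SimpleGraph V} {X Y : Finset V}

lemma homog_symm (h : Homogeneous G X Y) : Homogeneous G Y X := by
  rcases h with h | h
  · exact Or.inl fun y hy x hx => (h x hx y hy).symm
  · exact Or.inr fun y hy x hx hadj => h x hx y hy hadj.symm

lemma homog_adj_iff (h : Homogeneous G X Y) {x1 x2 y1 y2 : V}
    (hx1 : x1 ∈ X) (hy1 : y1 ∈ Y) (hx2 : x2 ∈ X) (hy2 : y2 ∈ Y) :
    G.Adj x1 y1 ↔ G.Adj x2 y2 := by
  rcases h with h | h
  · exact iff_of_true (h _ hx1 _ hy1) (h _ hx2 _ hy2)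
  · exact iff_of_false (h _ hx1 _ hy1) (h _ hx2 _ hy2)

lemma not_homog_of {x1 x2 y1 y2 : V} (hx1 : x1 ∈ X) (hy1 : y1 ∈ Y) (hx2 : x2 ∈ X) (hy2 : y2 ∈ Y)
    (h1 : G.Adj x1 y1) (h2 : ¬ G.Adj x2 y2) : ¬ Homogeneous G X Y := fun h =>
  h2 ((homog_adj_iff h hx1 hy1 hx2 hy2).mp h1)

lemma homog_singleton {a b : V} : Homogeneous G {a} {b} := by
  by_cases h : G.Adj a b
  · exact Or.inl (by simp [h])
  · exact Or.inr (by simp [h])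

end Homog

lemma eq_of_ncard_le_one {α : Type*} {s : Set α} (hf : s.Finite) (h : s.ncard ≤ 1)
    {a b : α} (ha : a ∈ s) (hb : b ∈ s) : a = b := by
  by_contra hne
  have h2 : ({a, b} : Set α) ⊆ s := by intro x hx; rcases hx with rfl | rfl; exacts [ha, hb]
  have := Set.ncard_le_ncard h2 hf
  rw [Set.ncard_pair hne] at this; omega

lemma module_contra {G : SimpleGraph V} (hprime : IsPrimeGraph G) {M : Set V}
    (hmod : IsModule G M) {a b c : V} (ha : a ∈ M) (hb : b ∈ M) (hab : a ≠ b) (hc : c ∉ M) :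
    False := by
  rcases hprime M hmod with h | h
  · exact hab (h ha hb)
  · exact hc (h ▸ Set.mem_univ c)

section Geometry
variable [Fintype V] {G : SimpleGraph V} {σ τ : V ≃ Fin (Fintype.card V)}

lemma realiser_swap (hreal : IsRealiser G σ τ) : IsRealiser G τ σ := by
  intro a b
  rw [hreal a b]
  constructor
  · rintro (⟨h1, h2⟩ | ⟨h1, h2⟩)
    · exact Or.inr ⟨h2, h1⟩
    · exact Or.inl ⟨h2, h1⟩
  · rintro (⟨h1, h2⟩ | ⟨h1, h2⟩)
    · exact Or.inr ⟨h2, h1⟩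
    · exact Or.inl ⟨h2, h1⟩

variable (hreal : IsRealiser G σ τ)

include hreal

lemma adj_of_lt {a b : V} (h1 : σ a < σ b) (h2 : τ b < τ a) : G.Adj a b :=
  (hreal a b).mpr (Or.inl ⟨h1, h2⟩)

lemma adj_of_gt {a b : V} (h1 : σ b < σ a) (h2 : τ a < τ b) : G.Adj a b :=
  (hreal a b).mpr (Or.inr ⟨h1, h2⟩)

lemma nadj_of_lt {a b : V} (h1 : σ a < σ b) (h2 : τ a < τ b) : ¬ G.Adj a b := by
  intro h
  rcases (hreal a b).mp h with ⟨c1, c2⟩ | ⟨c1, c2⟩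
  · exact absurd h2 (not_lt.2 c2.le)
  · exact absurd h1 (not_lt.2 c1.le)

lemma nadj_of_gt {a b : V} (h1 : σ b < σ a) (h2 : τ b < τ a) : ¬ G.Adj a b := by
  intro h
  rcases (hreal a b).mp h with ⟨c1, c2⟩ | ⟨c1, c2⟩
  · exact absurd h1 (not_lt.2 c1.le)
  · exact absurd h2 (not_lt.2 c2.le)

omit hreal

lemma notSB_cases {u v x : V} (h1 : σ x ≠ σ u) (h2 : σ x ≠ σ v)
    (h : ¬ StrictlyBetween σ u x v) :
    (σ x < σ u ∧ σ x < σ v) ∨ (σ u < σ x ∧ σ v < σ x) := by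
  rcases lt_trichotomy (σ x) (σ u) with hu | hu | hu
  · rcases lt_trichotomy (σ x) (σ v) with hv | hv | hv
    · exact Or.inl ⟨hu, hv⟩
    · exact absurd hv h2
    · exact absurd (Or.inr ⟨hv, hu⟩) h
  · exact absurd hu h1
  · rcases lt_trichotomy (σ x) (σ v) with hv | hv | hv
    · exact absurd (Or.inl ⟨hu, hv⟩) h
    · exact absurd hv h2
    · exact Or.inr ⟨hu, hv⟩

include hreal

lemma betw_aux {u v x : V} (hadj : G.Adj x u ↔ G.Adj x v)
    (hxu : x ≠ u) (hxv : x ≠ v)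
    (hσ : StrictlyBetween σ u x v) (hτ : ¬ StrictlyBetween τ u x v) : False := by
  have t1 : τ x ≠ τ u := fun h => hxu (τ.injective h)
  have t2 : τ x ≠ τ v := fun h => hxv (τ.injective h)
  rcases notSB_cases t1 t2 hτ with ⟨h1, h2⟩ | ⟨h1, h2⟩ <;> rcases hσ with ⟨s1, s2⟩ | ⟨s1, s2⟩
  · exact nadj_of_lt hreal s2 h2 (hadj.mp (adj_of_gt hreal s1 h1))
  · exact nadj_of_lt hreal s2 h1 (hadj.mpr (adj_of_gt hreal s1 h2))
  · exact nadj_of_gt hreal s1 h1 (hadj.mpr (adj_of_lt hreal s2 h2))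
  · exact nadj_of_gt hreal s1 h2 (hadj.mp (adj_of_lt hreal s2 h1))

lemma betw_iff {u v x : V} (hadj : G.Adj x u ↔ G.Adj x v) (hxu : x ≠ u) (hxv : x ≠ v) :
    StrictlyBetween σ u x v ↔ StrictlyBetween τ u x v := by
  constructor
  · intro h; by_contra h'; exact betw_aux hreal hadj hxu hxv h h'
  · intro h; by_contra h'; exact betw_aux (realiser_swap hreal) hadj hxu hxv h h'

lemma splitter_not_both {u v w : V} (hsp : ¬ (G.Adj w u ↔ G.Adj w v))
    (hbσ : StrictlyBetween σ u w v) (hbτ : StrictlyBetween τ u w v) : False := by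
  rcases hbσ with ⟨s1, s2⟩ | ⟨s1, s2⟩ <;> rcases hbτ with ⟨t1, t2⟩ | ⟨t1, t2⟩
  · exact hsp (iff_of_false (nadj_of_gt hreal s1 t1) (nadj_of_lt hreal s2 t2))
  · exact hsp (iff_of_true (adj_of_gt hreal s1 t2) (adj_of_lt hreal s2 t1))
  · exact hsp (iff_of_true (adj_of_lt hreal s2 t1) (adj_of_gt hreal s1 t2))
  · exact hsp (iff_of_false (nadj_of_lt hreal s2 t2) (nadj_of_gt hreal s1 t1))

lemma splitter_some {u v w : V} (hsp : ¬ (G.Adj w u ↔ G.Adj w v))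
    (hwu : w ≠ u) (hwv : w ≠ v) :
    StrictlyBetween σ u w v ∨ StrictlyBetween τ u w v := by
  by_contra h
  push_neg at h
  obtain ⟨hσ, hτ⟩ := h
  have s1 : σ w ≠ σ u := fun h => hwu (σ.injective h)
  have s2 : σ w ≠ σ v := fun h => hwv (σ.injective h)
  have t1 : τ w ≠ τ u := fun h => hwu (τ.injective h)
  have t2 : τ w ≠ τ v := fun h => hwv (τ.injective h)
  rcases notSB_cases s1 s2 hσ with ⟨a1, a2⟩ | ⟨a1, a2⟩ <;>
    rcases notSB_cases t1 t2 hτ with ⟨b1, b2⟩ | ⟨b1, b2⟩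
  · exact hsp (iff_of_false (nadj_of_lt hreal a1 b1) (nadj_of_lt hreal a2 b2))
  · exact hsp (iff_of_true (adj_of_lt hreal a1 b1) (adj_of_lt hreal a2 b2))
  · exact hsp (iff_of_true (adj_of_gt hreal a1 b1) (adj_of_gt hreal a2 b2))
  · exact hsp (iff_of_false (nadj_of_gt hreal a1 b1) (nadj_of_gt hreal a2 b2))

omit hreal

lemma count_empty {u v : V} (h : σ u < σ v)
    (he : ∀ x, ¬ StrictlyBetween σ u x v) : ((σ u : ℤ) - (σ v : ℤ)).natAbs = 1 := by
  by_contra hne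
  have hval : (σ u).val < (σ v).val := h
  have hb : (σ u).val + 1 < (σ v).val := by omega
  set m : Fin (Fintype.card V) := ⟨(σ u).val + 1, by have := (σ v).isLt; omega⟩ with hm
  refine he (σ.symm m) (Or.inl ⟨?_, ?_⟩)
  · show σ u < σ (σ.symm m)
    rw [Equiv.apply_symm_apply]
    exact Fin.lt_def.mpr (by simp [hm])
  · show σ (σ.symm m) < σ v
    rw [Equiv.apply_symm_apply]
    exact Fin.lt_def.mpr (by simp [hm]; omega)

lemma count_one {u v w : V} (h : σ u < σ v)
    (hw : StrictlyBetween σ u w v) (huniq : ∀ x, StrictlyBetween σ u x v → x = w) :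
    ((σ u : ℤ) - (σ v : ℤ)).natAbs = 2 := by
  have hw' : σ u < σ w ∧ σ w < σ v := by
    rcases hw with h' | ⟨h1, h2⟩
    · exact h'
    · exact absurd (h1.trans h2) (not_lt.2 h.le)
  have h1 : (σ w).val = (σ u).val + 1 := by
    by_contra hne
    have hlt : (σ u).val + 1 < (σ w).val := by
      have : (σ u).val < (σ w).val := hw'.1; omega
    set m : Fin (Fintype.card V) := ⟨(σ u).val + 1, by have := (σ w).isLt; omega⟩ with hm
    have hx : StrictlyBetween σ u (σ.symm m) v := by
      refine Or.inl ⟨?_, ?_⟩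
      · show σ u < σ (σ.symm m)
        rw [Equiv.apply_symm_apply]; exact Fin.lt_def.mpr (by simp [hm])
      · show σ (σ.symm m) < σ v
        rw [Equiv.apply_symm_apply]
        exact Fin.lt_def.mpr (by simp [hm]; have : (σ w).val < (σ v).val := hw'.2; omega)
    have := huniq _ hx
    have : σ (σ.symm m) = σ w := by rw [this]
    rw [Equiv.apply_symm_apply] at this
    rw [← this] at hlt
    simp [hm] at hlt
  have h2 : (σ v).val = (σ w).val + 1 := by
    by_contra hne
    have hlt : (σ w).val + 1 < (σ v).val := by
      have : (σ w).val < (σ v).val := hw'.2; omega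
    set m : Fin (Fintype.card V) := ⟨(σ w).val + 1, by have := (σ v).isLt; omega⟩ with hm
    have hx : StrictlyBetween σ u (σ.symm m) v := by
      refine Or.inl ⟨?_, ?_⟩
      · show σ u < σ (σ.symm m)
        rw [Equiv.apply_symm_apply]
        exact Fin.lt_def.mpr (by simp [hm]; have : (σ u).val < (σ w).val := hw'.1; omega)
      · show σ (σ.symm m) < σ v
        rw [Equiv.apply_symm_apply]; exact Fin.lt_def.mpr (by simp [hm]; omega)
    have heq := huniq _ hx
    have : σ (σ.symm m) = σ w := by rw [heq]
    rw [Equiv.apply_symm_apply] at this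
    have : m.val = (σ w).val := by rw [this]
    simp [hm] at this
  omega

end Geometry


section Transport
variable [Fintype V] {G : SimpleGraph V} {σ τ : V ≃ Fin (Fintype.card V)}

lemma realiser_compl (hreal : IsRealiser G σ τ) :
    IsRealiser Gᶜ σ (τ.trans Fin.revPerm) := by
  intro a b
  rw [SimpleGraph.compl_adj]
  have hrev : ∀ c d : V, (τ.trans Fin.revPerm) c < (τ.trans Fin.revPerm) d ↔ τ d < τ c := by
    intro c d; simp [Fin.rev_lt_rev]
  constructor
  · rintro ⟨hne, hnadj⟩
    have hσ : σ a ≠ σ b := fun h => hne (σ.injective h)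
    have hτ : τ a ≠ τ b := fun h => hne (τ.injective h)
    rcases hσ.lt_or_gt with h1 | h1
    · refine Or.inl ⟨h1, (hrev b a).mpr ?_⟩
      rcases hτ.lt_or_gt with h2 | h2
      · exact h2
      · exact absurd ((hreal a b).mpr (Or.inl ⟨h1, h2⟩)) hnadj
    · refine Or.inr ⟨h1, (hrev a b).mpr ?_⟩
      rcases hτ.lt_or_gt with h2 | h2
      · exact absurd ((hreal a b).mpr (Or.inr ⟨h1, h2⟩)) hnadj
      · exact h2
  · rintro (⟨h1, h2⟩ | ⟨h1, h2⟩)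
    · rw [hrev] at h2
      refine ⟨fun h => absurd h1 (by simp [h]), fun hadj => ?_⟩
      rcases (hreal a b).mp hadj with ⟨c1, c2⟩ | ⟨c1, c2⟩
      · exact absurd h2 (not_lt.2 c2.le)
      · exact absurd h1 (not_lt.2 c1.le)
    · rw [hrev] at h2
      refine ⟨fun h => absurd h1 (by simp [h]), fun hadj => ?_⟩
      rcases (hreal a b).mp hadj with ⟨c1, c2⟩ | ⟨c1, c2⟩
      · exact absurd h1 (not_lt.2 c1.le)
      · exact absurd h2 (not_lt.2 c2.le)

lemma realiser_revrev (hreal : IsRealiser G σ τ) :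
    IsRealiser G (σ.trans Fin.revPerm) (τ.trans Fin.revPerm) := by
  intro a b
  rw [hreal a b]
  simp only [Equiv.trans_apply, Fin.revPerm_apply, Fin.rev_lt_rev]
  tauto

lemma prime_compl (hprime : IsPrimeGraph G) : IsPrimeGraph Gᶜ := by
  intro M hmod
  refine hprime M ?_
  intro z hz
  rcases hmod z hz with h | h
  · refine Or.inr fun m hm hadj => ?_
    exact ((h m hm).2) hadj
  · refine Or.inl fun m hm => ?_
    have := h m hm
    rw [SimpleGraph.compl_adj] at this
    push_neg at this
    by_contra hnadj
    have hne : z ≠ m := fun he => hz (he ▸ hm)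
    exact hnadj (this hne)

lemma homog_compl_iff {X Y : Finset V} (hdisj : Disjoint X Y) :
    Homogeneous G X Y ↔ Homogeneous Gᶜ X Y := by
  have hne : ∀ x ∈ X, ∀ y ∈ Y, x ≠ y := by
    intro x hx y hy he
    exact (Finset.disjoint_left.mp hdisj hx) (he ▸ hy)
  constructor
  · rintro (h | h)
    · exact Or.inr fun x hx y hy hadj => hadj.2 (h x hx y hy)
    · exact Or.inl fun x hx y hy => ⟨hne x hx y hy, h x hx y hy⟩
  · rintro (h | h)
    · exact Or.inr fun x hx y hy hadj => (h x hx y hy).2 hadj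
    · refine Or.inl fun x hx y hy => ?_
      by_contra hnadj
      exact h x hx y hy ⟨hne x hx y hy, hnadj⟩

lemma dseq_compl [DecidableEq V] {C : ContractionSeq V} {d : ℕ} (hC : IsDSeq G C d) :
    IsDSeq Gᶜ C d := by
  intro i h1 h2 X hX
  have hset : {Y | Y ∈ (C.parts i).parts ∧ Y ≠ X ∧ ¬ Homogeneous Gᶜ X Y}
      = {Y | Y ∈ (C.parts i).parts ∧ Y ≠ X ∧ ¬ Homogeneous G X Y} := by
    ext Y
    simp only [Set.mem_setOf_eq, and_congr_right_iff]
    intro hY hYX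
    have hdisj : Disjoint X Y :=
      (C.parts i).disjoint (Finset.mem_coe.mpr hX) (Finset.mem_coe.mpr hY) (Ne.symm hYX)
    exact not_congr (homog_compl_iff hdisj).symm
  rw [hset]
  exact hC i h1 h2 X hX

lemma SB_rev {u x v : V} :
    StrictlyBetween (σ.trans Fin.revPerm) u x v ↔ StrictlyBetween σ u x v := by
  unfold StrictlyBetween
  simp only [Equiv.trans_apply, Fin.revPerm_apply, Fin.rev_lt_rev]
  tauto

lemma SB_symm {u x v : V} : StrictlyBetween σ u x v ↔ StrictlyBetween σ v x u := or_comm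

end Transport


end Stmt4Aux

section Core
open Finset
namespace Stmt4Aux

variable {V : Type*} [Fintype V] [DecidableEq V]

lemma uniform_of_homog {G : SimpleGraph V} {X Y : Finset V} (h : Homogeneous G X Y) {z : V}
    (hz : z ∈ X) : (∀ m ∈ Y, G.Adj z m) ∨ (∀ m ∈ Y, ¬ G.Adj z m) := by
  rcases h with h | h
  · exact Or.inl fun m hm => h z hz m hm
  · exact Or.inr fun m hm => h z hz m hm


lemma mod_pair_case {G : SimpleGraph V} {a b z : V}
    (h : (G.Adj z a ∧ G.Adj z b) ∨ (¬ G.Adj z a ∧ ¬ G.Adj z b)) :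
    (∀ m ∈ ({a, b} : Set V), G.Adj z m) ∨ (∀ m ∈ ({a, b} : Set V), ¬ G.Adj z m) := by
  rcases h with ⟨h1, h2⟩ | ⟨h1, h2⟩
  · refine Or.inl fun m hm => ?_
    simp only [Set.mem_insert_iff, Set.mem_singleton_iff] at hm
    rcases hm with rfl | rfl
    · exact h1
    · exact h2
  · refine Or.inr fun m hm => ?_
    simp only [Set.mem_insert_iff, Set.mem_singleton_iff] at hm
    rcases hm with rfl | rfl
    · exact h1
    · exact h2

lemma core0 {G : SimpleGraph V} {σ τ : V ≃ Fin (Fintype.card V)}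
    (hreal : IsRealiser G σ τ) (hprime : IsPrimeGraph G) {u v w x0 : V}
    (hsv : σ u < σ v) (htv : τ u < τ v)
    (hws1 : σ u < σ w) (hws2 : σ w < σ v) (hwt : τ w < τ u)
    (hL1 : ∀ x, x ≠ u → x ≠ v → x ≠ w → (G.Adj x u ↔ G.Adj x v))
    (hx0s1 : σ u < σ x0) (hx0s2 : σ x0 < σ v) (hx0t1 : τ u < τ x0) (hx0t2 : τ x0 < τ v)
    (C : ContractionSeq V) (hC : IsDSeq G C 1)
    (hU : ({u, v} : Finset V) ∈ (C.parts (Fintype.card V - 1)).parts)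
    (hW : ({w} : Finset V) ∈ (C.parts (Fintype.card V - 1)).parts) : False := by
  classical
  -- distinctness
  have huv : u ≠ v := fun h => absurd hsv (h ▸ lt_irrefl _)
  have hwu : w ≠ u := fun h => absurd hws1 (h ▸ lt_irrefl _)
  have hwv : w ≠ v := fun h => absurd hws2 (h ▸ lt_irrefl _)
  -- regions
  set inR : V → Prop := fun x => (σ u < σ x ∧ σ x < σ v) ∧ (τ u < τ x ∧ τ x < τ v) with hinR
  set inO : V → Prop := fun y => (σ y < σ u ∨ σ v < σ y) ∧ (τ y < τ u ∨ τ v < τ y) with hinO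
  have hR_ne : ∀ x, inR x → x ≠ u ∧ x ≠ v ∧ x ≠ w := by
    intro x hx
    refine ⟨fun h => absurd hx.1.1 (h ▸ lt_irrefl _), fun h => absurd hx.1.2 (h ▸ lt_irrefl _),
      fun h => absurd (hwt.trans hx.2.1) (h ▸ lt_irrefl _)⟩
  have hO_ne : ∀ y, inO y → y ≠ u ∧ y ≠ v ∧ y ≠ w ∧ ¬ inR y := by
    intro y hy
    have h1 : y ≠ u := by
      rintro rfl
      rcases hy.1 with h | h
      · exact lt_irrefl _ h
      · exact lt_irrefl _ (hsv.trans h)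
    have h2 : y ≠ v := by
      rintro rfl
      rcases hy.1 with h | h
      · exact lt_irrefl _ (h.trans hsv)
      · exact lt_irrefl _ h
    have h3 : y ≠ w := by
      rintro rfl
      rcases hy.1 with h | h
      · exact lt_irrefl _ (h.trans hws1)
      · exact lt_irrefl _ (hws2.trans h)
    refine ⟨h1, h2, h3, fun hr => ?_⟩
    rcases hy.1 with h | h
    · exact lt_irrefl _ (h.trans hr.1.1)
    · exact lt_irrefl _ (hr.1.2.trans h)
  have hx0R : inR x0 := ⟨⟨hx0s1, hx0s2⟩, ⟨hx0t1, hx0t2⟩⟩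
  -- classification
  have hclass : ∀ z, z = u ∨ z = v ∨ z = w ∨ inR z ∨ inO z := by
    intro z
    by_cases h1 : z = u; · exact Or.inl h1
    by_cases h2 : z = v; · exact Or.inr (Or.inl h2)
    by_cases h3 : z = w; · exact Or.inr (Or.inr (Or.inl h3))
    have hadj := hL1 z h1 h2 h3
    by_cases hb : StrictlyBetween σ u z v
    · have hbτ : StrictlyBetween τ u z v := (betw_iff hreal hadj h1 h2).mp hb
      refine Or.inr (Or.inr (Or.inr (Or.inl ⟨?_, ?_⟩)))
      · rcases hb with h | ⟨ha, hb'⟩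
        · exact h
        · exact absurd (ha.trans hb') (not_lt.2 hsv.le)
      · rcases hbτ with h | ⟨ha, hb'⟩
        · exact h
        · exact absurd (ha.trans hb') (not_lt.2 htv.le)
    · have hbτ : ¬ StrictlyBetween τ u z v := fun h => hb ((betw_iff hreal hadj h1 h2).mpr h)
      refine Or.inr (Or.inr (Or.inr (Or.inr ⟨?_, ?_⟩)))
      · rcases notSB_cases (fun h => h1 (σ.injective h)) (fun h => h2 (σ.injective h)) hb with
          ⟨ha, _⟩ | ⟨_, hb'⟩
        · exact Or.inl ha
        · exact Or.inr hb'
      · rcases notSB_cases (fun h => h1 (τ.injective h)) (fun h => h2 (τ.injective h)) hbτ with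
          ⟨ha, _⟩ | ⟨_, hb'⟩
        · exact Or.inl ha
        · exact Or.inr hb'
  -- basic adjacency facts
  have hnadj_uv : ¬ G.Adj u v := nadj_of_lt hreal hsv htv
  have hR_nadj_u : ∀ x, inR x → ¬ G.Adj x u := fun x hx => nadj_of_gt hreal hx.1.1 hx.2.1
  have hR_nadj_v : ∀ x, inR x → ¬ G.Adj x v := fun x hx => nadj_of_lt hreal hx.1.2 hx.2.2
  have hadj_wu : G.Adj w u := adj_of_gt hreal hws1 hwt
  have hnadj_wv : ¬ G.Adj w v := nadj_of_lt hreal hws2 (hwt.trans htv)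
  have hadj_wR : ∀ x, inR x → (G.Adj w x ↔ σ x < σ w) := by
    intro x hx
    constructor
    · intro h
      by_contra hh
      have hxw : x ≠ w := (hR_ne x hx).2.2
      have : σ w < σ x := by
        rcases lt_trichotomy (σ x) (σ w) with h' | h' | h'
        · exact absurd h' hh
        · exact absurd (σ.injective h') hxw
        · exact h'
      exact nadj_of_lt hreal this (hwt.trans hx.2.1) h
    · intro h
      exact adj_of_gt hreal h (hwt.trans hx.2.1)
  -- epsilon uniformity
  have heps : ∀ y, inO y → ∀ s, σ u ≤ σ s → σ s ≤ σ v → τ u ≤ τ s → τ s ≤ τ v →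
      (G.Adj y s ↔ G.Adj y u) := by
    intro y hy s hs1 hs2 ht1 ht2
    rcases hy.1 with c1 | c1 <;> rcases hy.2 with c2 | c2
    · exact iff_of_false (nadj_of_lt hreal (lt_of_lt_of_le c1 hs1) (lt_of_lt_of_le c2 ht1))
        (nadj_of_lt hreal c1 c2)
    · exact iff_of_true (adj_of_lt hreal (lt_of_lt_of_le c1 hs1) (lt_of_le_of_lt ht2 c2))
        (adj_of_lt hreal c1 (htv.trans c2))
    · exact iff_of_true (adj_of_gt hreal (lt_of_le_of_lt hs2 c1) (lt_of_lt_of_le c2 ht1))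
        (adj_of_gt hreal (hsv.trans c1) c2)
    · exact iff_of_false (nadj_of_gt hreal (lt_of_le_of_lt hs2 c1) (lt_of_le_of_lt ht2 c2))
        (nadj_of_gt hreal (hsv.trans c1) (htv.trans c2))
  have hepsR : ∀ y, inO y → ∀ x, inR x → (G.Adj y x ↔ G.Adj y u) := fun y hy x hx =>
    heps y hy x hx.1.1.le hx.1.2.le hx.2.1.le hx.2.2.le
  have hepsv : ∀ y, inO y → (G.Adj y v ↔ G.Adj y u) := fun y hy =>
    heps y hy v hsv.le le_rfl htv.le le_rfl
  -- T region
  set inT : V → Prop := fun y => τ w < τ y ∧ τ y < τ u with hinT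
  have hadj_w_T : ∀ y, inO y → inT y → (G.Adj y w ↔ ¬ G.Adj y u) := by
    intro y hy ht
    rcases hy.1 with c1 | c1
    · exact iff_of_true (adj_of_lt hreal (c1.trans hws1) ht.1) (nadj_of_lt hreal c1 ht.2)
    · exact iff_of_false (nadj_of_gt hreal (hws2.trans c1) ht.1)
        (fun hn => hn (adj_of_gt hreal (hsv.trans c1) ht.2))
  have hadj_w_nT : ∀ y, inO y → ¬ inT y → (G.Adj y w ↔ G.Adj y u) := by
    intro y hy hnt
    have hyw : y ≠ w := (hO_ne y hy).2.2.1
    rcases hy.2 with c2 | c2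
    · have hyw' : τ y < τ w := by
        rcases lt_trichotomy (τ y) (τ w) with h' | h' | h'
        · exact h'
        · exact absurd (τ.injective h') hyw
        · exact absurd ⟨h', c2⟩ hnt
      rcases hy.1 with c1 | c1
      · exact iff_of_false (nadj_of_lt hreal (c1.trans hws1) hyw') (nadj_of_lt hreal c1 c2)
      · exact iff_of_true (adj_of_gt hreal (hws2.trans c1) hyw') (adj_of_gt hreal (hsv.trans c1) c2)
    · rcases hy.1 with c1 | c1
      · exact iff_of_true (adj_of_lt hreal (c1.trans hws1) ((hwt.trans htv).trans c2))
          (adj_of_lt hreal c1 (htv.trans c2))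
      · exact iff_of_false (nadj_of_gt hreal (hws2.trans c1) ((hwt.trans htv).trans c2))
          (nadj_of_gt hreal (hsv.trans c1) (htv.trans c2))
  -- BF lemmas
  have hxL : ∃ x, inR x ∧ σ x < σ w := by
    by_contra hno
    push_neg at hno
    have hno' : ∀ x, inR x → σ w < σ x := by
      intro x hx
      rcases lt_trichotomy (σ x) (σ w) with h' | h' | h'
      · exact absurd h' (not_lt.2 (hno x hx))
      · exact absurd (σ.injective h') (hR_ne x hx).2.2
      · exact h'
    have hmod : IsModule G {z | z = v ∨ inR z} := by
      intro z hz
      simp only [Set.mem_setOf_eq, not_or] at hz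
      rcases hclass z with rfl | rfl | rfl | hz' | hz'
      · refine Or.inr fun m hm => ?_
        rcases hm with rfl | hm
        · exact hnadj_uv
        · exact fun h => hR_nadj_u m hm h.symm
      · exact absurd rfl hz.1
      · refine Or.inr fun m hm => ?_
        rcases hm with rfl | hm
        · exact hnadj_wv
        · exact fun h => nadj_of_lt hreal (hno' m hm) (hwt.trans hm.2.1) h
      · exact absurd hz' hz.2
      · by_cases hadj : G.Adj z u
        · refine Or.inl fun m hm => ?_
          rcases hm with rfl | hm
          · exact (hepsv z hz').mpr hadj
          · exact (hepsR z hz' m hm).mpr hadj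
        · refine Or.inr fun m hm => ?_
          rcases hm with rfl | hm
          · exact fun h => hadj ((hepsv z hz').mp h)
          · exact fun h => hadj ((hepsR z hz' m hm).mp h)
    exact module_contra hprime hmod (Or.inl rfl) (Or.inr hx0R)
      (fun h => (hR_ne x0 hx0R).2.1 h.symm)
      (by simp only [Set.mem_setOf_eq, not_or]; exact ⟨huv, fun h => (hR_ne u h).1 rfl⟩)
  have hxR : ∃ x, inR x ∧ σ w < σ x := by
    by_contra hno
    push_neg at hno
    have hno' : ∀ x, inR x → σ x < σ w := by
      intro x hx
      rcases lt_trichotomy (σ x) (σ w) with h' | h' | h'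
      · exact h'
      · exact absurd (σ.injective h') (hR_ne x hx).2.2
      · exact absurd h' (not_lt.2 (hno x hx))
    have hmod : IsModule G {z | z = u ∨ inR z} := by
      intro z hz
      simp only [Set.mem_setOf_eq, not_or] at hz
      rcases hclass z with rfl | rfl | rfl | hz' | hz'
      · exact absurd rfl hz.1
      · refine Or.inr fun m hm => ?_
        rcases hm with rfl | hm
        · exact fun h => hnadj_uv h.symm
        · exact fun h => hR_nadj_v m hm h.symm
      · refine Or.inl fun m hm => ?_
        rcases hm with rfl | hm
        · exact hadj_wu
        · exact (hadj_wR m hm).mpr (hno' m hm)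
      · exact absurd hz' hz.2
      · by_cases hadj : G.Adj z u
        · refine Or.inl fun m hm => ?_
          rcases hm with rfl | hm
          · exact hadj
          · exact (hepsR z hz' m hm).mpr hadj
        · refine Or.inr fun m hm => ?_
          rcases hm with rfl | hm
          · exact hadj
          · exact fun h => hadj ((hepsR z hz' m hm).mp h)
    exact module_contra hprime hmod (Or.inl rfl) (Or.inr hx0R)
      (fun h => (hR_ne x0 hx0R).1 h.symm)
      (by simp only [Set.mem_setOf_eq, not_or]; exact ⟨huv.symm, fun h => (hR_ne v h).2.1 rfl⟩)
  have hyT : ∃ y, inO y ∧ inT y := by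
    by_contra hno
    push_neg at hno
    by_cases hO : ∃ y, inO y
    · have hmod : IsModule G {z | z = u ∨ z = v ∨ inR z ∨ z = w} := by
        intro z hz
        simp only [Set.mem_setOf_eq, not_or] at hz
        rcases hclass z with rfl | rfl | rfl | hz' | hz'
        · exact absurd rfl hz.1
        · exact absurd rfl hz.2.1
        · exact absurd rfl hz.2.2.2
        · exact absurd hz' hz.2.2.1
        · by_cases hadj : G.Adj z u
          · refine Or.inl fun m hm => ?_
            rcases hm with rfl | rfl | hm | rfl
            · exact hadj
            · exact (hepsv z hz').mpr hadj
            · exact (hepsR z hz' m hm).mpr hadj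
            · exact (hadj_w_nT z hz' (hno z hz')).mpr hadj
          · refine Or.inr fun m hm => ?_
            rcases hm with rfl | rfl | hm | rfl
            · exact hadj
            · exact fun h => hadj ((hepsv z hz').mp h)
            · exact fun h => hadj ((hepsR z hz' m hm).mp h)
            · exact fun h => hadj ((hadj_w_nT z hz' (hno z hz')).mp h)
      obtain ⟨y, hy⟩ := hO
      refine module_contra hprime hmod (c := y) (Or.inl rfl) (Or.inr (Or.inl rfl)) huv ?_
      simp only [Set.mem_setOf_eq, not_or]
      exact ⟨(hO_ne y hy).1, (hO_ne y hy).2.1, (hO_ne y hy).2.2.2, (hO_ne y hy).2.2.1⟩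
    · push_neg at hO
      have hmax : ∀ z, z ≠ v → ¬ G.Adj z v := by
        intro z hzv
        rcases hclass z with rfl | rfl | rfl | hz' | hz'
        · exact hnadj_uv
        · exact absurd rfl hzv
        · exact hnadj_wv
        · exact hR_nadj_v z hz'
        · exact absurd hz' (hO z)
      have hmod : IsModule G {z | z ≠ v} := by
        intro z hz
        simp only [Set.mem_setOf_eq, not_not] at hz
        subst hz
        exact Or.inr fun m hm => fun h => hmax m hm h.symm
      exact module_contra hprime hmod (a := u) (b := w) (c := v) huv hwv
        (fun h => hwu h.symm) (by simp)
  -- ===== partition machinery =====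
  obtain ⟨xL, hxLR, hxLs⟩ := hxL
  obtain ⟨xR, hxRR, hxRs⟩ := hxR
  obtain ⟨y0, hy0O, hy0T⟩ := hyT
  have h2n : 2 ≤ Fintype.card V := Fintype.one_lt_card_iff.mpr ⟨u, v, huv⟩
  have hUW : ({u, v} : Finset V) ≠ {w} := by
    intro h
    have hw' : w ∈ ({u, v} : Finset V) := h ▸ Finset.mem_singleton_self w
    simp only [Finset.mem_insert, Finset.mem_singleton] at hw'
    rcases hw' with h' | h'
    exacts [hwu h', hwv h']
  have hmemu : u ∈ ({u, v} : Finset V) := by simp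
  have hmemv : v ∈ ({u, v} : Finset V) := by simp
  have hmemw : w ∈ ({w} : Finset V) := Finset.mem_singleton_self w
  have hnonhomUW : ¬ Homogeneous G {u, v} {w} :=
    not_homog_of hmemu hmemw hmemv hmemw hadj_wu.symm (fun h => hnadj_wv h.symm)
  have hnonhomWU : ¬ Homogeneous G {w} {u, v} := fun h => hnonhomUW (homog_symm h)
  have stateFacts : ∀ i, RedDegLE G (C.parts i) 1 →
      ({u, v} : Finset V) ∈ (C.parts i).parts → ({w} : Finset V) ∈ (C.parts i).parts →
      ∀ F ∈ (C.parts i).parts, F ≠ {u, v} → F ≠ {w} →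
        Homogeneous G {u, v} F ∧ Homogeneous G {w} F := by
    intro i hred hUi hWi F hF hFU hFW
    have hfin1 : {Y | Y ∈ (C.parts i).parts ∧ Y ≠ ({u, v} : Finset V) ∧
        ¬ Homogeneous G {u, v} Y}.Finite :=
      Set.Finite.subset ((C.parts i).parts.finite_toSet) fun Y hY => hY.1
    have hfin2 : {Y | Y ∈ (C.parts i).parts ∧ Y ≠ ({w} : Finset V) ∧
        ¬ Homogeneous G {w} Y}.Finite :=
      Set.Finite.subset ((C.parts i).parts.finite_toSet) fun Y hY => hY.1
    constructor
    · by_contra hnh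
      exact hFW (eq_of_ncard_le_one hfin1 (hred _ hUi) ⟨hF, hFU, hnh⟩
        ⟨hWi, hUW.symm, hnonhomUW⟩)
    · by_contra hnh
      exact hFU (eq_of_ncard_le_one hfin2 (hred _ hWi) ⟨hF, hFW, hnh⟩
        ⟨hUi, hUW, hnonhomWU⟩)
  have mergeContra : ∀ i, 1 ≤ i → i < Fintype.card V →
      ({u, v} : Finset V) ∈ (C.parts (i + 1)).parts →
      ({w} : Finset V) ∈ (C.parts (i + 1)).parts →
      ({u, v} : Finset V) ∈ (C.parts i).parts ∧ ({w} : Finset V) ∈ (C.parts i).parts := by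
    intro i h1 hin hU' hW'
    obtain ⟨X, hX, Y, hY, hXY, hEq⟩ := C.merge i h1 hin
    have hredQ : RedDegLE G (C.parts i) 1 := hC i h1 (le_of_lt hin)
    have hredP : RedDegLE G (C.parts (i + 1)) 1 := hC (i + 1) (by omega) (by omega)
    have facts := stateFacts (i + 1) hredP hU' hW'
    -- contraA : merging {u,v} with F is impossible
    have contraA : ∀ F ∈ (C.parts (i + 1)).parts, F ≠ {u, v} → F ≠ {w} →
        (C.parts i).parts =
          insert ({u, v} ∪ F) (((C.parts (i + 1)).parts.erase {u, v}).erase F) → False := by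
      intro F hF hFU hFW hEq'
      have hZ : ({u, v} : Finset V) ∪ F ∈ (C.parts i).parts := by
        rw [hEq']; exact Finset.mem_insert_self _ _
      have hkeep' : ∀ T ∈ (C.parts (i + 1)).parts, T ≠ {u, v} → T ≠ F →
          T ∈ (C.parts i).parts := by
        intro T hT ha hb
        rw [hEq']
        exact Finset.mem_insert_of_mem (Finset.mem_erase.mpr ⟨hb, Finset.mem_erase.mpr ⟨ha, hT⟩⟩)
      have hWi : ({w} : Finset V) ∈ (C.parts i).parts := hkeep' _ hW' hUW.symm (Ne.symm hFW)
      have hdisjF : ∀ z ∈ F, z ≠ u ∧ z ≠ v ∧ z ≠ w := by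
        intro z hz
        refine ⟨?_, ?_, ?_⟩
        · rintro rfl; exact hFU ((C.parts (i + 1)).eq_of_mem_parts hF hU' hz hmemu)
        · rintro rfl; exact hFU ((C.parts (i + 1)).eq_of_mem_parts hF hU' hz hmemv)
        · rintro rfl; exact hFW ((C.parts (i + 1)).eq_of_mem_parts hF hW' hz hmemw)
      have humem : u ∈ ({u, v} : Finset V) ∪ F := Finset.mem_union_left _ hmemu
      have hvmem : v ∈ ({u, v} : Finset V) ∪ F := Finset.mem_union_left _ hmemv
      have hZW : ({u, v} : Finset V) ∪ F ≠ {w} := by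
        intro h
        have := humem
        rw [h, Finset.mem_singleton] at this
        exact hwu this.symm
      have hnonhomZW : ¬ Homogeneous G ({u, v} ∪ F) {w} :=
        not_homog_of humem hmemw hvmem hmemw hadj_wu.symm (fun h => hnadj_wv h.symm)
      have hfinZ : {Y' | Y' ∈ (C.parts i).parts ∧ Y' ≠ ({u, v} : Finset V) ∪ F ∧
          ¬ Homogeneous G ({u, v} ∪ F) Y'}.Finite :=
        Set.Finite.subset ((C.parts i).parts.finite_toSet) fun Y' hY' => hY'.1
      have h23 : ∀ T ∈ (C.parts i).parts, T ≠ ({u, v} : Finset V) ∪ F →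
          ¬ Homogeneous G ({u, v} ∪ F) T → T = {w} := by
        intro T hT ha hb
        exact eq_of_ncard_le_one hfinZ (hredQ _ hZ) ⟨hT, ha, hb⟩ ⟨hWi, hZW.symm, hnonhomZW⟩
      have homT : ∀ T ∈ (C.parts (i + 1)).parts, T ≠ {u, v} → T ≠ F → T ≠ {w} →
          Homogeneous G ({u, v} ∪ F) T := by
        intro T hT ha hb hc
        by_contra hnh
        have hTi : T ∈ (C.parts i).parts := hkeep' T hT ha hb
        have hTZ : T ≠ ({u, v} : Finset V) ∪ F := by
          intro h
          have : u ∈ T := h ▸ humem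
          exact ha ((C.parts (i + 1)).eq_of_mem_parts hT hU' this hmemu)
        exact hc (h23 T hTi hTZ hnh)
      have hFmod : IsModule G (↑F : Set V) := by
        intro z hz
        rw [Finset.mem_coe] at hz
        obtain ⟨T, hT, hzT⟩ := (C.parts (i + 1)).exists_mem (Finset.mem_univ z)
        have hTF : T ≠ F := fun h => hz (h ▸ hzT)
        by_cases hTU : T = {u, v}
        · subst hTU
          rcases uniform_of_homog (facts F hF hFU hFW).1 hzT with h | h
          · exact Or.inl fun m hm => h m (Finset.mem_coe.mp hm)
          · exact Or.inr fun m hm => h m (Finset.mem_coe.mp hm)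
        · by_cases hTW : T = {w}
          · subst hTW
            rcases uniform_of_homog (facts F hF hFU hFW).2 hzT with h | h
            · exact Or.inl fun m hm => h m (Finset.mem_coe.mp hm)
            · exact Or.inr fun m hm => h m (Finset.mem_coe.mp hm)
          · have hom := homT T hT hTU hTF hTW
            rcases uniform_of_homog (homog_symm hom) hzT with h | h
            · exact Or.inl fun m hm =>
                h m (Finset.mem_union_right _ (Finset.mem_coe.mp hm))
            · exact Or.inr fun m hm =>
                h m (Finset.mem_union_right _ (Finset.mem_coe.mp hm))
      obtain ⟨f, hfF⟩ := (C.parts (i + 1)).nonempty_of_mem_parts hF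
      have hFsub : ∀ g ∈ F, g = f := by
        rcases hprime _ hFmod with hsub | huniv
        · intro g hg; exact hsub (Finset.mem_coe.mpr hg) (Finset.mem_coe.mpr hfF)
        · exfalso
          have : u ∈ F := Finset.mem_coe.mp (huniv ▸ Set.mem_univ u)
          exact (hdisjF u this).1 rfl
      obtain ⟨hfu, hfv, hfw⟩ := hdisjF f hfF
      have hfmemZ : f ∈ ({u, v} : Finset V) ∪ F := Finset.mem_union_right _ hfF
      have hstar : ∀ z, z ≠ u → z ≠ v → z ≠ w → z ≠ f → (G.Adj z f ↔ G.Adj z u) := by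
        intro z h1' h2' h3' h4'
        obtain ⟨T, hT, hzT⟩ := (C.parts (i + 1)).exists_mem (Finset.mem_univ z)
        have hTU : T ≠ {u, v} := by
          rintro rfl
          simp only [Finset.mem_insert, Finset.mem_singleton] at hzT
          rcases hzT with h | h
          exacts [h1' h, h2' h]
        have hTW : T ≠ {w} := by
          rintro rfl; exact h3' (Finset.mem_singleton.mp hzT)
        have hTF : T ≠ F := by
          rintro rfl; exact h4' (hFsub z hzT)
        exact homog_adj_iff (homog_symm (homT T hT hTU hTF hTW)) hzT hfmemZ hzT humem
      rcases hclass f with rfl | rfl | rfl | hfR | hfO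
      · exact hfu rfl
      · exact hfv rfl
      · exact hfw rfl
      · have hfw' : σ f ≠ σ w := fun h => hfw (σ.injective h)
        rcases hfw'.lt_or_gt with hσ | hσ
        · have hmod : IsModule G {u, f} := by
            intro z hz
            simp only [Set.mem_insert_iff, Set.mem_singleton_iff, not_or] at hz
            rcases hclass z with rfl | rfl | rfl | hz' | hz'
            · exact absurd rfl hz.1
            · exact mod_pair_case (Or.inr ⟨fun h => hnadj_uv h.symm, fun h => hR_nadj_v f hfR h.symm⟩)
            · exact mod_pair_case (Or.inl ⟨hadj_wu, (hadj_wR f hfR).mpr hσ⟩)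
            · have hne := hR_ne z hz'
              by_cases hadj : G.Adj z u
              · exact mod_pair_case (Or.inl ⟨hadj, (hstar z hne.1 hne.2.1 hne.2.2 hz.2).mpr hadj⟩)
              · exact mod_pair_case (Or.inr ⟨hadj, fun h => hadj ((hstar z hne.1 hne.2.1 hne.2.2 hz.2).mp h)⟩)
            · have hne := hO_ne z hz'
              by_cases hadj : G.Adj z u
              · exact mod_pair_case (Or.inl ⟨hadj, (hstar z hne.1 hne.2.1 hne.2.2.1 hz.2).mpr hadj⟩)
              · exact mod_pair_case (Or.inr ⟨hadj, fun h => hadj ((hstar z hne.1 hne.2.1 hne.2.2.1 hz.2).mp h)⟩)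
          exact module_contra hprime hmod (a := u) (b := f) (c := v)
            (Set.mem_insert u _) (by simp) (fun h => hfu h.symm)
            (by
              simp only [Set.mem_insert_iff, Set.mem_singleton_iff, not_or]
              exact ⟨fun h => huv h.symm, fun h => hfv h.symm⟩)
        · have hmod : IsModule G {v, f} := by
            intro z hz
            simp only [Set.mem_insert_iff, Set.mem_singleton_iff, not_or] at hz
            rcases hclass z with rfl | rfl | rfl | hz' | hz'
            · exact mod_pair_case (Or.inr ⟨hnadj_uv, fun h => hR_nadj_u f hfR h.symm⟩)
            · exact absurd rfl hz.1
            · exact mod_pair_case (Or.inr ⟨hnadj_wv, fun h => absurd ((hadj_wR f hfR).mp h) (not_lt.2 hσ.le)⟩)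
            · have hne := hR_ne z hz'
              by_cases hadj : G.Adj z u
              · exact mod_pair_case (Or.inl ⟨(hL1 z hne.1 hne.2.1 hne.2.2).mp hadj, (hstar z hne.1 hne.2.1 hne.2.2 hz.2).mpr hadj⟩)
              · exact mod_pair_case (Or.inr ⟨fun h => hadj ((hL1 z hne.1 hne.2.1 hne.2.2).mpr h), fun h => hadj ((hstar z hne.1 hne.2.1 hne.2.2 hz.2).mp h)⟩)
            · have hne := hO_ne z hz'
              by_cases hadj : G.Adj z u
              · exact mod_pair_case (Or.inl ⟨(hL1 z hne.1 hne.2.1 hne.2.2.1).mp hadj, (hstar z hne.1 hne.2.1 hne.2.2.1 hz.2).mpr hadj⟩)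
              · exact mod_pair_case (Or.inr ⟨fun h => hadj ((hL1 z hne.1 hne.2.1 hne.2.2.1).mpr h), fun h => hadj ((hstar z hne.1 hne.2.1 hne.2.2.1 hz.2).mp h)⟩)
          exact module_contra hprime hmod (a := v) (b := f) (c := u)
            (Set.mem_insert v _) (by simp) (fun h => hfv h.symm)
            (by
              simp only [Set.mem_insert_iff, Set.mem_singleton_iff, not_or]
              exact ⟨huv, fun h => hfu h.symm⟩)
      · by_cases hef : G.Adj f u
        · have hx0f : x0 ≠ f := fun h => (hO_ne f hfO).2.2.2 (h ▸ hx0R)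
          have h1' := hstar x0 (hR_ne x0 hx0R).1 (hR_ne x0 hx0R).2.1 (hR_ne x0 hx0R).2.2 hx0f
          have h2' : G.Adj f x0 := (hepsR f hfO x0 hx0R).mpr hef
          exact hR_nadj_u x0 hx0R (h1'.mp h2'.symm)
        · by_cases hft : inT f
          · have hadjwf : G.Adj w f := ((hadj_w_T f hfO hft).mpr hef).symm
            have hmod : IsModule G {u, f} := by
              intro z hz
              simp only [Set.mem_insert_iff, Set.mem_singleton_iff, not_or] at hz
              rcases hclass z with rfl | rfl | rfl | hz' | hz'
              · exact absurd rfl hz.1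
              · exact mod_pair_case (Or.inr ⟨fun h => hnadj_uv h.symm, fun h => hef ((hepsv f hfO).mp h.symm)⟩)
              · exact mod_pair_case (Or.inl ⟨hadj_wu, hadjwf⟩)
              · have hne := hR_ne z hz'
                by_cases hadj : G.Adj z u
                · exact mod_pair_case (Or.inl ⟨hadj, (hstar z hne.1 hne.2.1 hne.2.2 hz.2).mpr hadj⟩)
                · exact mod_pair_case (Or.inr ⟨hadj, fun h => hadj ((hstar z hne.1 hne.2.1 hne.2.2 hz.2).mp h)⟩)
              · have hne := hO_ne z hz'
                by_cases hadj : G.Adj z u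
                · exact mod_pair_case (Or.inl ⟨hadj, (hstar z hne.1 hne.2.1 hne.2.2.1 hz.2).mpr hadj⟩)
                · exact mod_pair_case (Or.inr ⟨hadj, fun h => hadj ((hstar z hne.1 hne.2.1 hne.2.2.1 hz.2).mp h)⟩)
            exact module_contra hprime hmod (a := u) (b := f) (c := v)
              (Set.mem_insert u _) (by simp) (fun h => hfu h.symm)
              (by
                simp only [Set.mem_insert_iff, Set.mem_singleton_iff, not_or]
                exact ⟨fun h => huv h.symm, fun h => hfv h.symm⟩)
          · have hnadjwf : ¬ G.Adj w f := fun h => hef ((hadj_w_nT f hfO hft).mp h.symm)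
            have hmod : IsModule G {v, f} := by
              intro z hz
              simp only [Set.mem_insert_iff, Set.mem_singleton_iff, not_or] at hz
              rcases hclass z with rfl | rfl | rfl | hz' | hz'
              · exact mod_pair_case (Or.inr ⟨hnadj_uv, fun h => hef h.symm⟩)
              · exact absurd rfl hz.1
              · exact mod_pair_case (Or.inr ⟨hnadj_wv, hnadjwf⟩)
              · have hne := hR_ne z hz'
                by_cases hadj : G.Adj z u
                · exact mod_pair_case (Or.inl ⟨(hL1 z hne.1 hne.2.1 hne.2.2).mp hadj, (hstar z hne.1 hne.2.1 hne.2.2 hz.2).mpr hadj⟩)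
                · exact mod_pair_case (Or.inr ⟨fun h => hadj ((hL1 z hne.1 hne.2.1 hne.2.2).mpr h), fun h => hadj ((hstar z hne.1 hne.2.1 hne.2.2 hz.2).mp h)⟩)
              · have hne := hO_ne z hz'
                by_cases hadj : G.Adj z u
                · exact mod_pair_case (Or.inl ⟨(hL1 z hne.1 hne.2.1 hne.2.2.1).mp hadj, (hstar z hne.1 hne.2.1 hne.2.2.1 hz.2).mpr hadj⟩)
                · exact mod_pair_case (Or.inr ⟨fun h => hadj ((hL1 z hne.1 hne.2.1 hne.2.2.1).mpr h), fun h => hadj ((hstar z hne.1 hne.2.1 hne.2.2.1 hz.2).mp h)⟩)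
            exact module_contra hprime hmod (a := v) (b := f) (c := u)
              (Set.mem_insert v _) (by simp) (fun h => hfv h.symm)
              (by
                simp only [Set.mem_insert_iff, Set.mem_singleton_iff, not_or]
                exact ⟨huv, fun h => hfu h.symm⟩)
    -- contraB : merging {w} with F is impossible
    have contraB : ∀ F ∈ (C.parts (i + 1)).parts, F ≠ {u, v} → F ≠ {w} →
        (C.parts i).parts =
          insert ({w} ∪ F) (((C.parts (i + 1)).parts.erase {w}).erase F) → False := by
      intro F hF hFU hFW hEq'
      have hZ : ({w} : Finset V) ∪ F ∈ (C.parts i).parts := by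
        rw [hEq']; exact Finset.mem_insert_self _ _
      have hkeep' : ∀ T ∈ (C.parts (i + 1)).parts, T ≠ {w} → T ≠ F →
          T ∈ (C.parts i).parts := by
        intro T hT ha hb
        rw [hEq']
        exact Finset.mem_insert_of_mem (Finset.mem_erase.mpr ⟨hb, Finset.mem_erase.mpr ⟨ha, hT⟩⟩)
      have hUi : ({u, v} : Finset V) ∈ (C.parts i).parts := hkeep' _ hU' hUW (Ne.symm hFU)
      have hdisjF : ∀ z ∈ F, z ≠ u ∧ z ≠ v ∧ z ≠ w := by
        intro z hz
        refine ⟨?_, ?_, ?_⟩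
        · rintro rfl; exact hFU ((C.parts (i + 1)).eq_of_mem_parts hF hU' hz hmemu)
        · rintro rfl; exact hFU ((C.parts (i + 1)).eq_of_mem_parts hF hU' hz hmemv)
        · rintro rfl; exact hFW ((C.parts (i + 1)).eq_of_mem_parts hF hW' hz hmemw)
      have hwmemZ : w ∈ ({w} : Finset V) ∪ F := Finset.mem_union_left _ hmemw
      have hZU : ({w} : Finset V) ∪ F ≠ {u, v} := by
        intro h
        have := hwmemZ
        rw [h] at this
        simp only [Finset.mem_insert, Finset.mem_singleton] at this
        rcases this with h' | h'
        exacts [hwu h', hwv h']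
      have hnonhomZU : ¬ Homogeneous G ({w} ∪ F) {u, v} :=
        not_homog_of hwmemZ hmemu hwmemZ hmemv hadj_wu hnadj_wv
      have hfinZ : {Y' | Y' ∈ (C.parts i).parts ∧ Y' ≠ ({w} : Finset V) ∪ F ∧
          ¬ Homogeneous G ({w} ∪ F) Y'}.Finite :=
        Set.Finite.subset ((C.parts i).parts.finite_toSet) fun Y' hY' => hY'.1
      have h23 : ∀ T ∈ (C.parts i).parts, T ≠ ({w} : Finset V) ∪ F →
          ¬ Homogeneous G ({w} ∪ F) T → T = {u, v} := by
        intro T hT ha hb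
        exact eq_of_ncard_le_one hfinZ (hredQ _ hZ) ⟨hT, ha, hb⟩ ⟨hUi, hZU.symm, hnonhomZU⟩
      have homT : ∀ T ∈ (C.parts (i + 1)).parts, T ≠ {u, v} → T ≠ F → T ≠ {w} →
          Homogeneous G ({w} ∪ F) T := by
        intro T hT ha hb hc
        by_contra hnh
        have hTi : T ∈ (C.parts i).parts := hkeep' T hT hc hb
        have hTZ : T ≠ ({w} : Finset V) ∪ F := by
          intro h
          have : w ∈ T := h ▸ hwmemZ
          exact hc ((C.parts (i + 1)).eq_of_mem_parts hT hW' this hmemw)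
        exact ha (h23 T hTi hTZ hnh)
      have hFmod : IsModule G (↑F : Set V) := by
        intro z hz
        rw [Finset.mem_coe] at hz
        obtain ⟨T, hT, hzT⟩ := (C.parts (i + 1)).exists_mem (Finset.mem_univ z)
        have hTF : T ≠ F := fun h => hz (h ▸ hzT)
        by_cases hTU : T = {u, v}
        · subst hTU
          rcases uniform_of_homog (facts F hF hFU hFW).1 hzT with h | h
          · exact Or.inl fun m hm => h m (Finset.mem_coe.mp hm)
          · exact Or.inr fun m hm => h m (Finset.mem_coe.mp hm)
        · by_cases hTW : T = {w}
          · subst hTW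
            rcases uniform_of_homog (facts F hF hFU hFW).2 hzT with h | h
            · exact Or.inl fun m hm => h m (Finset.mem_coe.mp hm)
            · exact Or.inr fun m hm => h m (Finset.mem_coe.mp hm)
          · have hom := homT T hT hTU hTF hTW
            rcases uniform_of_homog (homog_symm hom) hzT with h | h
            · exact Or.inl fun m hm =>
                h m (Finset.mem_union_right _ (Finset.mem_coe.mp hm))
            · exact Or.inr fun m hm =>
                h m (Finset.mem_union_right _ (Finset.mem_coe.mp hm))
      obtain ⟨f, hfF⟩ := (C.parts (i + 1)).nonempty_of_mem_parts hF
      have hFsub : ∀ g ∈ F, g = f := by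
        rcases hprime _ hFmod with hsub | huniv
        · intro g hg; exact hsub (Finset.mem_coe.mpr hg) (Finset.mem_coe.mpr hfF)
        · exfalso
          have : u ∈ F := Finset.mem_coe.mp (huniv ▸ Set.mem_univ u)
          exact (hdisjF u this).1 rfl
      obtain ⟨hfu, hfv, hfw⟩ := hdisjF f hfF
      have hfmemZ : f ∈ ({w} : Finset V) ∪ F := Finset.mem_union_right _ hfF
      have hstar2 : ∀ z, z ≠ u → z ≠ v → z ≠ w → z ≠ f → (G.Adj z f ↔ G.Adj z w) := by
        intro z h1' h2' h3' h4'
        obtain ⟨T, hT, hzT⟩ := (C.parts (i + 1)).exists_mem (Finset.mem_univ z)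
        have hTU : T ≠ {u, v} := by
          rintro rfl
          simp only [Finset.mem_insert, Finset.mem_singleton] at hzT
          rcases hzT with h | h
          exacts [h1' h, h2' h]
        have hTW : T ≠ {w} := by
          rintro rfl; exact h3' (Finset.mem_singleton.mp hzT)
        have hTF : T ≠ F := by
          rintro rfl; exact h4' (hFsub z hzT)
        exact homog_adj_iff (homog_symm (homT T hT hTU hTF hTW)) hzT hfmemZ hzT
          (Finset.mem_union_left _ hmemw)
      rcases hclass f with rfl | rfl | rfl | hfR | hfO
      · exact hfu rfl
      · exact hfv rfl
      · exact hfw rfl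
      · -- f ∈ R : use y0
        have hy0ne := hO_ne y0 hy0O
        have hy0f : y0 ≠ f := fun h => hy0ne.2.2.2 (h ▸ hfR)
        have ha := hstar2 y0 hy0ne.1 hy0ne.2.1 hy0ne.2.2.1 hy0f
        have hb := hepsR y0 hy0O f hfR
        have hc := hadj_w_T y0 hy0O hy0T
        by_cases hadj : G.Adj y0 u
        · exact (hc.mp (ha.mp (hb.mpr hadj))) hadj
        · exact hadj (hb.mp (ha.mpr (hc.mpr hadj)))
      · -- f ∈ O : use xL and xR
        have hxLne := hR_ne xL hxLR
        have hxLf : xL ≠ f := fun h => (hO_ne f hfO).2.2.2 (h ▸ hxLR)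
        have hxRne := hR_ne xR hxRR
        have hxRf : xR ≠ f := fun h => (hO_ne f hfO).2.2.2 (h ▸ hxRR)
        have hadjxLw : G.Adj xL w := ((hadj_wR xL hxLR).mpr hxLs).symm
        have hef : G.Adj f u :=
          (hepsR f hfO xL hxLR).mp
            (((hstar2 xL hxLne.1 hxLne.2.1 hxLne.2.2 hxLf).mpr hadjxLw).symm)
        have hnadjxRw : ¬ G.Adj xR w :=
          fun h => absurd ((hadj_wR xR hxRR).mp h.symm) (not_lt.2 hxRs.le)
        exact hnadjxRw
          ((hstar2 xR hxRne.1 hxRne.2.1 hxRne.2.2 hxRf).mp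
            ((hepsR f hfO xR hxRR).mpr hef).symm)
    -- contraC : merging {u,v} with {w} is impossible
    have contraC :
        (C.parts i).parts =
          insert (({u, v} : Finset V) ∪ {w})
            (((C.parts (i + 1)).parts.erase {u, v}).erase {w}) → False := by
      intro hEq'
      have hZ : ({u, v} : Finset V) ∪ {w} ∈ (C.parts i).parts := by
        rw [hEq']; exact Finset.mem_insert_self _ _
      have hkeep' : ∀ T ∈ (C.parts (i + 1)).parts, T ≠ {u, v} → T ≠ {w} →
          T ∈ (C.parts i).parts := by
        intro T hT ha hb
        rw [hEq']
        exact Finset.mem_insert_of_mem (Finset.mem_erase.mpr ⟨hb, Finset.mem_erase.mpr ⟨ha, hT⟩⟩)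
      have humemZ : u ∈ ({u, v} : Finset V) ∪ {w} := Finset.mem_union_left _ hmemu
      have hwmemZ : w ∈ ({u, v} : Finset V) ∪ {w} := Finset.mem_union_right _ hmemw
      obtain ⟨TL, hTL, hxLT⟩ := (C.parts (i + 1)).exists_mem (Finset.mem_univ xL)
      obtain ⟨TY, hTY, hy0T'⟩ := (C.parts (i + 1)).exists_mem (Finset.mem_univ y0)
      have hxLne := hR_ne xL hxLR
      have hy0ne := hO_ne y0 hy0O
      have hTLU : TL ≠ {u, v} := by
        rintro rfl
        simp only [Finset.mem_insert, Finset.mem_singleton] at hxLT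
        rcases hxLT with h | h
        exacts [hxLne.1 h, hxLne.2.1 h]
      have hTLW : TL ≠ {w} := by
        rintro rfl; exact hxLne.2.2 (Finset.mem_singleton.mp hxLT)
      have hTYU : TY ≠ {u, v} := by
        rintro rfl
        simp only [Finset.mem_insert, Finset.mem_singleton] at hy0T'
        rcases hy0T' with h | h
        exacts [hy0ne.1 h, hy0ne.2.1 h]
      have hTYW : TY ≠ {w} := by
        rintro rfl; exact hy0ne.2.2.1 (Finset.mem_singleton.mp hy0T')
      have hTLi : TL ∈ (C.parts i).parts := hkeep' TL hTL hTLU hTLW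
      have hTYi : TY ∈ (C.parts i).parts := hkeep' TY hTY hTYU hTYW
      have hTLZ : TL ≠ ({u, v} : Finset V) ∪ {w} := by
        intro h
        have : u ∈ TL := h ▸ humemZ
        exact hTLU ((C.parts (i + 1)).eq_of_mem_parts hTL hU' this hmemu)
      have hTYZ : TY ≠ ({u, v} : Finset V) ∪ {w} := by
        intro h
        have : u ∈ TY := h ▸ humemZ
        exact hTYU ((C.parts (i + 1)).eq_of_mem_parts hTY hU' this hmemu)
      have hnhL : ¬ Homogeneous G (({u, v} : Finset V) ∪ {w}) TL :=
        not_homog_of hwmemZ hxLT humemZ hxLT ((hadj_wR xL hxLR).mpr hxLs)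
          (fun h => hR_nadj_u xL hxLR h.symm)
      have hnhY : ¬ Homogeneous G (({u, v} : Finset V) ∪ {w}) TY := by
        by_cases hadj : G.Adj y0 u
        · exact not_homog_of humemZ hy0T' hwmemZ hy0T' hadj.symm
            (fun h => ((hadj_w_T y0 hy0O hy0T).mp h.symm) hadj)
        · exact not_homog_of hwmemZ hy0T' humemZ hy0T'
            ((hadj_w_T y0 hy0O hy0T).mpr hadj).symm (fun h => hadj h.symm)
      have hfinZ : {Y' | Y' ∈ (C.parts i).parts ∧ Y' ≠ ({u, v} : Finset V) ∪ {w} ∧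
          ¬ Homogeneous G (({u, v} : Finset V) ∪ {w}) Y'}.Finite :=
        Set.Finite.subset ((C.parts i).parts.finite_toSet) fun Y' hY' => hY'.1
      have hTLTY : TL = TY :=
        eq_of_ncard_le_one hfinZ (hredQ _ hZ) ⟨hTLi, hTLZ, hnhL⟩ ⟨hTYi, hTYZ, hnhY⟩
      have hfinF : {Y' | Y' ∈ (C.parts i).parts ∧ Y' ≠ TL ∧ ¬ Homogeneous G TL Y'}.Finite :=
        Set.Finite.subset ((C.parts i).parts.finite_toSet) fun Y' hY' => hY'.1
      have homF0 : ∀ T ∈ (C.parts i).parts, T ≠ TL → T ≠ ({u, v} : Finset V) ∪ {w} →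
          Homogeneous G TL T := by
        intro T hT ha hb
        by_contra hnh
        exact hb (eq_of_ncard_le_one hfinF (hredQ _ hTLi) ⟨hT, ha, hnh⟩
          ⟨hZ, Ne.symm hTLZ, fun h => hnhL (homog_symm h)⟩)
      have hF0mod : IsModule G (↑TL : Set V) := by
        intro z hz
        rw [Finset.mem_coe] at hz
        obtain ⟨T, hT, hzT⟩ := (C.parts (i + 1)).exists_mem (Finset.mem_univ z)
        have hTF : T ≠ TL := fun h => hz (h ▸ hzT)
        by_cases hTU : T = {u, v}
        · subst hTU
          rcases uniform_of_homog (facts TL hTL hTLU hTLW).1 hzT with h | h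
          · exact Or.inl fun m hm => h m (Finset.mem_coe.mp hm)
          · exact Or.inr fun m hm => h m (Finset.mem_coe.mp hm)
        · by_cases hTW : T = {w}
          · subst hTW
            rcases uniform_of_homog (facts TL hTL hTLU hTLW).2 hzT with h | h
            · exact Or.inl fun m hm => h m (Finset.mem_coe.mp hm)
            · exact Or.inr fun m hm => h m (Finset.mem_coe.mp hm)
          · have hTi : T ∈ (C.parts i).parts := hkeep' T hT hTU hTW
            have hTZ : T ≠ ({u, v} : Finset V) ∪ {w} := by
              intro h
              have : u ∈ T := h ▸ humemZ
              exact hTU ((C.parts (i + 1)).eq_of_mem_parts hT hU' this hmemu)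
            have hom := homF0 T hTi hTF hTZ
            rcases uniform_of_homog (homog_symm hom) hzT with h | h
            · exact Or.inl fun m hm => h m (Finset.mem_coe.mp hm)
            · exact Or.inr fun m hm => h m (Finset.mem_coe.mp hm)
      have hxLy0 : xL ≠ y0 := fun h => hy0ne.2.2.2 (h ▸ hxLR)
      have huTL : u ∉ (↑TL : Set V) := by
        intro h
        exact hTLU ((C.parts (i + 1)).eq_of_mem_parts hTL hU' (Finset.mem_coe.mp h) hmemu)
      exact module_contra hprime hF0mod (a := xL) (b := y0) (c := u)
        (Finset.mem_coe.mpr hxLT) (Finset.mem_coe.mpr (hTLTY ▸ hy0T')) hxLy0 huTL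
    -- case analysis on the merged pair
    have hkeep : ∀ T ∈ (C.parts (i + 1)).parts, T ≠ X → T ≠ Y → T ∈ (C.parts i).parts := by
      intro T hT ha hb
      rw [hEq]
      exact Finset.mem_insert_of_mem (Finset.mem_erase.mpr ⟨hb, Finset.mem_erase.mpr ⟨ha, hT⟩⟩)
    by_cases hXU : X = {u, v}
    · subst hXU
      by_cases hYW : Y = {w}
      · subst hYW
        exact (contraC hEq).elim
      · exact (contraA Y hY (Ne.symm hXY) hYW hEq).elim
    · by_cases hYU : Y = {u, v}
      · subst hYU
        rw [Finset.union_comm, Finset.erase_right_comm] at hEq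
        by_cases hXW : X = {w}
        · subst hXW
          exact (contraC hEq).elim
        · exact (contraA X hX hXU hXW hEq).elim
      · by_cases hXW : X = {w}
        · subst hXW
          exact (contraB Y hY hYU (Ne.symm hXY) hEq).elim
        · by_cases hYW : Y = {w}
          · subst hYW
            rw [Finset.union_comm, Finset.erase_right_comm] at hEq
            exact (contraB X hX hXU hXW hEq).elim
          · exact ⟨hkeep _ hU' (fun h => hXU h.symm) (fun h => hYU h.symm),
              hkeep _ hW' (fun h => hXW h.symm) (fun h => hYW h.symm)⟩
  -- downward induction
  have key : ∀ d i, i + d = Fintype.card V - 1 → 1 ≤ i →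
      ({u, v} : Finset V) ∈ (C.parts i).parts ∧ ({w} : Finset V) ∈ (C.parts i).parts := by
    intro d
    induction d with
    | zero =>
      intro i hi _
      have hieq : i = Fintype.card V - 1 := by omega
      subst hieq
      exact ⟨hU, hW⟩
    | succ d ih =>
      intro i hi h1
      have h2 := ih (i + 1) (by omega) (by omega)
      exact mergeContra i h1 (by omega) h2.1 h2.2
  obtain ⟨hU1, hW1⟩ := key (Fintype.card V - 2) 1 (by omega) le_rfl
  have hcard1 : (C.parts 1).parts.card = 1 := C.parts_card 1 le_rfl (by omega)
  exact hUW (Finset.card_le_one.mp (le_of_eq hcard1) _ hU1 _ hW1)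

end Stmt4Aux
end Core

section Wrap
open Finset
namespace Stmt4Aux

variable {V : Type*} [Fintype V] [DecidableEq V]

lemma compl_adj_iff {G : SimpleGraph V} {a b : V} (hne : a ≠ b) :
    Gᶜ.Adj a b ↔ ¬ G.Adj a b := by
  rw [SimpleGraph.compl_adj]
  simp [hne]

lemma core_sbw {G : SimpleGraph V} {σ τ : V ≃ Fin (Fintype.card V)}
    (hreal : IsRealiser G σ τ) (hprime : IsPrimeGraph G) {u v w x0 : V}
    (hsv : σ u < σ v) (htv : τ u < τ v)
    (hbw : StrictlyBetween σ u w v)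
    (hsplit : ¬ (G.Adj w u ↔ G.Adj w v))
    (hL1 : ∀ x, x ≠ u → x ≠ v → x ≠ w → (G.Adj x u ↔ G.Adj x v))
    (hx0σ : StrictlyBetween σ u x0 v) (hx0τ : StrictlyBetween τ u x0 v)
    (C : ContractionSeq V) (hC : IsDSeq G C 1)
    (hU : ({u, v} : Finset V) ∈ (C.parts (Fintype.card V - 1)).parts)
    (hW : ({w} : Finset V) ∈ (C.parts (Fintype.card V - 1)).parts) : False := by
  have hwu : w ≠ u := by
    rintro rfl
    rcases hbw with ⟨h, _⟩ | ⟨_, h⟩ <;> exact lt_irrefl _ h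
  have hwv : w ≠ v := by
    rintro rfl
    rcases hbw with ⟨_, h⟩ | ⟨h, _⟩ <;> exact lt_irrefl _ h
  have hws : σ u < σ w ∧ σ w < σ v := by
    rcases hbw with h | ⟨h1, h2⟩
    · exact h
    · exact absurd (h1.trans h2) (not_lt.2 hsv.le)
  have hx0s : σ u < σ x0 ∧ σ x0 < σ v := by
    rcases hx0σ with h | ⟨h1, h2⟩
    · exact h
    · exact absurd (h1.trans h2) (not_lt.2 hsv.le)
  have hx0t : τ u < τ x0 ∧ τ x0 < τ v := by
    rcases hx0τ with h | ⟨h1, h2⟩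
    · exact h
    · exact absurd (h1.trans h2) (not_lt.2 htv.le)
  have hτw : ¬ StrictlyBetween τ u w v := fun h => splitter_not_both hreal hsplit hbw h
  rcases notSB_cases (fun h => hwu (τ.injective h)) (fun h => hwv (τ.injective h)) hτw with
    ⟨h1, _⟩ | ⟨_, h2⟩
  · exact core0 hreal hprime hsv htv hws.1 hws.2 h1 hL1 hx0s.1 hx0s.2 hx0t.1 hx0t.2 C hC hU hW
  · -- reverse both orders and swap u, v
    have hreal' := realiser_revrev hreal
    have hrev : ∀ (ρ : V ≃ Fin (Fintype.card V)) (a b : V),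
        (ρ.trans Fin.revPerm) a < (ρ.trans Fin.revPerm) b ↔ ρ b < ρ a := by
      intro ρ a b; simp [Fin.rev_lt_rev]
    have hU' : ({v, u} : Finset V) ∈ (C.parts (Fintype.card V - 1)).parts := by
      rwa [Finset.pair_comm]
  
    exact core0 hreal' hprime ((hrev σ v u).mpr hsv) ((hrev τ v u).mpr htv)
      ((hrev σ v w).mpr hws.2) ((hrev σ w u).mpr hws.1) ((hrev τ w v).mpr h2)
      (fun x hxv hxu hxw => (hL1 x hxu hxv hxw).symm)
      ((hrev σ v x0).mpr hx0s.2) ((hrev σ x0 u).mpr hx0s.1)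
      ((hrev τ v x0).mpr hx0t.2) ((hrev τ x0 u).mpr hx0t.1)
      C hC hU' hW

lemma core_canon {G : SimpleGraph V} {σ τ : V ≃ Fin (Fintype.card V)}
    (hreal : IsRealiser G σ τ) (hprime : IsPrimeGraph G) {u v w x0 : V}
    (hsv : σ u < σ v) (htv : τ u < τ v)
    (hwu : w ≠ u) (hwv : w ≠ v)
    (hsplit : ¬ (G.Adj w u ↔ G.Adj w v))
    (hL1 : ∀ x, x ≠ u → x ≠ v → x ≠ w → (G.Adj x u ↔ G.Adj x v))
    (hx0σ : StrictlyBetween σ u x0 v) (hx0τ : StrictlyBetween τ u x0 v)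
    (C : ContractionSeq V) (hC : IsDSeq G C 1)
    (hU : ({u, v} : Finset V) ∈ (C.parts (Fintype.card V - 1)).parts)
    (hW : ({w} : Finset V) ∈ (C.parts (Fintype.card V - 1)).parts) : False := by
  rcases splitter_some hreal hsplit hwu hwv with hb | hb
  · exact core_sbw hreal hprime hsv htv hb hsplit hL1 hx0σ hx0τ C hC hU hW
  · exact core_sbw (realiser_swap hreal) hprime htv hsv hb hsplit hL1 hx0τ hx0σ C hC hU hW

lemma core_uv {G : SimpleGraph V} {σ τ : V ≃ Fin (Fintype.card V)}
    (hreal : IsRealiser G σ τ) (hprime : IsPrimeGraph G) {u v w x0 : V}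
    (hsv : σ u < σ v) (huv : u ≠ v)
    (hwu : w ≠ u) (hwv : w ≠ v)
    (hsplit : ¬ (G.Adj w u ↔ G.Adj w v))
    (hL1 : ∀ x, x ≠ u → x ≠ v → x ≠ w → (G.Adj x u ↔ G.Adj x v))
    (hx0σ : StrictlyBetween σ u x0 v) (hx0τ : StrictlyBetween τ u x0 v)
    (C : ContractionSeq V) (hC : IsDSeq G C 1)
    (hU : ({u, v} : Finset V) ∈ (C.parts (Fintype.card V - 1)).parts)
    (hW : ({w} : Finset V) ∈ (C.parts (Fintype.card V - 1)).parts) : False := by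
  have hτ : τ u ≠ τ v := fun h => huv (τ.injective h)
  rcases hτ.lt_or_gt with htv | htv
  · exact core_canon hreal hprime hsv htv hwu hwv hsplit hL1 hx0σ hx0τ C hC hU hW
  · -- complement and reverse τ
    have hreal' := realiser_compl hreal
    have hprime' := prime_compl hprime
    have hC' := dseq_compl hC
    have htv' : (τ.trans Fin.revPerm) u < (τ.trans Fin.revPerm) v := by
      simp only [Equiv.trans_apply, Fin.revPerm_apply, Fin.rev_lt_rev]
      exact htv
    have hsplit' : ¬ (Gᶜ.Adj w u ↔ Gᶜ.Adj w v) := by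
      rw [compl_adj_iff hwu, compl_adj_iff hwv]
      tauto
    have hL1' : ∀ x, x ≠ u → x ≠ v → x ≠ w → (Gᶜ.Adj x u ↔ Gᶜ.Adj x v) := by
      intro x h1 h2 h3
      rw [compl_adj_iff h1, compl_adj_iff h2]
      have := hL1 x h1 h2 h3
      tauto
    exact core_canon hreal' hprime' hsv htv' hwu hwv hsplit' hL1' hx0σ (SB_rev.mpr hx0τ)
      C hC' hU hW

lemma core1 {G : SimpleGraph V} {σ τ : V ≃ Fin (Fintype.card V)}
    (hreal : IsRealiser G σ τ) (hprime : IsPrimeGraph G) {u v w x0 : V}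
    (huv : u ≠ v) (hwu : w ≠ u) (hwv : w ≠ v)
    (hsplit : ¬ (G.Adj w u ↔ G.Adj w v))
    (hL1 : ∀ x, x ≠ u → x ≠ v → x ≠ w → (G.Adj x u ↔ G.Adj x v))
    (hx0σ : StrictlyBetween σ u x0 v) (hx0τ : StrictlyBetween τ u x0 v)
    (C : ContractionSeq V) (hC : IsDSeq G C 1)
    (hU : ({u, v} : Finset V) ∈ (C.parts (Fintype.card V - 1)).parts)
    (hW : ({w} : Finset V) ∈ (C.parts (Fintype.card V - 1)).parts) : False := by
  have hσ : σ u ≠ σ v := fun h => huv (σ.injective h)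
  rcases hσ.lt_or_gt with hsv | hsv
  · exact core_uv hreal hprime hsv huv hwu hwv hsplit hL1 hx0σ hx0τ C hC hU hW
  · have hU' : ({v, u} : Finset V) ∈ (C.parts (Fintype.card V - 1)).parts := by
      rwa [Finset.pair_comm]
    exact core_uv hreal hprime hsv huv.symm hwv hwu
      (fun h => hsplit h.symm)
      (fun x h1 h2 h3 => (hL1 x h2 h1 h3).symm)
      (SB_symm.mp hx0σ) (SB_symm.mp hx0τ) C hC hU' hW

lemma gap_two {σ : V ≃ Fin (Fintype.card V)} {u v w : V} (huv : u ≠ v)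
    (hw : StrictlyBetween σ u w v) (huniq : ∀ x, StrictlyBetween σ u x v → x = w) :
    ((σ u : ℤ) - (σ v : ℤ)).natAbs = 2 := by
  have hne : σ u ≠ σ v := fun h => huv (σ.injective h)
  rcases hne.lt_or_gt with h | h
  · exact count_one h hw huniq
  · have h2 := count_one (u := v) (v := u) h (SB_symm.mp hw)
      (fun x hx => huniq x (SB_symm.mpr hx))
    omega

lemma gap_one {σ : V ≃ Fin (Fintype.card V)} {u v : V} (huv : u ≠ v)
    (hempty : ∀ x, ¬ StrictlyBetween σ u x v) :
    ((σ u : ℤ) - (σ v : ℤ)).natAbs = 1 := by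
  have hne : σ u ≠ σ v := fun h => huv (σ.injective h)
  rcases hne.lt_or_gt with h | h
  · exact count_empty h hempty
  · have h2 := count_empty (u := v) (v := u) h (fun x hx => hempty x (SB_symm.mpr hx))
    omega

end Stmt4Aux
end Wrap


/-- In a prime graph of twin-width 1 with realiser `(σ, τ)`, the two vertices
`u, v` contracted first in any 1-contraction sequence are consecutive in one of the two
orderings and have exactly one vertex strictly between them in the other. -/
theorem stmt_4 {V : Type*} [Fintype V] [DecidableEq V] (G : SimpleGraph V)
    (hprime : IsPrimeGraph G) (htww : tww G = 1)
    (σ τ : V ≃ Fin (Fintype.card V)) (hreal : IsRealiser G σ τ)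
    (C : ContractionSeq V) (hC : IsDSeq G C 1)
    (u v : V) (huv : u ≠ v)
    (hfirst : ({u, v} : Finset V) ∈ (C.parts (Fintype.card V - 1)).parts) :
    (((σ u : ℤ) - (σ v : ℤ)).natAbs = 1 ∧ ((τ u : ℤ) - (τ v : ℤ)).natAbs = 2) ∨
    (((σ u : ℤ) - (σ v : ℤ)).natAbs = 2 ∧ ((τ u : ℤ) - (τ v : ℤ)).natAbs = 1) := by
  classical
  have h2 : 2 ≤ Fintype.card V := Fintype.one_lt_card_iff.mpr ⟨u, v, huv⟩
  have h3 : 3 ≤ Fintype.card V := by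
    by_contra hlt
    have hcard : Fintype.card V = 2 := by omega
    have hds0 : IsDSeq G C 0 := by
      intro i hi1 hi2
      intro X hX
      have hemp : {Y | Y ∈ (C.parts i).parts ∧ Y ≠ X ∧ ¬ Homogeneous G X Y} = ∅ := by
        rw [Set.eq_empty_iff_forall_notMem]
        rintro Y ⟨hY, hYX, hnh⟩
        have hi : i = 1 ∨ i = 2 := by omega
        rcases hi with rfl | rfl
        · have hcard1 := C.parts_card 1 le_rfl hi2
          obtain ⟨Z, hZ⟩ := Finset.card_eq_one.mp hcard1
          rw [hZ, Finset.mem_singleton] at hY hX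
          exact hYX (hY.trans hX.symm)
        · obtain ⟨a, ha⟩ := Finset.card_eq_one.mp (C.parts_top X (by rw [hcard]; exact hX))
          obtain ⟨b, hb⟩ := Finset.card_eq_one.mp (C.parts_top Y (by rw [hcard]; exact hY))
          rw [ha, hb] at hnh
          exact hnh Stmt4Aux.homog_singleton
      rw [hemp]
      simp
    have htle : tww G ≤ 0 := Nat.sInf_le ⟨C, hds0⟩
    rw [htww] at htle
    omega
  obtain ⟨X, hX, Y, hY, hXY, hEq⟩ := C.merge (Fintype.card V - 1) (by omega) (by omega)
  have hidx : Fintype.card V - 1 + 1 = Fintype.card V := by omega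
  rw [hidx] at hX hY
  have hsing : ∀ P ∈ (C.parts (Fintype.card V - 1)).parts, P ≠ X ∪ Y → ∃ z, P = {z} := by
    intro P hP hPXY
    rw [hEq] at hP
    rcases Finset.mem_insert.mp hP with h | h
    · exact absurd h hPXY
    · have hP' : P ∈ (C.parts (Fintype.card V - 1 + 1)).parts :=
        Finset.mem_of_mem_erase (Finset.mem_of_mem_erase h)
      rw [hidx] at hP'
      exact Finset.card_eq_one.mp (C.parts_top P hP')
  have hUVXY : ({u, v} : Finset V) = X ∪ Y := by
    by_contra h
    obtain ⟨z, hz⟩ := hsing _ hfirst h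
    have h2' : ({u, v} : Finset V).card = 2 := Finset.card_pair huv
    rw [hz] at h2'
    simp at h2'
  have hmemu : u ∈ ({u, v} : Finset V) := by simp
  have hmemv : v ∈ ({u, v} : Finset V) := by simp
  have hsplit_ex : ∃ w', w' ≠ u ∧ w' ≠ v ∧ ¬ (G.Adj w' u ↔ G.Adj w' v) := by
    by_contra hno
    push_neg at hno
    have hmod : IsModule G {u, v} := by
      intro z hz
      simp only [Set.mem_insert_iff, Set.mem_singleton_iff, not_or] at hz
      have hiff := hno z hz.1 hz.2
      by_cases ha : G.Adj z u
      · exact Stmt4Aux.mod_pair_case (Or.inl ⟨ha, hiff.mp ha⟩)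
      · exact Stmt4Aux.mod_pair_case (Or.inr ⟨ha, fun h => ha (hiff.mpr h)⟩)
    rcases hprime _ hmod with hsub | huniv
    · exact huv (hsub (Set.mem_insert u _) (by simp))
    · have hsub2 : (Finset.univ : Finset V) ⊆ {u, v} := by
        intro z _
        have hz : z ∈ ({u, v} : Set V) := huniv ▸ Set.mem_univ z
        simpa using hz
      have hle := Finset.card_le_card hsub2
      rw [Finset.card_univ] at hle
      have : ({u, v} : Finset V).card = 2 := Finset.card_pair huv
      omega
  obtain ⟨w, hwu, hwv, hsplit⟩ := hsplit_ex
  obtain ⟨Pw, hPw, hwPw⟩ := (C.parts (Fintype.card V - 1)).exists_mem (Finset.mem_univ w)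
  have hPwXY : Pw ≠ X ∪ Y := by
    intro h
    rw [← hUVXY] at h
    rw [h] at hwPw
    simp only [Finset.mem_insert, Finset.mem_singleton] at hwPw
    rcases hwPw with h' | h'
    exacts [hwu h', hwv h']
  obtain ⟨z, hz⟩ := hsing Pw hPw hPwXY
  rw [hz, Finset.mem_singleton] at hwPw
  rw [← hwPw] at hz
  have hW : ({w} : Finset V) ∈ (C.parts (Fintype.card V - 1)).parts := hz ▸ hPw
  have nonhom_split : ∀ x, ¬ (G.Adj x u ↔ G.Adj x v) → ¬ Homogeneous G {u, v} {x} := by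
    intro x hx
    by_cases ha : G.Adj x u
    · have hb : ¬ G.Adj x v := fun h => hx (iff_of_true ha h)
      exact Stmt4Aux.not_homog_of hmemu (Finset.mem_singleton_self x)
        hmemv (Finset.mem_singleton_self x) ha.symm (fun h => hb h.symm)
    · have hb : G.Adj x v := by
        by_contra hb
        exact hx (iff_of_false ha hb)
      exact Stmt4Aux.not_homog_of hmemv (Finset.mem_singleton_self x)
        hmemu (Finset.mem_singleton_self x) hb.symm (fun h => ha h.symm)
  have hL1 : ∀ x, x ≠ u → x ≠ v → x ≠ w → (G.Adj x u ↔ G.Adj x v) := by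
    intro x h1 h2' h3'
    by_contra hx
    obtain ⟨Px, hPx, hxPx⟩ := (C.parts (Fintype.card V - 1)).exists_mem (Finset.mem_univ x)
    have hPxXY : Px ≠ X ∪ Y := by
      intro h
      rw [← hUVXY] at h
      rw [h] at hxPx
      simp only [Finset.mem_insert, Finset.mem_singleton] at hxPx
      rcases hxPx with h' | h'
      exacts [h1 h', h2' h']
    obtain ⟨z', hz'⟩ := hsing Px hPx hPxXY
    rw [hz', Finset.mem_singleton] at hxPx
    rw [← hxPx] at hz'
    have hxmem : ({x} : Finset V) ∈ (C.parts (Fintype.card V - 1)).parts := hz' ▸ hPx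
    have hred := hC (Fintype.card V - 1) (by omega) (by omega)
    have hfin : {Y' | Y' ∈ (C.parts (Fintype.card V - 1)).parts ∧ Y' ≠ ({u, v} : Finset V) ∧
        ¬ Homogeneous G {u, v} Y'}.Finite :=
      Set.Finite.subset ((C.parts _).parts.finite_toSet) fun Y' hY' => hY'.1
    have hxne : ({x} : Finset V) ≠ {u, v} := by
      intro h
      have hu' : u ∈ ({x} : Finset V) := h ▸ hmemu
      rw [Finset.mem_singleton] at hu'
      exact h1 hu'.symm
    have hwne : ({w} : Finset V) ≠ {u, v} := by
      intro h
      have hu' : u ∈ ({w} : Finset V) := h ▸ hmemu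
      rw [Finset.mem_singleton] at hu'
      exact hwu hu'.symm
    have heq := Stmt4Aux.eq_of_ncard_le_one hfin (hred _ hfirst)
      ⟨hxmem, hxne, nonhom_split x hx⟩ ⟨hW, hwne, nonhom_split w hsplit⟩
    rw [Finset.singleton_inj] at heq
    exact h3' heq
  by_cases hR : ∃ x, StrictlyBetween σ u x v ∧ StrictlyBetween τ u x v
  · obtain ⟨x0, hx0σ, hx0τ⟩ := hR
    exact (Stmt4Aux.core1 hreal hprime huv hwu hwv hsplit hL1 hx0σ hx0τ C hC hfirst hW).elim
  · push_neg at hR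
    have hnotboth : ¬ (StrictlyBetween σ u w v ∧ StrictlyBetween τ u w v) :=
      fun h => Stmt4Aux.splitter_not_both hreal hsplit h.1 h.2
    have hSBneσ : ∀ x, StrictlyBetween σ u x v → x ≠ u ∧ x ≠ v := by
      intro x hx
      constructor
      · rintro rfl
        rcases hx with ⟨h', _⟩ | ⟨_, h'⟩ <;> exact lt_irrefl _ h'
      · rintro rfl
        rcases hx with ⟨_, h'⟩ | ⟨h', _⟩ <;> exact lt_irrefl _ h'
    have hSBneτ : ∀ x, StrictlyBetween τ u x v → x ≠ u ∧ x ≠ v := by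
      intro x hx
      constructor
      · rintro rfl
        rcases hx with ⟨h', _⟩ | ⟨_, h'⟩ <;> exact lt_irrefl _ h'
      · rintro rfl
        rcases hx with ⟨_, h'⟩ | ⟨h', _⟩ <;> exact lt_irrefl _ h'
    rcases Stmt4Aux.splitter_some hreal hsplit hwu hwv with hb | hb
    · have huniqσ : ∀ x, StrictlyBetween σ u x v → x = w := by
        intro x hx
        by_contra hxw
        have hne := hSBneσ x hx
        have hxτ : StrictlyBetween τ u x v :=
          (Stmt4Aux.betw_iff hreal (hL1 x hne.1 hne.2 hxw) hne.1 hne.2).mp hx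
        exact hR x hx hxτ
      have hempτ : ∀ x, ¬ StrictlyBetween τ u x v := by
        intro x hx
        by_cases hxw : x = w
        · subst hxw
          exact hnotboth ⟨hb, hx⟩
        · have hne := hSBneτ x hx
          have hxσ : StrictlyBetween σ u x v :=
            (Stmt4Aux.betw_iff hreal (hL1 x hne.1 hne.2 hxw) hne.1 hne.2).mpr hx
          exact hR x hxσ hx
      exact Or.inr ⟨Stmt4Aux.gap_two huv hb huniqσ, Stmt4Aux.gap_one huv hempτ⟩
    · have huniqτ : ∀ x, StrictlyBetween τ u x v → x = w := by
        intro x hx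
        by_contra hxw
        have hne := hSBneτ x hx
        have hxσ : StrictlyBetween σ u x v :=
          (Stmt4Aux.betw_iff hreal (hL1 x hne.1 hne.2 hxw) hne.1 hne.2).mpr hx
        exact hR x hxσ hx
      have hempσ : ∀ x, ¬ StrictlyBetween σ u x v := by
        intro x hx
        by_cases hxw : x = w
        · subst hxw
          exact hnotboth ⟨hx, hb⟩
        · have hne := hSBneσ x hx
          have hxτ : StrictlyBetween τ u x v :=
            (Stmt4Aux.betw_iff hreal (hL1 x hne.1 hne.2 hxw) hne.1 hne.2).mp hx
          exact hR x hx hxτ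
      exact Or.inl ⟨Stmt4Aux.gap_one huv hempσ, Stmt4Aux.gap_two huv hb huniqτ⟩
end

section
/- If G_n, …, G_1 are the trigraphs of a 1-contraction sequence of a graph G, then for every i with 2 ≤ i ≤ n, the underlying graph of G_{i-1} is isomorphic to an induced subgraph of the underlying graph of G_i. -/
open Finset

/-- In a 1-contraction sequence `G_n, …, G_1` of `G`, the underlying graph of
`G_{i-1}` is isomorphic to an induced subgraph of the underlying graph of `G_i`, for every
`2 ≤ i ≤ n`. -/
theorem stmt_6 {V : Type*} [Fintype V] [DecidableEq V] (G : SimpleGraph V)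
    (C : ContractionSeq V) (hC : IsDSeq G C 1)
    (i : ℕ) (h2 : 2 ≤ i) (hn : i ≤ Fintype.card V) :
    Nonempty (QuotientGraph G (C.parts (i - 1)) ↪g QuotientGraph G (C.parts i)) := by
  classical
  obtain ⟨X, hX, Y, hY, hXY, hparts⟩ := C.merge (i - 1) (by omega) (by omega)
  have hi1 : i - 1 + 1 = i := by omega
  rw [hi1] at hX hY hparts
  set P := C.parts i with hP
  set Q := C.parts (i - 1) with hQ
  set S : Finset (Finset V) := (P.parts.erase X).erase Y with hSdef
  have hSsub : ∀ Z ∈ S, Z ∈ P.parts ∧ Z ≠ X ∧ Z ≠ Y := by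
    intro Z hZ
    exact ⟨Finset.mem_of_mem_erase (Finset.mem_of_mem_erase hZ),
      Finset.ne_of_mem_erase (Finset.mem_of_mem_erase hZ), Finset.ne_of_mem_erase hZ⟩
  have hne : ∀ Z ∈ P.parts, Z.Nonempty := fun Z hZ =>
    Finset.nonempty_iff_ne_empty.2 (fun h => P.ne_bot hZ (by rw [h]; rfl))
  have hUnotS : X ∪ Y ∉ S := by
    intro h
    obtain ⟨hZP, hZX, _⟩ := hSsub _ h
    have hd : Disjoint (X ∪ Y) X := P.disjoint hZP hX hZX
    obtain ⟨x, hx⟩ := hne X hX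
    exact Finset.disjoint_left.1 hd (Finset.mem_union_left _ hx) hx
  have hXYQ : X ∪ Y ∈ Q.parts := by rw [hparts]; exact Finset.mem_insert_self _ _
  set E : Finset V → Finset V → Prop := fun A B => ∃ a ∈ A, ∃ b ∈ B, G.Adj a b with hE
  have hEsymm : ∀ A B, E A B ↔ E B A := by
    intro A B
    constructor <;> rintro ⟨a, ha, b, hb, h⟩ <;> exact ⟨b, hb, a, ha, h.symm⟩
  -- bad parts are red neighbours of X ∪ Y in Q
  have hbad : ∀ Z ∈ S, ¬ (E X Z ↔ E Y Z) →
      Z ∈ {W | W ∈ Q.parts ∧ W ≠ X ∪ Y ∧ ¬ Homogeneous G (X ∪ Y) W} := by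
    intro Z hZ hiff
    obtain ⟨hZP, hZX, hZY⟩ := hSsub _ hZ
    refine ⟨by rw [hparts]; exact Finset.mem_insert_of_mem hZ,
      fun h => hUnotS (h ▸ hZ), ?_⟩
    intro hhom
    apply hiff
    obtain ⟨z, hz⟩ := hne Z hZP
    obtain ⟨x, hx⟩ := hne X hX
    obtain ⟨y, hy⟩ := hne Y hY
    rcases hhom with hall | hnone
    · exact ⟨fun _ => ⟨y, hy, z, hz, hall y (Finset.mem_union_right _ hy) z hz⟩,
        fun _ => ⟨x, hx, z, hz, hall x (Finset.mem_union_left _ hx) z hz⟩⟩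
    · constructor
      · rintro ⟨x', hx', z', hz', hadj⟩
        exact absurd hadj (hnone x' (Finset.mem_union_left _ hx') z' hz')
      · rintro ⟨y', hy', z', hz', hadj⟩
        exact absurd hadj (hnone y' (Finset.mem_union_right _ hy') z' hz')
  have hred : {W | W ∈ Q.parts ∧ W ≠ X ∪ Y ∧ ¬ Homogeneous G (X ∪ Y) W}.ncard ≤ 1 :=
    hC (i - 1) (by omega) (by omega) (X ∪ Y) hXYQ
  have key : ∃ X₀, ∃ hX₀P : X₀ ∈ P.parts, (X₀ = X ∨ X₀ = Y) ∧
      ∀ Z ∈ S, ((E X Z ∨ E Y Z) ↔ E X₀ Z) := by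
    by_cases hcase : ∃ Z ∈ S, E Y Z ∧ ¬ E X Z
    · obtain ⟨Z₀, hZ₀, hEY₀, hEX₀⟩ := hcase
      refine ⟨Y, hY, Or.inr rfl, fun Z hZ => ?_⟩
      constructor
      · rintro (hEX | hEY)
        · by_contra hEY
          have hZne : Z ≠ Z₀ := fun h => hEX₀ (h ▸ hEX)
          have h1 := hbad Z hZ (fun hf => hEY (hf.1 hEX))
          have h2 := hbad Z₀ hZ₀ (fun hf => hEX₀ (hf.2 hEY₀))
          have hsub : ({Z, Z₀} : Set (Finset V)) ⊆
              {W | W ∈ Q.parts ∧ W ≠ X ∪ Y ∧ ¬ Homogeneous G (X ∪ Y) W} := by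
            rintro W (rfl | rfl) <;> assumption
          have hfin : {W | W ∈ Q.parts ∧ W ≠ X ∪ Y ∧ ¬ Homogeneous G (X ∪ Y) W}.Finite :=
            Set.Finite.subset Q.parts.finite_toSet (fun W hW => hW.1)
          have hle := Set.ncard_le_ncard hsub hfin
          rw [Set.ncard_pair hZne] at hle
          omega
        · exact hEY
      · exact fun h => Or.inr h
    · push_neg at hcase
      exact ⟨X, hX, Or.inl rfl, fun Z hZ =>
        ⟨fun h => h.elim id (fun h' => hcase Z hZ h'), Or.inl⟩⟩
  obtain ⟨X₀, hX₀P, hX₀or, hkey⟩ := key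
  have hkey' : ∀ Z ∈ S, ((E Z X ∨ E Z Y) ↔ E Z X₀) := by
    intro Z hZ
    rw [hEsymm Z X, hEsymm Z Y, hEsymm Z X₀]
    exact hkey Z hZ
  have hmemS : ∀ W : Finset V, W ∈ Q.parts → W ≠ X ∪ Y → W ∈ S := by
    intro W hW hW'
    rw [hparts] at hW
    exact (Finset.mem_insert.1 hW).resolve_left hW'
  refine ⟨⟨⟨fun W => if h : W.1 = X ∪ Y then ⟨X₀, hX₀P⟩
      else ⟨W.1, (hSsub _ (hmemS _ W.2 h)).1⟩, ?_⟩, ?_⟩⟩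
  · -- injectivity
    intro W₁ W₂ h
    dsimp only at h
    by_cases h1 : W₁.1 = X ∪ Y <;> by_cases h2 : W₂.1 = X ∪ Y
    · exact Subtype.ext (h1.trans h2.symm)
    · rw [dif_pos h1, dif_neg h2] at h
      have : X₀ = W₂.1 := congrArg Subtype.val h
      obtain ⟨_, hX2, hY2⟩ := hSsub _ (hmemS _ W₂.2 h2)
      rcases hX₀or with rfl | rfl
      · exact absurd this.symm hX2
      · exact absurd this.symm hY2
    · rw [dif_neg h1, dif_pos h2] at h
      have : W₁.1 = X₀ := congrArg Subtype.val h
      obtain ⟨_, hX1, hY1⟩ := hSsub _ (hmemS _ W₁.2 h1)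
      rcases hX₀or with rfl | rfl
      · exact absurd this hX1
      · exact absurd this hY1
    · rw [dif_neg h1, dif_neg h2] at h
      have hv := Subtype.ext_iff.1 h
      exact Subtype.ext hv
  · -- map_rel_iff
    intro W₁ W₂
    change (QuotientGraph G P).Adj (dite _ _ _) (dite _ _ _) ↔ _
    by_cases h1 : W₁.1 = X ∪ Y <;> by_cases h2 : W₂.1 = X ∪ Y
    · rw [dif_pos h1, dif_pos h2]
      have h12 : W₁ = W₂ := Subtype.ext (h1.trans h2.symm)
      constructor
      · rintro ⟨hne', -⟩; exact absurd rfl hne'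
      · rintro ⟨hne', -⟩; exact absurd h12 hne'
    · rw [dif_pos h1, dif_neg h2]
      obtain ⟨hZP, hZX, hZY⟩ := hSsub _ (hmemS _ W₂.2 h2)
      have hX₀ne : X₀ ≠ W₂.1 := by
        rcases hX₀or with rfl | rfl
        · exact fun h => hZX h.symm
        · exact fun h => hZY h.symm
      have hWne : W₁ ≠ W₂ := fun h => h2 (h ▸ h1)
      constructor
      · rintro ⟨-, hEx⟩
        refine ⟨hWne, ?_⟩
        rw [h1]
        rcases (hkey _ (hmemS _ W₂.2 h2)).2 hEx with ⟨x, hx, z, hz, hadj⟩ | ⟨x, hx, z, hz, hadj⟩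
        · exact ⟨x, Finset.mem_union_left _ hx, z, hz, hadj⟩
        · exact ⟨x, Finset.mem_union_right _ hx, z, hz, hadj⟩
      · rintro ⟨-, hEx⟩
        rw [h1] at hEx
        refine ⟨fun h => hX₀ne (congrArg Subtype.val h), ?_⟩
        obtain ⟨u, hu, z, hz, hadj⟩ := hEx
        exact (hkey _ (hmemS _ W₂.2 h2)).1
          ((Finset.mem_union.1 hu).elim
            (fun h => Or.inl ⟨u, h, z, hz, hadj⟩)
            (fun h => Or.inr ⟨u, h, z, hz, hadj⟩))
    · rw [dif_neg h1, dif_pos h2]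
      obtain ⟨hZP, hZX, hZY⟩ := hSsub _ (hmemS _ W₁.2 h1)
      have hX₀ne : W₁.1 ≠ X₀ := by
        rcases hX₀or with rfl | rfl
        · exact hZX
        · exact hZY
      have hWne : W₁ ≠ W₂ := fun h => h1 (h ▸ h2)
      constructor
      · rintro ⟨-, hEx⟩
        refine ⟨hWne, ?_⟩
        rw [h2]
        rcases (hkey' _ (hmemS _ W₁.2 h1)).2 hEx with ⟨z, hz, x, hx, hadj⟩ | ⟨z, hz, x, hx, hadj⟩
        · exact ⟨z, hz, x, Finset.mem_union_left _ hx, hadj⟩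
        · exact ⟨z, hz, x, Finset.mem_union_right _ hx, hadj⟩
      · rintro ⟨-, hEx⟩
        rw [h2] at hEx
        refine ⟨fun h => hX₀ne (congrArg Subtype.val h), ?_⟩
        obtain ⟨z, hz, u, hu, hadj⟩ := hEx
        exact (hkey' _ (hmemS _ W₁.2 h1)).1
          ((Finset.mem_union.1 hu).elim
            (fun h => Or.inl ⟨z, hz, u, h, hadj⟩)
            (fun h => Or.inr ⟨z, hz, u, h, hadj⟩))
    · rw [dif_neg h1, dif_neg h2]
      constructor
      all_goals
        rintro ⟨hne', hEx⟩
        refine ⟨?_, hEx⟩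
        intro h
        have hv := Subtype.ext_iff.1 h
        exact hne' (Subtype.ext hv)
end

section
/- Let G be a graph with a 1-contraction sequence G_n, …, G_1. Then there exist a realiser (σ, τ) of G and, for each i, an injection r_i : V(G_i) → V(G) with r_i(x) belonging to the part of x for every vertex x of G_i, such that: (i) the map x ↦ r_i(x) is an isomorphism from the underlying graph of G_i onto the subgraph of G induced by r_i(V(G_i)); (ii) for every i > 1, the two vertices u, v of G_i contracted to form G_{i-1} are consecutive for the induced realiser, i.e., no representative r_i(w) of a third vertex w of G_i lies strictly between r_i(u) and r_i(v) in σ, or no such representative lies strictly between them in τ; and (iii) for every red edge xy of G_i, the vertices x and y are consecutive for the induced realiser in the same sense. -/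
open Finset

set_option linter.unusedSectionVars false
set_option linter.unusedVariables false
set_option maxHeartbeats 1600000

namespace TwwAux
variable {V : Type*} [DecidableEq V] (G : SimpleGraph V)

def QAdj (A B : Finset V) : Prop := A ≠ B ∧ ∃ a ∈ A, ∃ b ∈ B, G.Adj a b
def Cross (f g : Finset V → ℚ) (A B : Finset V) : Prop :=
  (f A < f B ∧ g B < g A) ∨ (f B < f A ∧ g A < g B)
def Betw (f : Finset V → ℚ) (A W B : Finset V) : Prop :=
  (f A < f W ∧ f W < f B) ∨ (f B < f W ∧ f W < f A)
def ConsIn (P : Finset (Finset V)) (f : Finset V → ℚ) (A B : Finset V) : Prop :=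
  ∀ W ∈ P, W ≠ A → W ≠ B → ¬ Betw f A W B
def RealOn (P : Finset (Finset V)) (f g : Finset V → ℚ) : Prop :=
  ∀ A ∈ P, ∀ B ∈ P, QAdj G A B ↔ Cross f g A B
def RedCons (P : Finset (Finset V)) (f g : Finset V → ℚ) : Prop :=
  ∀ A ∈ P, ∀ B ∈ P, A ≠ B → ¬ Homogeneous G A B → ConsIn P f A B ∨ ConsIn P g A B

def upd (f : Finset V → ℚ) (c1 c2 : Finset V) (a b : ℚ) : Finset V → ℚ :=
  fun U => if U = c1 then a else if U = c2 then b else f U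

variable {G}

lemma hom_symm {A B : Finset V} (h : Homogeneous G A B) : Homogeneous G B A := by
  rcases h with h | h
  · exact Or.inl fun x hx y hy => (h y hy x hx).symm
  · exact Or.inr fun x hx y hy => fun hadj => h y hy x hx hadj.symm

lemma hom_mono {A A' B : Finset V} (h : Homogeneous G A B) (hs : A' ⊆ A) :
    Homogeneous G A' B := by
  rcases h with h | h
  · exact Or.inl fun x hx => h x (hs hx)
  · exact Or.inr fun x hx => h x (hs hx)

lemma not_hom_qadj {A B : Finset V} (h : ¬ Homogeneous G A B) (hne : A ≠ B) : QAdj G A B := by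
  refine ⟨hne, ?_⟩
  by_contra hc
  push_neg at hc
  exact h (Or.inr hc)

lemma anti_not_qadj {A B : Finset V} (h : ∀ x ∈ A, ∀ y ∈ B, ¬ G.Adj x y) : ¬ QAdj G A B := by
  rintro ⟨-, a, ha, b, hb, hadj⟩
  exact h a ha b hb hadj

@[simp] lemma upd_c1 {f : Finset V → ℚ} {c1 c2 : Finset V} {a b : ℚ} :
    upd f c1 c2 a b c1 = a := if_pos rfl

lemma upd_c2 {f : Finset V → ℚ} {c1 c2 : Finset V} {a b : ℚ} (h : c1 ≠ c2) :
    upd f c1 c2 a b c2 = b := by simp [upd, h.symm]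

lemma upd_other {f : Finset V → ℚ} {c1 c2 U : Finset V} {a b : ℚ} (h1 : U ≠ c1) (h2 : U ≠ c2) :
    upd f c1 c2 a b U = f U := by simp [upd, h1, h2]

lemma side_iff {x z y : ℚ} (h1 : x < z → x < y) (h2 : z < x → y < x) (hxz : x ≠ z) :
    (z < x ↔ y < x) ∧ (x < z ↔ x < y) := by
  rcases lt_trichotomy x z with h | h | h
  · have := h1 h
    constructor <;> constructor <;> intro <;> linarith
  · exact absurd h hxz
  · have := h2 h
    constructor <;> constructor <;> intro <;> linarith

lemma qadj_hom_sub {A Z U : Finset V} (hhom : Homogeneous G Z U) (hsub : A ⊆ Z)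
    (hA : A.Nonempty) (hZ : Z.Nonempty) (hU : U.Nonempty) (hAU : A ≠ U) (hZU : Z ≠ U) :
    QAdj G A U ↔ QAdj G Z U := by
  rcases hhom with h | h
  · constructor <;> intro
    · exact ⟨hZU, hZ.choose, hZ.choose_spec, hU.choose, hU.choose_spec,
        h _ hZ.choose_spec _ hU.choose_spec⟩
    · exact ⟨hAU, hA.choose, hA.choose_spec, hU.choose, hU.choose_spec,
        h _ (hsub hA.choose_spec) _ hU.choose_spec⟩
  · constructor <;> intro hq
    · obtain ⟨-, a, ha, u, hu, hadj⟩ := hq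
      exact absurd hadj (h a (hsub ha) u hu)
    · obtain ⟨-, a, ha, u, hu, hadj⟩ := hq
      exact absurd hadj (h a ha u hu)

lemma qadj_comm {A B : Finset V} : QAdj G A B ↔ QAdj G B A := by
  constructor <;> rintro ⟨hne, a, ha, b, hb, hadj⟩ <;> exact ⟨hne.symm, b, hb, a, ha, hadj.symm⟩

lemma cross_comm {f g : Finset V → ℚ} {A B : Finset V} : Cross f g A B ↔ Cross f g B A := by
  unfold Cross; tauto

lemma ConsIn.symm {P : Finset (Finset V)} {f : Finset V → ℚ} {A B : Finset V}
    (h : ConsIn P f A B) : ConsIn P f B A := by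
  intro W hW h1 h2 hb
  exact h W hW h2 h1 (by unfold Betw at hb ⊢; tauto)


lemma buildStep {P P' : Finset (Finset V)} {f g : Finset V → ℚ} {c1 c2 W Z : Finset V} {q r : ℚ}
    (hZdef : Z = c1 ∪ c2)
    (hPP' : P = insert Z ((P'.erase c1).erase c2))
    (hPd : ∀ A ∈ P, ∀ B ∈ P, A ≠ B → Disjoint A B)
    (hPne : ∀ A ∈ P, A.Nonempty)
    (hPd' : ∀ A ∈ P', ∀ B ∈ P', A ≠ B → Disjoint A B)
    (hPne' : ∀ A ∈ P', A.Nonempty)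
    (hc1 : c1 ∈ P') (hc2 : c2 ∈ P') (h12 : c1 ≠ c2)
    (hr1 : ∀ A ∈ P, ∀ B ∈ P, ∀ B' ∈ P, B ≠ A → B' ≠ A →
      ¬ Homogeneous G A B → ¬ Homogeneous G A B' → B = B')
    (hfinj : Set.InjOn f P) (hginj : Set.InjOn g P)
    (hreal : RealOn G P f g) (hredcons : RedCons G P f g)
    (hWP : W ≠ Z → W ∈ P)
    (hWhom : W ≠ Z → ¬ Homogeneous G Z W)
    (hZWcons : W ≠ Z → ConsIn P f Z W)
    (hhomZ : ∀ U ∈ P, U ≠ Z → U ≠ W → Homogeneous G Z U)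
    (hq_fresh : ∀ U ∈ P, f U ≠ q)
    (hr_fresh : ∀ U ∈ P, g U ≠ r)
    (hq_side : ∀ U ∈ P, U ≠ Z → U ≠ W → (f U < f Z → f U < q) ∧ (f Z < f U → q < f U))
    (hr_side : ∀ U ∈ P, U ≠ Z → (g U < g Z → g U < r) ∧ (g Z < g U → r < g U))
    (hq_betw : ∀ U ∈ P, ∀ U' ∈ P, f U < q → q < f U' →
      (f U ≤ f Z ∧ f Z ≤ f U') ∨ (f U ≤ f W ∧ f W ≤ f U'))
    (hq_ZW : W ≠ Z → ¬ ((f Z < q ∧ q < f W) ∨ (f W < q ∧ q < f Z)))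
    (hadj1W : W ≠ Z → (QAdj G c1 W ↔ QAdj G Z W))
    (hadj2W : W ≠ Z → (QAdj G c2 W ↔ Cross (upd f c1 c2 (f Z) q) (upd g c1 c2 (g Z) r) c2 W))
    (hc2Whom : W ≠ Z → Homogeneous G c2 W)
    (hcross12 : QAdj G c1 c2 ↔ Cross (upd f c1 c2 (f Z) q) (upd g c1 c2 (g Z) r) c1 c2) :
    Set.InjOn (upd f c1 c2 (f Z) q) P' ∧ Set.InjOn (upd g c1 c2 (g Z) r) P' ∧
    RealOn G P' (upd f c1 c2 (f Z) q) (upd g c1 c2 (g Z) r) ∧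
    RedCons G P' (upd f c1 c2 (f Z) q) (upd g c1 c2 (g Z) r) ∧
    ConsIn P' (upd g c1 c2 (g Z) r) c1 c2 := by
  classical
  set f' := upd f c1 c2 (f Z) q with hf'def
  set g' := upd g c1 c2 (g Z) r with hg'def
  have hZP : Z ∈ P := hPP' ▸ mem_insert_self _ _
  have hc1sub : c1 ⊆ Z := hZdef ▸ subset_union_left
  have hc2sub : c2 ⊆ Z := hZdef ▸ subset_union_right
  have hc1ne : c1.Nonempty := hPne' c1 hc1
  have hc2ne : c2.Nonempty := hPne' c2 hc2
  have hZne : Z.Nonempty := hc1ne.mono hc1sub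
  have hc1Z : c1 ≠ Z := by
    intro h
    have hd : Disjoint c1 c2 := hPd' c1 hc1 c2 hc2 h12
    obtain ⟨x, hx⟩ := hc2ne
    exact (disjoint_right.1 hd hx) (h ▸ hc2sub hx : x ∈ c1)
  have hc2Z : c2 ≠ Z := by
    intro h
    have hd : Disjoint c1 c2 := hPd' c1 hc1 c2 hc2 h12
    obtain ⟨x, hx⟩ := hc1ne
    exact (disjoint_left.1 hd hx) (h ▸ hc1sub hx : x ∈ c2)
  have hZnotP' : Z ∉ P' := fun h => by
    obtain ⟨x, hx⟩ := hc1ne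
    exact (disjoint_left.1 (hPd' c1 hc1 Z h hc1Z) hx) (hc1sub hx)
  have hold : ∀ U ∈ P', U ≠ c1 → U ≠ c2 → U ∈ P ∧ U ≠ Z := by
    intro U hU h1 h2
    refine ⟨hPP' ▸ mem_insert_of_mem (mem_erase.2 ⟨h2, mem_erase.2 ⟨h1, hU⟩⟩), ?_⟩
    rintro rfl
    exact hZnotP' hU
  have holdP : ∀ U ∈ P, U ≠ Z → U ∈ P' ∧ U ≠ c1 ∧ U ≠ c2 := by
    intro U hU hUZ
    have h : U ∈ insert Z ((P'.erase c1).erase c2) := hPP' ▸ hU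
    rcases mem_insert.1 h with h | h
    · exact absurd h hUZ
    · have h2 := mem_erase.1 h
      have h1 := mem_erase.1 h2.2
      exact ⟨h1.2, h1.1, h2.1⟩
  have hchild_ne : ∀ c : Finset V, c ⊆ Z → c.Nonempty → ∀ U ∈ P, U ≠ Z → c ≠ U := by
    intro c hsub hne U hU hUZ h
    obtain ⟨x, hx⟩ := hne
    exact (disjoint_left.1 (hPd Z hZP U hU (Ne.symm hUZ)) (hsub hx)) (h ▸ hx)
  have hf'c1 : f' c1 = f Z := upd_c1
  have hf'c2 : f' c2 = q := upd_c2 h12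
  have hg'c1 : g' c1 = g Z := upd_c1
  have hg'c2 : g' c2 = r := upd_c2 h12
  have hf'old : ∀ U, U ≠ c1 → U ≠ c2 → f' U = f U := fun U h1 h2 => upd_other h1 h2
  have hg'old : ∀ U, U ≠ c1 → U ≠ c2 → g' U = g U := fun U h1 h2 => upd_other h1 h2
  have hfiff : ∀ U ∈ P, U ≠ Z → U ≠ W →
      (f Z < f U ↔ q < f U) ∧ (f U < f Z ↔ f U < q) := by
    intro U hU h1 h2
    have hs := hq_side U hU h1 h2
    exact side_iff hs.1 hs.2 (fun h => h1 (hfinj hU hZP h))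
  have hgiff : ∀ U ∈ P, U ≠ Z → (g Z < g U ↔ r < g U) ∧ (g U < g Z ↔ g U < r) := by
    intro U hU h1
    have hs := hr_side U hU h1
    exact side_iff hs.1 hs.2 (fun h => h1 (hginj hU hZP h))
  have hr_betw : ∀ U ∈ P, ∀ U' ∈ P, g U < r → r < g U' → g U ≤ g Z ∧ g Z ≤ g U' := by
    intro U hU U' hU' h1 h2
    constructor
    · by_cases hUZ : U = Z
      · exact le_of_eq (by rw [hUZ])
      · by_contra hlt
        push_neg at hlt
        exact absurd h1 (not_lt.2 (le_of_lt ((hr_side U hU hUZ).2 hlt)))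
    · by_cases hUZ : U' = Z
      · exact le_of_eq (by rw [hUZ])
      · by_contra hlt
        push_neg at hlt
        exact absurd h2 (not_lt.2 (le_of_lt ((hr_side U' hU' hUZ).1 hlt)))
  have hcross_c1 : ∀ U, U ≠ c1 → U ≠ c2 → (Cross f' g' c1 U ↔ Cross f g Z U) := by
    intro U h1 h2
    unfold Cross
    rw [hf'c1, hg'c1, hf'old U h1 h2, hg'old U h1 h2]
  have hcross_c2 : ∀ U ∈ P, U ≠ Z → U ≠ W → U ≠ c1 → U ≠ c2 →
      (Cross f' g' c2 U ↔ Cross f g Z U) := by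
    intro U hU hUZ hUW h1 h2
    have hfi := hfiff U hU hUZ hUW
    have hgi := hgiff U hU hUZ
    unfold Cross
    rw [hf'c2, hg'c2, hf'old U h1 h2, hg'old U h1 h2]
    constructor
    · rintro (⟨a, b⟩ | ⟨a, b⟩)
      · exact Or.inl ⟨hfi.1.2 a, hgi.2.2 b⟩
      · exact Or.inr ⟨hfi.2.2 a, hgi.1.2 b⟩
    · rintro (⟨a, b⟩ | ⟨a, b⟩)
      · exact Or.inl ⟨hfi.1.1 a, hgi.2.1 b⟩
      · exact Or.inr ⟨hfi.2.1 a, hgi.1.1 b⟩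
  have hcross_old : ∀ U U', U ≠ c1 → U ≠ c2 → U' ≠ c1 → U' ≠ c2 →
      (Cross f' g' U U' ↔ Cross f g U U') := by
    intro U U' h1 h2 h3 h4
    unfold Cross
    rw [hf'old U h1 h2, hg'old U h1 h2, hf'old U' h3 h4, hg'old U' h3 h4]
  -- realiser
  have hsymmstep : ∀ A B : Finset V, (QAdj G A B ↔ Cross f' g' A B) →
      (QAdj G B A ↔ Cross f' g' B A) := fun A B h => (qadj_comm.trans h).trans cross_comm
  have hqadj_c1_old : ∀ U ∈ P, U ≠ Z → (QAdj G c1 U ↔ Cross f' g' c1 U) := by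
    intro U hU hUZ
    obtain ⟨hU', h1, h2⟩ := holdP U hU hUZ
    rw [hcross_c1 U h1 h2]
    by_cases hUW : U = W
    · subst hUW
      rw [hadj1W hUZ]
      exact hreal Z hZP U hU
    · rw [qadj_hom_sub (hhomZ U hU hUZ hUW) hc1sub hc1ne hZne (hPne U hU)
        (hchild_ne c1 hc1sub hc1ne U hU hUZ) (Ne.symm hUZ)]
      exact hreal Z hZP U hU
  have hqadj_c2_old : ∀ U ∈ P, U ≠ Z → (QAdj G c2 U ↔ Cross f' g' c2 U) := by
    intro U hU hUZ
    obtain ⟨hU', h1, h2⟩ := holdP U hU hUZ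
    by_cases hUW : U = W
    · subst hUW
      exact hadj2W hUZ
    · rw [hcross_c2 U hU hUZ hUW h1 h2,
        qadj_hom_sub (hhomZ U hU hUZ hUW) hc2sub hc2ne hZne (hPne U hU)
        (hchild_ne c2 hc2sub hc2ne U hU hUZ) (Ne.symm hUZ)]
      exact hreal Z hZP U hU
  have hreal' : RealOn G P' f' g' := by
    intro A hA B hB
    by_cases hAB : A = B
    · subst hAB
      constructor
      · rintro ⟨h, -⟩
        exact absurd rfl h
      · rintro (⟨h, -⟩ | ⟨h, -⟩) <;> exact absurd h (lt_irrefl _)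
    rcases eq_or_ne A c1 with rfl | hA1
    · rcases eq_or_ne B c2 with rfl | hB2
      · exact hcross12
      · obtain ⟨hBP, hBZ⟩ := hold B hB (Ne.symm hAB) hB2
        exact hqadj_c1_old B hBP hBZ
    rcases eq_or_ne A c2 with rfl | hA2
    · rcases eq_or_ne B c1 with rfl | hB1
      · exact hsymmstep _ _ hcross12
      · obtain ⟨hBP, hBZ⟩ := hold B hB hB1 (Ne.symm hAB)
        exact hqadj_c2_old B hBP hBZ
    · obtain ⟨hAP, hAZ⟩ := hold A hA hA1 hA2
      rcases eq_or_ne B c1 with rfl | hB1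
      · exact hsymmstep _ _ (hqadj_c1_old A hAP hAZ)
      rcases eq_or_ne B c2 with rfl | hB2
      · exact hsymmstep _ _ (hqadj_c2_old A hAP hAZ)
      · obtain ⟨hBP, hBZ⟩ := hold B hB hB1 hB2
        rw [hcross_old A B hA1 hA2 hB1 hB2]
        exact hreal A hAP B hBP
  -- consecutiveness of the two children in g'
  have hcons12g : ConsIn P' g' c1 c2 := by
    intro W' hW' h1 h2 hb
    obtain ⟨hW'P, hW'Z⟩ := hold W' hW' h1 h2
    unfold Betw at hb
    rw [hg'c1, hg'c2, hg'old W' h1 h2] at hb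
    rcases hb with ⟨a, b⟩ | ⟨a, b⟩
    · exact absurd b (not_lt.2 (le_of_lt ((hr_side W' hW'P hW'Z).2 a)))
    · exact absurd a (not_lt.2 (le_of_lt ((hr_side W' hW'P hW'Z).1 b)))
  -- consecutiveness of c1 and W in f'
  have hconsc1W : W ≠ Z → ConsIn P' f' c1 W := by
    intro hWZ W' hW' h1 h2 hb
    have hWmem := hWP hWZ
    have hWc1 : W ≠ c1 := Ne.symm (hchild_ne c1 hc1sub hc1ne W hWmem hWZ)
    have hWc2 : W ≠ c2 := Ne.symm (hchild_ne c2 hc2sub hc2ne W hWmem hWZ)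
    unfold Betw at hb
    rw [hf'c1, hf'old W hWc1 hWc2] at hb
    rcases eq_or_ne W' c2 with rfl | hW'2
    · rw [hf'c2] at hb
      exact hq_ZW hWZ hb
    · obtain ⟨hW'P, hW'Z⟩ := hold W' hW' h1 hW'2
      rw [hf'old W' h1 hW'2] at hb
      exact hZWcons hWZ W' hW'P hW'Z h2 hb
  -- preservation of consecutiveness for old pairs
  have qclaim : ∀ A ∈ P, ∀ B ∈ P, A ≠ Z → B ≠ Z → ¬ Homogeneous G A B →
      ConsIn P f A B → A ≠ B → f A < q → q < f B → False := by
    intro A hA B hB hAZ hBZ hnh hcons hne ha hb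
    have hZcase : f A ≤ f Z → f Z ≤ f B → False := by
      intro h1 h2
      have e1 : f A < f Z := lt_of_le_of_ne h1 (fun h => hAZ (hfinj hA hZP h))
      have e2 : f Z < f B := lt_of_le_of_ne h2 (fun h => hBZ (hfinj hB hZP h.symm))
      exact hcons Z hZP (Ne.symm hAZ) (Ne.symm hBZ) (Or.inl ⟨e1, e2⟩)
    rcases hq_betw A hA B hB ha hb with ⟨h1, h2⟩ | ⟨h1, h2⟩
    · exact hZcase h1 h2
    · by_cases hWZ : W = Z
      · rw [hWZ] at h1 h2
        exact hZcase h1 h2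
      · have hWmem := hWP hWZ
        have hnhZW : ¬ Homogeneous G W Z := fun h => hWhom hWZ (hom_symm h)
        rcases eq_or_ne A W with rfl | hAW
        · exact hBZ (hr1 A hWmem Z hZP B hB (Ne.symm hWZ) (Ne.symm hne) hnhZW hnh).symm
        rcases eq_or_ne B W with rfl | hBW
        · have hnhWA : ¬ Homogeneous G B A := fun h => hnh (hom_symm h)
          exact hAZ (hr1 B hWmem Z hZP A hA (Ne.symm hWZ) hne hnhZW hnhWA).symm
        · have e1 : f A < f W := lt_of_le_of_ne h1 (fun h => hAW (hfinj hA hWmem h))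
          have e2 : f W < f B := lt_of_le_of_ne h2 (fun h => hBW (hfinj hB hWmem h.symm))
          exact hcons W hWmem (Ne.symm hAW) (Ne.symm hBW) (Or.inl ⟨e1, e2⟩)
  have hpresf : ∀ A ∈ P, ∀ B ∈ P, A ≠ Z → B ≠ Z → A ≠ B → ¬ Homogeneous G A B →
      ConsIn P f A B → ConsIn P' f' A B := by
    intro A hAP B hBP hAZ hBZ hAB hnh hcons
    obtain ⟨hAP', hA1, hA2⟩ := holdP A hAP hAZ
    obtain ⟨hBP', hB1, hB2⟩ := holdP B hBP hBZ
    intro W' hW' h1 h2 hb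
    unfold Betw at hb
    rw [hf'old A hA1 hA2, hf'old B hB1 hB2] at hb
    rcases eq_or_ne W' c1 with rfl | hW'1
    · rw [hf'c1] at hb
      exact hcons Z hZP (Ne.symm hAZ) (Ne.symm hBZ) hb
    rcases eq_or_ne W' c2 with rfl | hW'2
    · rw [hf'c2] at hb
      rcases hb with ⟨ha, hbq⟩ | ⟨ha, hbq⟩
      · exact qclaim A hAP B hBP hAZ hBZ hnh hcons hAB ha hbq
      · exact qclaim B hBP A hAP hBZ hAZ (fun h => hnh (hom_symm h)) hcons.symm (Ne.symm hAB) ha hbq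
    · obtain ⟨hW'P, hW'Z⟩ := hold W' hW' hW'1 hW'2
      rw [hf'old W' hW'1 hW'2] at hb
      exact hcons W' hW'P h1 h2 hb
  have hpresg : ∀ A ∈ P, ∀ B ∈ P, A ≠ Z → B ≠ Z → ConsIn P g A B → ConsIn P' g' A B := by
    intro A hAP B hBP hAZ hBZ hcons
    obtain ⟨hAP', hA1, hA2⟩ := holdP A hAP hAZ
    obtain ⟨hBP', hB1, hB2⟩ := holdP B hBP hBZ
    have gclaim : ∀ A' ∈ P, ∀ B' ∈ P, A' ≠ Z → B' ≠ Z → ConsIn P g A' B' →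
        g A' < r → r < g B' → False := by
      intro A' hA' B' hB' hA'Z hB'Z hcons' ha hbq
      obtain ⟨h1, h2⟩ := hr_betw A' hA' B' hB' ha hbq
      have e1 : g A' < g Z := lt_of_le_of_ne h1 (fun h => hA'Z (hginj hA' hZP h))
      have e2 : g Z < g B' := lt_of_le_of_ne h2 (fun h => hB'Z (hginj hB' hZP h.symm))
      exact hcons' Z hZP (Ne.symm hA'Z) (Ne.symm hB'Z) (Or.inl ⟨e1, e2⟩)
    intro W' hW' h1 h2 hb
    unfold Betw at hb
    rw [hg'old A hA1 hA2, hg'old B hB1 hB2] at hb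
    rcases eq_or_ne W' c1 with rfl | hW'1
    · rw [hg'c1] at hb
      exact hcons Z hZP (Ne.symm hAZ) (Ne.symm hBZ) hb
    rcases eq_or_ne W' c2 with rfl | hW'2
    · rw [hg'c2] at hb
      rcases hb with ⟨ha, hbq⟩ | ⟨ha, hbq⟩
      · exact gclaim A hAP B hBP hAZ hBZ hcons ha hbq
      · exact gclaim B hBP A hAP hBZ hAZ hcons.symm ha hbq
    · obtain ⟨hW'P, hW'Z⟩ := hold W' hW' hW'1 hW'2
      rw [hg'old W' hW'1 hW'2] at hb
      exact hcons W' hW'P h1 h2 hb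
  -- red consecutiveness at the new level
  have hredcons' : RedCons G P' f' g' := by
    intro A hA B hB hAB hnh
    rcases eq_or_ne A c1 with rfl | hA1
    · rcases eq_or_ne B c2 with rfl | hB2
      · exact Or.inr hcons12g
      · obtain ⟨hBP, hBZ⟩ := hold B hB (Ne.symm hAB) hB2
        by_cases hBW : B = W
        · subst hBW
          exact Or.inl (hconsc1W hBZ)
        · exact absurd (hom_mono (hhomZ B hBP hBZ hBW) hc1sub) hnh
    rcases eq_or_ne A c2 with rfl | hA2
    · rcases eq_or_ne B c1 with rfl | hB1
      · exact Or.inr hcons12g.symm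
      · obtain ⟨hBP, hBZ⟩ := hold B hB hB1 (Ne.symm hAB)
        by_cases hBW : B = W
        · subst hBW
          exact absurd (hc2Whom hBZ) hnh
        · exact absurd (hom_mono (hhomZ B hBP hBZ hBW) hc2sub) hnh
    · obtain ⟨hAP, hAZ⟩ := hold A hA hA1 hA2
      rcases eq_or_ne B c1 with rfl | hB1
      · by_cases hAW : A = W
        · subst hAW
          exact Or.inl (hconsc1W hAZ).symm
        · exact absurd (hom_symm (hom_mono (hhomZ A hAP hAZ hAW) hc1sub)) hnh
      rcases eq_or_ne B c2 with rfl | hB2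
      · by_cases hAW : A = W
        · subst hAW
          exact absurd (hom_symm (hc2Whom hAZ)) hnh
        · exact absurd (hom_symm (hom_mono (hhomZ A hAP hAZ hAW) hc2sub)) hnh
      · obtain ⟨hBP, hBZ⟩ := hold B hB hB1 hB2
        rcases hredcons A hAP B hBP hAB hnh with h | h
        · exact Or.inl (hpresf A hAP B hBP hAZ hBZ hAB hnh h)
        · exact Or.inr (hpresg A hAP B hBP hAZ hBZ h)
  -- injectivity
  have hfinj' : Set.InjOn f' P' := by
    intro A hA B hB heq
    by_contra hne
    rcases eq_or_ne A c1 with rfl | hA1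
    · rcases eq_or_ne B c2 with rfl | hB2
      · rw [hf'c1, hf'c2] at heq
        exact hq_fresh Z hZP heq
      · have hB1 : B ≠ A := fun h => hne h.symm
        obtain ⟨hBP, hBZ⟩ := hold B hB hB1 hB2
        rw [hf'c1, hf'old B hB1 hB2] at heq
        exact hBZ (hfinj hBP hZP heq.symm)
    rcases eq_or_ne A c2 with rfl | hA2
    · rcases eq_or_ne B c1 with rfl | hB1
      · rw [hf'c1, hf'c2] at heq
        exact hq_fresh Z hZP heq.symm
      · have hB2 : B ≠ A := fun h => hne h.symm
        obtain ⟨hBP, hBZ⟩ := hold B hB hB1 hB2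
        rw [hf'c2, hf'old B hB1 hB2] at heq
        exact hq_fresh B hBP heq.symm
    · obtain ⟨hAP, hAZ⟩ := hold A hA hA1 hA2
      rcases eq_or_ne B c1 with rfl | hB1
      · rw [hf'c1, hf'old A hA1 hA2] at heq
        exact hAZ (hfinj hAP hZP heq)
      rcases eq_or_ne B c2 with rfl | hB2
      · rw [hf'c2, hf'old A hA1 hA2] at heq
        exact hq_fresh A hAP heq
      · obtain ⟨hBP, hBZ⟩ := hold B hB hB1 hB2
        rw [hf'old A hA1 hA2, hf'old B hB1 hB2] at heq
        exact hne (hfinj hAP hBP heq)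
  have hginj' : Set.InjOn g' P' := by
    intro A hA B hB heq
    by_contra hne
    rcases eq_or_ne A c1 with rfl | hA1
    · rcases eq_or_ne B c2 with rfl | hB2
      · rw [hg'c1, hg'c2] at heq
        exact hr_fresh Z hZP heq
      · have hB1 : B ≠ A := fun h => hne h.symm
        obtain ⟨hBP, hBZ⟩ := hold B hB hB1 hB2
        rw [hg'c1, hg'old B hB1 hB2] at heq
        exact hBZ (hginj hBP hZP heq.symm)
    rcases eq_or_ne A c2 with rfl | hA2
    · rcases eq_or_ne B c1 with rfl | hB1
      · rw [hg'c1, hg'c2] at heq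
        exact hr_fresh Z hZP heq.symm
      · have hB2 : B ≠ A := fun h => hne h.symm
        obtain ⟨hBP, hBZ⟩ := hold B hB hB1 hB2
        rw [hg'c2, hg'old B hB1 hB2] at heq
        exact hr_fresh B hBP heq.symm
    · obtain ⟨hAP, hAZ⟩ := hold A hA hA1 hA2
      rcases eq_or_ne B c1 with rfl | hB1
      · rw [hg'c1, hg'old A hA1 hA2] at heq
        exact hAZ (hginj hAP hZP heq)
      rcases eq_or_ne B c2 with rfl | hB2
      · rw [hg'c2, hg'old A hA1 hA2] at heq
        exact hr_fresh A hAP heq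
      · obtain ⟨hBP, hBZ⟩ := hold B hB hB1 hB2
        rw [hg'old A hA1 hA2, hg'old B hB1 hB2] at heq
        exact hne (hginj hAP hBP heq)
  exact ⟨hfinj', hginj', hreal', hredcons', hcons12g⟩



lemma cross_swap {f g : Finset V → ℚ} {A B : Finset V} : Cross f g A B ↔ Cross g f A B := by
  unfold Cross; tauto

lemma cross_neg {f g : Finset V → ℚ} {A B : Finset V} :
    Cross (fun U => -f U) (fun U => -g U) A B ↔ Cross f g A B := by
  unfold Cross; simp only [neg_lt_neg_iff]; tauto

lemma betw_neg {f : Finset V → ℚ} {A W B : Finset V} :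
    Betw (fun U => -f U) A W B ↔ Betw f A W B := by
  unfold Betw; simp only [neg_lt_neg_iff]; tauto

lemma consin_neg {P : Finset (Finset V)} {f : Finset V → ℚ} {A B : Finset V} :
    ConsIn P (fun U => -f U) A B ↔ ConsIn P f A B := by
  unfold ConsIn
  constructor <;> intro h W hW h1 h2 <;> have := h W hW h1 h2
  · rwa [betw_neg] at this
  · rwa [betw_neg]

lemma realon_neg {P : Finset (Finset V)} {f g : Finset V → ℚ} (h : RealOn G P f g) :
    RealOn G P (fun U => -f U) (fun U => -g U) :=
  fun A hA B hB => (h A hA B hB).trans cross_neg.symm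

lemma realon_swap {P : Finset (Finset V)} {f g : Finset V → ℚ} (h : RealOn G P f g) :
    RealOn G P g f := fun A hA B hB => (h A hA B hB).trans cross_swap

lemma redcons_neg {P : Finset (Finset V)} {f g : Finset V → ℚ} (h : RedCons G P f g) :
    RedCons G P (fun U => -f U) (fun U => -g U) := by
  intro A hA B hB hne hnh
  rcases h A hA B hB hne hnh with hc | hc
  · exact Or.inl (consin_neg.2 hc)
  · exact Or.inr (consin_neg.2 hc)

lemma redcons_swap {P : Finset (Finset V)} {f g : Finset V → ℚ} (h : RedCons G P f g) :
    RedCons G P g f := fun A hA B hB hne hnh => (h A hA B hB hne hnh).symm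

lemma injon_neg {P : Finset (Finset V)} {f : Finset V → ℚ} (h : Set.InjOn f P) :
    Set.InjOn (fun U => -f U) P := fun a ha b hb hab => h ha hb (neg_injective hab)

lemma exists_just_above (s : Finset (Finset V)) (f : Finset V → ℚ) (w : ℚ) :
    ∃ q, w < q ∧ ∀ u ∈ s, w < f u → q < f u := by
  classical
  by_cases h : ((s.filter (fun u => w < f u)).image f).Nonempty
  · have hw : w < ((s.filter (fun u => w < f u)).image f).min' h := by
      rw [Finset.lt_min'_iff]
      intro b hb
      simp only [mem_image, mem_filter] at hb
      obtain ⟨u, ⟨-, hu⟩, he⟩ := hb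
      exact he ▸ hu
    refine ⟨(w + ((s.filter (fun u => w < f u)).image f).min' h) / 2, by linarith, ?_⟩
    intro u hu huw
    have : ((s.filter (fun u => w < f u)).image f).min' h ≤ f u :=
      min'_le _ _ (mem_image_of_mem f (mem_filter.2 ⟨hu, huw⟩))
    linarith
  · refine ⟨w + 1, by linarith, ?_⟩
    intro u hu huw
    exact absurd ⟨f u, mem_image_of_mem f (mem_filter.2 ⟨hu, huw⟩)⟩ h

lemma exists_just_below (s : Finset (Finset V)) (f : Finset V → ℚ) (w : ℚ) :
    ∃ q, q < w ∧ ∀ u ∈ s, f u < w → f u < q := by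
  obtain ⟨q, hq1, hq2⟩ := exists_just_above s (fun u => -f u) (-w)
  exact ⟨-q, by linarith, fun u hu huw => by have := hq2 u hu (by linarith); linarith⟩

lemma choose_r (P : Finset (Finset V)) (g : Finset V → ℚ) (Z : Finset V) (hZP : Z ∈ P)
    (b : Prop) : ∃ r : ℚ, (b → r < g Z) ∧ (¬ b → g Z < r) ∧
      (∀ U ∈ P, U ≠ Z → (g U < g Z → g U < r) ∧ (g Z < g U → r < g U)) ∧
      (∀ U ∈ P, g U ≠ r) := by
  classical
  by_cases hb : b
  · obtain ⟨r, hr1, hr2⟩ := exists_just_below P g (g Z)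
    refine ⟨r, fun _ => hr1, fun h => absurd hb h, fun U hU hUZ => ⟨fun h => hr2 U hU h,
      fun h => by linarith⟩, fun U hU => ?_⟩
    rcases lt_trichotomy (g U) (g Z) with h | h | h
    · exact ne_of_lt (hr2 U hU h)
    · rw [h]; exact ne_of_gt hr1
    · exact ne_of_gt (by linarith)
  · obtain ⟨r, hr1, hr2⟩ := exists_just_above P g (g Z)
    refine ⟨r, fun h => absurd h hb, fun _ => hr1, fun U hU hUZ => ⟨fun h => by linarith,
      fun h => hr2 U hU h⟩, fun U hU => ?_⟩
    rcases lt_trichotomy (g U) (g Z) with h | h | h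
    · exact ne_of_lt (by linarith)
    · rw [h]; exact ne_of_lt hr1
    · exact ne_of_gt (hr2 U hU h)

lemma not_anti_qadj {A B : Finset V} (hna : ¬ ∀ x ∈ A, ∀ y ∈ B, ¬ G.Adj x y) (hne : A ≠ B) :
    QAdj G A B := by
  refine ⟨hne, ?_⟩
  by_contra h
  push_neg at h
  exact hna h

def StepOut (G : SimpleGraph V) (P' : Finset (Finset V)) (X Y : Finset V) (f g f' g' : Finset V → ℚ) : Prop :=
  (∃ D : Finset V, (D = X ∨ D = Y) ∧ f' D = f (X ∪ Y) ∧ g' D = g (X ∪ Y)) ∧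
  (∀ U : Finset V, U ≠ X → U ≠ Y → f' U = f U ∧ g' U = g U) ∧
  Set.InjOn f' P' ∧ Set.InjOn g' P' ∧ RealOn G P' f' g' ∧ RedCons G P' f' g' ∧
  (ConsIn P' f' X Y ∨ ConsIn P' g' X Y)

lemma stepOut_neg {P' : Finset (Finset V)} {X Y : Finset V} {f g f' g' : Finset V → ℚ}
    (h : StepOut G P' X Y (fun U => -f U) (fun U => -g U) f' g') :
    StepOut G P' X Y f g (fun U => -f' U) (fun U => -g' U) := by
  obtain ⟨⟨D, hD, hfD, hgD⟩, hpres, hfi, hgi, hre, hrc, hcons⟩ := h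
  refine ⟨⟨D, hD, by simp only [hfD, neg_neg], by simp only [hgD, neg_neg]⟩,
    fun U h1 h2 => ⟨by simp only [(hpres U h1 h2).1, neg_neg], by simp only [(hpres U h1 h2).2, neg_neg]⟩,
    fun a ha b hb hab => hfi ha hb (by simpa using neg_injective hab),
    fun a ha b hb hab => hgi ha hb (by simpa using neg_injective hab),
    fun A hA B hB => (hre A hA B hB).trans cross_neg.symm,
    fun A hA B hB hne hnh => ?_, ?_⟩
  · rcases hrc A hA B hB hne hnh with hc | hc
    · exact Or.inl (consin_neg.2 hc)
    · exact Or.inr (consin_neg.2 hc)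
  · rcases hcons with hc | hc
    · exact Or.inl (consin_neg.2 hc)
    · exact Or.inr (consin_neg.2 hc)

lemma stepOut_swap {P' : Finset (Finset V)} {X Y : Finset V} {f g f' g' : Finset V → ℚ}
    (h : StepOut G P' X Y g f f' g') : StepOut G P' X Y f g g' f' := by
  obtain ⟨⟨D, hD, hfD, hgD⟩, hpres, hfi, hgi, hre, hrc, hcons⟩ := h
  exact ⟨⟨D, hD, hgD, hfD⟩, fun U h1 h2 => ⟨(hpres U h1 h2).2, (hpres U h1 h2).1⟩,
    hgi, hfi, fun A hA B hB => (hre A hA B hB).trans cross_swap,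
    fun A hA B hB hne hnh => (hrc A hA B hB hne hnh).symm, hcons.symm⟩


section Steps

variable {P P' : Finset (Finset V)} {f g : Finset V → ℚ} {X Y W Z : Finset V}

/-- Scenario with a mover: `c2` is anticomplete to the red neighbour `W` of `Z`;
`c1` stays in `Z`'s slot and `c2` moves just above `W` in `f`. -/
lemma stepScen1
    (hZdef : Z = X ∪ Y)
    (hPP' : P = insert Z ((P'.erase X).erase Y))
    (hPd : ∀ A ∈ P, ∀ B ∈ P, A ≠ B → Disjoint A B)
    (hPne : ∀ A ∈ P, A.Nonempty)
    (hPd' : ∀ A ∈ P', ∀ B ∈ P', A ≠ B → Disjoint A B)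
    (hPne' : ∀ A ∈ P', A.Nonempty)
    (hc1 : X ∈ P') (hc2 : Y ∈ P') (h12 : X ≠ Y)
    (hr1 : ∀ A ∈ P, ∀ B ∈ P, ∀ B' ∈ P, B ≠ A → B' ≠ A →
      ¬ Homogeneous G A B → ¬ Homogeneous G A B' → B = B')
    (hfinj : Set.InjOn f P) (hginj : Set.InjOn g P)
    (hreal : RealOn G P f g) (hredcons : RedCons G P f g)
    (hWP : W ∈ P) (hWZ : W ≠ Z)
    (hWhom : ¬ Homogeneous G Z W)
    (hZWcons : ConsIn P f Z W)
    (hZWlt : f Z < f W)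
    (hanti : ∀ x ∈ Y, ∀ y ∈ W, ¬ G.Adj x y)
    (hnanti : ¬ ∀ x ∈ X, ∀ y ∈ W, ¬ G.Adj x y) :
    ∃ q r : ℚ,
    Set.InjOn (upd f X Y (f Z) q) P' ∧ Set.InjOn (upd g X Y (g Z) r) P' ∧
    RealOn G P' (upd f X Y (f Z) q) (upd g X Y (g Z) r) ∧
    RedCons G P' (upd f X Y (f Z) q) (upd g X Y (g Z) r) ∧
    ConsIn P' (upd g X Y (g Z) r) X Y := by
  classical
  have hZP : Z ∈ P := hPP' ▸ mem_insert_self _ _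
  have hXsub : X ⊆ Z := hZdef ▸ subset_union_left
  have hYsub : Y ⊆ Z := hZdef ▸ subset_union_right
  have hXne : X.Nonempty := hPne' X hc1
  have hYne : Y.Nonempty := hPne' Y hc2
  have hchild_ne : ∀ c : Finset V, c ⊆ Z → c.Nonempty → ∀ U ∈ P, U ≠ Z → c ≠ U := by
    intro c hsub hne U hU hUZ h
    obtain ⟨x, hx⟩ := hne
    exact (disjoint_left.1 (hPd Z hZP U hU (Ne.symm hUZ)) (hsub hx)) (h ▸ hx)
  have hXW : X ≠ W := hchild_ne X hXsub hXne W hWP hWZ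
  have hYW : Y ≠ W := hchild_ne Y hYsub hYne W hWP hWZ
  have hqadjZW : QAdj G Z W :=
    not_hom_qadj hWhom (hchild_ne Z (le_refl Z) (hXne.mono hXsub) W hWP hWZ)
  have hgWZ : g W < g Z := by
    rcases (hreal Z hZP W hWP).1 hqadjZW with ⟨-, h⟩ | ⟨h, -⟩
    · exact h
    · exact absurd hZWlt (not_lt.2 (le_of_lt h))
  obtain ⟨q, hq1, hq2⟩ := exists_just_above P f (f W)
  obtain ⟨r, hrb1, hrb2, hrside, hrfresh⟩ := choose_r P g Z hZP (QAdj G X Y)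
  refine ⟨q, r, buildStep hZdef hPP' hPd hPne hPd' hPne' hc1 hc2 h12 hr1 hfinj hginj hreal
    hredcons (fun _ => hWP) (fun _ => hWhom) (fun _ => hZWcons)
    ?hhomZ ?hqfresh hrfresh ?hqside hrside ?hqbetw ?hqZW ?hadj1W ?hadj2W
    (fun _ => Or.inr hanti) ?hcross12⟩
  case hhomZ =>
    intro U hU hUZ hUW
    by_contra hno
    exact hUW (hr1 Z hZP W hWP U hU hWZ hUZ hWhom hno).symm
  case hqfresh =>
    intro U hU
    rcases lt_trichotomy (f U) (f W) with h | h | h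
    · exact ne_of_lt (by linarith)
    · rw [h]; exact ne_of_lt hq1
    · exact ne_of_gt (hq2 U hU h)
  case hqside =>
    intro U hU hUZ hUW
    refine ⟨fun h => by linarith, fun h => ?_⟩
    have hfw : f W < f U := by
      rcases lt_trichotomy (f U) (f W) with h' | h' | h'
      · exact absurd (Or.inl ⟨h, h'⟩) (hZWcons U hU hUZ hUW)
      · exact absurd (hfinj hU hWP h') hUW
      · exact h'
    exact hq2 U hU hfw
  case hqbetw =>
    intro U hU U' hU' h1 h2
    refine Or.inr ⟨?_, by linarith⟩
    by_contra hlt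
    push_neg at hlt
    exact absurd h1 (not_lt.2 (le_of_lt (hq2 U hU hlt)))
  case hqZW =>
    intro _
    rintro (⟨-, h⟩ | ⟨-, h⟩) <;> linarith
  case hadj1W =>
    intro _
    exact iff_of_true (not_anti_qadj hnanti hXW) hqadjZW
  case hadj2W =>
    intro _
    refine iff_of_false (anti_not_qadj hanti) ?_
    have hWX : W ≠ X := Ne.symm hXW
    have hWY : W ≠ Y := Ne.symm hYW
    rintro (⟨a, b⟩ | ⟨a, b⟩)
    · rw [upd_c2 h12, upd_other hWX hWY] at a
      linarith
    · rw [upd_c2 h12, upd_other hWX hWY] at b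
      have := (hrside W hWP hWZ).1 hgWZ
      linarith
  case hcross12 =>
    by_cases hadj : QAdj G X Y
    · refine iff_of_true hadj (Or.inl ⟨?_, ?_⟩)
      · rw [upd_c1, upd_c2 h12]; linarith
      · rw [upd_c1, upd_c2 h12]; exact hrb1 hadj
    · refine iff_of_false hadj ?_
      rintro (⟨a, b⟩ | ⟨a, b⟩)
      · rw [upd_c1, upd_c2 h12] at b
        have := hrb2 hadj
        linarith
      · rw [upd_c1, upd_c2 h12] at a
        linarith

/-- Scenario without a mover: `X` is red to `W`, `Y` is complete to `W`;
`X` stays in `Z`'s slot and `Y` goes just below `Z` in `f`. -/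
lemma stepScen2
    (hZdef : Z = X ∪ Y)
    (hPP' : P = insert Z ((P'.erase X).erase Y))
    (hPd : ∀ A ∈ P, ∀ B ∈ P, A ≠ B → Disjoint A B)
    (hPne : ∀ A ∈ P, A.Nonempty)
    (hPd' : ∀ A ∈ P', ∀ B ∈ P', A ≠ B → Disjoint A B)
    (hPne' : ∀ A ∈ P', A.Nonempty)
    (hc1 : X ∈ P') (hc2 : Y ∈ P') (h12 : X ≠ Y)
    (hr1 : ∀ A ∈ P, ∀ B ∈ P, ∀ B' ∈ P, B ≠ A → B' ≠ A →
      ¬ Homogeneous G A B → ¬ Homogeneous G A B' → B = B')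
    (hfinj : Set.InjOn f P) (hginj : Set.InjOn g P)
    (hreal : RealOn G P f g) (hredcons : RedCons G P f g)
    (hWP : W ∈ P) (hWZ : W ≠ Z)
    (hWhom : ¬ Homogeneous G Z W)
    (hZWcons : ConsIn P f Z W)
    (hZWlt : f Z < f W)
    (hred : ¬ Homogeneous G X W)
    (hcompl : ∀ x ∈ Y, ∀ y ∈ W, G.Adj x y) :
    ∃ q r : ℚ,
    Set.InjOn (upd f X Y (f Z) q) P' ∧ Set.InjOn (upd g X Y (g Z) r) P' ∧
    RealOn G P' (upd f X Y (f Z) q) (upd g X Y (g Z) r) ∧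
    RedCons G P' (upd f X Y (f Z) q) (upd g X Y (g Z) r) ∧
    ConsIn P' (upd g X Y (g Z) r) X Y := by
  classical
  have hZP : Z ∈ P := hPP' ▸ mem_insert_self _ _
  have hXsub : X ⊆ Z := hZdef ▸ subset_union_left
  have hYsub : Y ⊆ Z := hZdef ▸ subset_union_right
  have hXne : X.Nonempty := hPne' X hc1
  have hYne : Y.Nonempty := hPne' Y hc2
  have hWne : W.Nonempty := hPne W hWP
  have hchild_ne : ∀ c : Finset V, c ⊆ Z → c.Nonempty → ∀ U ∈ P, U ≠ Z → c ≠ U := by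
    intro c hsub hne U hU hUZ h
    obtain ⟨x, hx⟩ := hne
    exact (disjoint_left.1 (hPd Z hZP U hU (Ne.symm hUZ)) (hsub hx)) (h ▸ hx)
  have hXW : X ≠ W := hchild_ne X hXsub hXne W hWP hWZ
  have hYW : Y ≠ W := hchild_ne Y hYsub hYne W hWP hWZ
  have hqadjZW : QAdj G Z W :=
    not_hom_qadj hWhom (hchild_ne Z (le_refl Z) (hXne.mono hXsub) W hWP hWZ)
  have hgWZ : g W < g Z := by
    rcases (hreal Z hZP W hWP).1 hqadjZW with ⟨-, h⟩ | ⟨h, -⟩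
    · exact h
    · exact absurd hZWlt (not_lt.2 (le_of_lt h))
  obtain ⟨q, hq1, hq2⟩ := exists_just_below P f (f Z)
  obtain ⟨r, hrb1, hrb2, hrside, hrfresh⟩ := choose_r P g Z hZP (¬ QAdj G X Y)
  refine ⟨q, r, buildStep hZdef hPP' hPd hPne hPd' hPne' hc1 hc2 h12 hr1 hfinj hginj hreal
    hredcons (fun _ => hWP) (fun _ => hWhom) (fun _ => hZWcons)
    ?hhomZ ?hqfresh hrfresh ?hqside hrside ?hqbetw ?hqZW ?hadj1W ?hadj2W
    (fun _ => Or.inl hcompl) ?hcross12⟩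
  case hhomZ =>
    intro U hU hUZ hUW
    by_contra hno
    exact hUW (hr1 Z hZP W hWP U hU hWZ hUZ hWhom hno).symm
  case hqfresh =>
    intro U hU
    rcases lt_trichotomy (f U) (f Z) with h | h | h
    · exact ne_of_lt (hq2 U hU h)
    · rw [h]; exact ne_of_gt hq1
    · exact ne_of_gt (by linarith)
  case hqside =>
    intro U hU hUZ hUW
    exact ⟨fun h => hq2 U hU h, fun h => by linarith⟩
  case hqbetw =>
    intro U hU U' hU' h1 h2
    refine Or.inl ⟨by linarith, ?_⟩
    by_contra hlt
    push_neg at hlt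
    exact absurd h2 (not_lt.2 (le_of_lt (hq2 U' hU' hlt)))
  case hqZW =>
    intro _
    rintro (⟨h1, h2⟩ | ⟨h1, h2⟩) <;> linarith
  case hadj1W =>
    intro _
    exact iff_of_true (not_hom_qadj hred hXW) hqadjZW
  case hadj2W =>
    intro _
    have hWX : W ≠ X := Ne.symm hXW
    have hWY : W ≠ Y := Ne.symm hYW
    refine iff_of_true ⟨hYW, hYne.choose, hYne.choose_spec, hWne.choose, hWne.choose_spec,
      hcompl _ hYne.choose_spec _ hWne.choose_spec⟩ (Or.inl ⟨?_, ?_⟩)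
    · rw [upd_c2 h12, upd_other hWX hWY]
      linarith
    · rw [upd_c2 h12, upd_other hWX hWY]
      exact (hrside W hWP hWZ).1 hgWZ
  case hcross12 =>
    by_cases hadj : QAdj G X Y
    · refine iff_of_true hadj (Or.inr ⟨?_, ?_⟩)
      · rw [upd_c1, upd_c2 h12]; exact hq1
      · rw [upd_c1, upd_c2 h12]; exact hrb2 (by simpa using hadj)
    · refine iff_of_false hadj ?_
      rintro (⟨a, b⟩ | ⟨a, b⟩)
      · rw [upd_c1, upd_c2 h12] at a
        linarith
      · rw [upd_c1, upd_c2 h12] at b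
        have := hrb1 hadj
        linarith


lemma erase_comm' (s : Finset (Finset V)) (a b : Finset V) :
    (s.erase a).erase b = (s.erase b).erase a := by
  ext x
  simp only [mem_erase]
  tauto

lemma stepNoRed
    (hZdef : Z = X ∪ Y)
    (hPP' : P = insert Z ((P'.erase X).erase Y))
    (hPd : ∀ A ∈ P, ∀ B ∈ P, A ≠ B → Disjoint A B)
    (hPne : ∀ A ∈ P, A.Nonempty)
    (hPd' : ∀ A ∈ P', ∀ B ∈ P', A ≠ B → Disjoint A B)
    (hPne' : ∀ A ∈ P', A.Nonempty)
    (hc1 : X ∈ P') (hc2 : Y ∈ P') (h12 : X ≠ Y)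
    (hr1 : ∀ A ∈ P, ∀ B ∈ P, ∀ B' ∈ P, B ≠ A → B' ≠ A →
      ¬ Homogeneous G A B → ¬ Homogeneous G A B' → B = B')
    (hfinj : Set.InjOn f P) (hginj : Set.InjOn g P)
    (hreal : RealOn G P f g) (hredcons : RedCons G P f g)
    (hnored : ∀ U ∈ P, U ≠ Z → Homogeneous G Z U) :
    ∃ q r : ℚ,
    Set.InjOn (upd f X Y (f Z) q) P' ∧ Set.InjOn (upd g X Y (g Z) r) P' ∧
    RealOn G P' (upd f X Y (f Z) q) (upd g X Y (g Z) r) ∧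
    RedCons G P' (upd f X Y (f Z) q) (upd g X Y (g Z) r) ∧
    ConsIn P' (upd g X Y (g Z) r) X Y := by
  classical
  have hZP : Z ∈ P := hPP' ▸ mem_insert_self _ _
  obtain ⟨q, hq1, hq2⟩ := exists_just_above P f (f Z)
  obtain ⟨r, hrb1, hrb2, hrside, hrfresh⟩ := choose_r P g Z hZP (QAdj G X Y)
  refine ⟨q, r, buildStep (W := Z) hZdef hPP' hPd hPne hPd' hPne' hc1 hc2 h12 hr1 hfinj hginj
    hreal hredcons (fun h => absurd rfl h) (fun h => absurd rfl h) (fun h => absurd rfl h)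
    (fun U hU hUZ _ => hnored U hU hUZ) ?hqfresh hrfresh ?hqside hrside ?hqbetw
    (fun h => absurd rfl h) (fun h => absurd rfl h) (fun h => absurd rfl h)
    (fun h => absurd rfl h) ?hcross12⟩
  case hqfresh =>
    intro U hU
    rcases lt_trichotomy (f U) (f Z) with h | h | h
    · exact ne_of_lt (by linarith)
    · rw [h]; exact ne_of_lt hq1
    · exact ne_of_gt (hq2 U hU h)
  case hqside =>
    intro U hU hUZ _
    exact ⟨fun h => by linarith, fun h => hq2 U hU h⟩
  case hqbetw =>
    intro U hU U' hU' h1 h2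
    refine Or.inl ⟨?_, by linarith⟩
    by_contra hlt
    push_neg at hlt
    exact absurd h1 (not_lt.2 (le_of_lt (hq2 U hU hlt)))
  case hcross12 =>
    by_cases hadj : QAdj G X Y
    · refine iff_of_true hadj (Or.inl ⟨?_, ?_⟩)
      · rw [upd_c1, upd_c2 h12]; exact hq1
      · rw [upd_c1, upd_c2 h12]; exact hrb1 hadj
    · refine iff_of_false hadj ?_
      rintro (⟨a, b⟩ | ⟨a, b⟩)
      · rw [upd_c1, upd_c2 h12] at b
        have := hrb2 hadj
        linarith
      · rw [upd_c1, upd_c2 h12] at a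
        linarith

lemma packOut {c1 c2 : Finset V} {q r : ℚ}
    (hZdef : Z = X ∪ Y)
    (hor : (c1 = X ∧ c2 = Y) ∨ (c1 = Y ∧ c2 = X)) (h12 : c1 ≠ c2)
    (h5 : Set.InjOn (upd f c1 c2 (f Z) q) P' ∧ Set.InjOn (upd g c1 c2 (g Z) r) P' ∧
      RealOn G P' (upd f c1 c2 (f Z) q) (upd g c1 c2 (g Z) r) ∧
      RedCons G P' (upd f c1 c2 (f Z) q) (upd g c1 c2 (g Z) r) ∧
      ConsIn P' (upd g c1 c2 (g Z) r) c1 c2) :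
    StepOut G P' X Y f g (upd f c1 c2 (f Z) q) (upd g c1 c2 (g Z) r) := by
  obtain ⟨hfi, hgi, hre, hrc, hcons⟩ := h5
  rcases hor with ⟨rfl, rfl⟩ | ⟨rfl, rfl⟩
  · exact ⟨⟨c1, Or.inl rfl, by rw [upd_c1, hZdef], by rw [upd_c1, hZdef]⟩,
      fun U hUX hUY => ⟨upd_other hUX hUY, upd_other hUX hUY⟩, hfi, hgi, hre, hrc,
      Or.inr hcons⟩
  · exact ⟨⟨c1, Or.inr rfl, by rw [upd_c1, hZdef], by rw [upd_c1, hZdef]⟩,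
      fun U hUX hUY => ⟨upd_other hUY hUX, upd_other hUY hUX⟩, hfi, hgi, hre, hrc,
      Or.inr hcons.symm⟩

lemma stepConsF
    (hZdef : Z = X ∪ Y)
    (hPP' : P = insert Z ((P'.erase X).erase Y))
    (hPd : ∀ A ∈ P, ∀ B ∈ P, A ≠ B → Disjoint A B)
    (hPne : ∀ A ∈ P, A.Nonempty)
    (hPd' : ∀ A ∈ P', ∀ B ∈ P', A ≠ B → Disjoint A B)
    (hPne' : ∀ A ∈ P', A.Nonempty)
    (hX : X ∈ P') (hY : Y ∈ P') (hXY : X ≠ Y)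
    (hr1 : ∀ A ∈ P, ∀ B ∈ P, ∀ B' ∈ P, B ≠ A → B' ≠ A →
      ¬ Homogeneous G A B → ¬ Homogeneous G A B' → B = B')
    (hr1' : ∀ A ∈ P', ∀ B ∈ P', ∀ B' ∈ P', B ≠ A → B' ≠ A →
      ¬ Homogeneous G A B → ¬ Homogeneous G A B' → B = B')
    (hfinj : Set.InjOn f P) (hginj : Set.InjOn g P)
    (hreal : RealOn G P f g) (hredcons : RedCons G P f g)
    (hWP : W ∈ P) (hWZ : W ≠ Z)
    (hWhom : ¬ Homogeneous G Z W)
    (hZWcons : ConsIn P f Z W)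
    (hZWlt : f Z < f W) :
    ∃ f' g', StepOut G P' X Y f g f' g' := by
  classical
  have hZP : Z ∈ P := hPP' ▸ mem_insert_self _ _
  have hZdef' : Z = Y ∪ X := hZdef.trans (union_comm X Y)
  have hPP'' : P = insert Z ((P'.erase Y).erase X) := by rw [hPP', erase_comm']
  have hWP' : W ∈ P' := by
    have h : W ∈ insert Z ((P'.erase X).erase Y) := hPP' ▸ hWP
    rcases mem_insert.1 h with h | h
    · exact absurd h hWZ
    · exact mem_of_mem_erase (mem_of_mem_erase h)
  have hXsub : X ⊆ Z := hZdef ▸ subset_union_left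
  have hYsub : Y ⊆ Z := hZdef ▸ subset_union_right
  have hXne : X.Nonempty := hPne' X hX
  have hYne : Y.Nonempty := hPne' Y hY
  have hchild_ne : ∀ c : Finset V, c ⊆ Z → c.Nonempty → ∀ U ∈ P, U ≠ Z → c ≠ U := by
    intro c hsub hne U hU hUZ h
    obtain ⟨x, hx⟩ := hne
    exact (disjoint_left.1 (hPd Z hZP U hU (Ne.symm hUZ)) (hsub hx)) (h ▸ hx)
  have hXW : X ≠ W := hchild_ne X hXsub hXne W hWP hWZ
  have hYW : Y ≠ W := hchild_ne Y hYsub hYne W hWP hWZ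
  by_cases haX : ∀ x ∈ X, ∀ y ∈ W, ¬ G.Adj x y
  · have hnantiY : ¬ ∀ x ∈ Y, ∀ y ∈ W, ¬ G.Adj x y := by
      intro haY
      refine hWhom (Or.inr ?_)
      intro x hx
      rcases mem_union.1 (hZdef ▸ hx) with h | h
      · exact haX x h
      · exact haY x h
    obtain ⟨q, r, h5⟩ := stepScen1 hZdef' hPP'' hPd hPne hPd' hPne' hY hX hXY.symm hr1
      hfinj hginj hreal hredcons hWP hWZ hWhom hZWcons hZWlt haX hnantiY
    exact ⟨_, _, packOut hZdef (Or.inr ⟨rfl, rfl⟩) hXY.symm h5⟩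
  · by_cases haY : ∀ x ∈ Y, ∀ y ∈ W, ¬ G.Adj x y
    · obtain ⟨q, r, h5⟩ := stepScen1 hZdef hPP' hPd hPne hPd' hPne' hX hY hXY hr1
        hfinj hginj hreal hredcons hWP hWZ hWhom hZWcons hZWlt haY haX
      exact ⟨_, _, packOut hZdef (Or.inl ⟨rfl, rfl⟩) hXY h5⟩
    · by_cases hHX : Homogeneous G X W
      · have hcomplX : ∀ x ∈ X, ∀ y ∈ W, G.Adj x y := by
          rcases hHX with h | h
          · exact h
          · exact absurd h haX
        have hredY : ¬ Homogeneous G Y W := by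
          intro hHY
          rcases hHY with h | h
          · refine hWhom (Or.inl ?_)
            intro x hx
            rcases mem_union.1 (hZdef ▸ hx) with h' | h'
            · exact hcomplX x h'
            · exact h x h'
          · exact haY h
        obtain ⟨q, r, h5⟩ := stepScen2 hZdef' hPP'' hPd hPne hPd' hPne' hY hX hXY.symm hr1
          hfinj hginj hreal hredcons hWP hWZ hWhom hZWcons hZWlt hredY hcomplX
        exact ⟨_, _, packOut hZdef (Or.inr ⟨rfl, rfl⟩) hXY.symm h5⟩
      · have hcomplY : ∀ x ∈ Y, ∀ y ∈ W, G.Adj x y := by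
          by_cases hHY : Homogeneous G Y W
          · rcases hHY with h | h
            · exact h
            · exact absurd h haY
          · exact absurd (hr1' W hWP' X hX Y hY hXW hYW
              (fun h => hHX (hom_symm h)) (fun h => hHY (hom_symm h))) hXY
        obtain ⟨q, r, h5⟩ := stepScen2 hZdef hPP' hPd hPne hPd' hPne' hX hY hXY hr1
          hfinj hginj hreal hredcons hWP hWZ hWhom hZWcons hZWlt hHX hcomplY
        exact ⟨_, _, packOut hZdef (Or.inl ⟨rfl, rfl⟩) hXY h5⟩


lemma stepAnyF
    (hZdef : Z = X ∪ Y)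
    (hPP' : P = insert Z ((P'.erase X).erase Y))
    (hPd : ∀ A ∈ P, ∀ B ∈ P, A ≠ B → Disjoint A B)
    (hPne : ∀ A ∈ P, A.Nonempty)
    (hPd' : ∀ A ∈ P', ∀ B ∈ P', A ≠ B → Disjoint A B)
    (hPne' : ∀ A ∈ P', A.Nonempty)
    (hX : X ∈ P') (hY : Y ∈ P') (hXY : X ≠ Y)
    (hr1 : ∀ A ∈ P, ∀ B ∈ P, ∀ B' ∈ P, B ≠ A → B' ≠ A →
      ¬ Homogeneous G A B → ¬ Homogeneous G A B' → B = B')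
    (hr1' : ∀ A ∈ P', ∀ B ∈ P', ∀ B' ∈ P', B ≠ A → B' ≠ A →
      ¬ Homogeneous G A B → ¬ Homogeneous G A B' → B = B')
    (hfinj : Set.InjOn f P) (hginj : Set.InjOn g P)
    (hreal : RealOn G P f g) (hredcons : RedCons G P f g)
    (hWP : W ∈ P) (hWZ : W ≠ Z)
    (hWhom : ¬ Homogeneous G Z W)
    (hZWcons : ConsIn P f Z W) :
    ∃ f' g', StepOut G P' X Y f g f' g' := by
  classical
  have hZP : Z ∈ P := hPP' ▸ mem_insert_self _ _
  have hne : f Z ≠ f W := fun h => hWZ (hfinj hWP hZP h.symm)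
  rcases lt_or_gt_of_ne hne with hlt | hgt
  · exact stepConsF hZdef hPP' hPd hPne hPd' hPne' hX hY hXY hr1 hr1' hfinj hginj hreal
      hredcons hWP hWZ hWhom hZWcons hlt
  · obtain ⟨f', g', hout⟩ := stepConsF (f := fun U => -f U) (g := fun U => -g U)
      hZdef hPP' hPd hPne hPd' hPne' hX hY hXY hr1 hr1' (injon_neg hfinj) (injon_neg hginj)
      (realon_neg hreal) (redcons_neg hredcons) hWP hWZ hWhom (consin_neg.2 hZWcons)
      (by simpa using hgt)
    exact ⟨_, _, stepOut_neg hout⟩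

lemma stepMain
    (hZdef : Z = X ∪ Y)
    (hPP' : P = insert Z ((P'.erase X).erase Y))
    (hPd : ∀ A ∈ P, ∀ B ∈ P, A ≠ B → Disjoint A B)
    (hPne : ∀ A ∈ P, A.Nonempty)
    (hPd' : ∀ A ∈ P', ∀ B ∈ P', A ≠ B → Disjoint A B)
    (hPne' : ∀ A ∈ P', A.Nonempty)
    (hX : X ∈ P') (hY : Y ∈ P') (hXY : X ≠ Y)
    (hr1 : ∀ A ∈ P, ∀ B ∈ P, ∀ B' ∈ P, B ≠ A → B' ≠ A →
      ¬ Homogeneous G A B → ¬ Homogeneous G A B' → B = B')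
    (hr1' : ∀ A ∈ P', ∀ B ∈ P', ∀ B' ∈ P', B ≠ A → B' ≠ A →
      ¬ Homogeneous G A B → ¬ Homogeneous G A B' → B = B')
    (hfinj : Set.InjOn f P) (hginj : Set.InjOn g P)
    (hreal : RealOn G P f g) (hredcons : RedCons G P f g) :
    ∃ f' g', StepOut G P' X Y f g f' g' := by
  classical
  have hZP : Z ∈ P := hPP' ▸ mem_insert_self _ _
  by_cases hex : ∃ W ∈ P, W ≠ Z ∧ ¬ Homogeneous G Z W
  · obtain ⟨W, hWP, hWZ, hWhom⟩ := hex
    rcases hredcons Z hZP W hWP (Ne.symm hWZ) hWhom with hcf | hcg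
    · exact stepAnyF hZdef hPP' hPd hPne hPd' hPne' hX hY hXY hr1 hr1' hfinj hginj hreal
        hredcons hWP hWZ hWhom hcf
    · obtain ⟨f', g', hout⟩ := stepAnyF (f := g) (g := f) hZdef hPP' hPd hPne hPd' hPne'
        hX hY hXY hr1 hr1' hginj hfinj (realon_swap hreal) (redcons_swap hredcons)
        hWP hWZ hWhom hcg
      exact ⟨_, _, stepOut_swap hout⟩
  · push_neg at hex
    obtain ⟨q, r, h5⟩ := stepNoRed hZdef hPP' hPd hPne hPd' hPne' hX hY hXY hr1 hfinj hginj
      hreal hredcons (fun U hU hUZ => hex U hU hUZ)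
    exact ⟨_, _, packOut hZdef (Or.inl ⟨rfl, rfl⟩) hXY h5⟩

lemma merged_unique
    (hPP' : P = insert (X ∪ Y) ((P'.erase X).erase Y))
    (hPd' : ∀ A ∈ P', ∀ B ∈ P', A ≠ B → Disjoint A B)
    (hPne' : ∀ A ∈ P', A.Nonempty)
    (hX : X ∈ P') (hY : Y ∈ P') (hXY : X ≠ Y) :
    ∀ A ∈ P', ∀ B ∈ P', A ≠ B → A ∪ B ∈ P →
      (A = X ∧ B = Y) ∨ (A = Y ∧ B = X) := by
  intro A hA B hB hAB hU
  have heq : ∀ C ∈ P', ∀ D ∈ P', ∀ x : V, x ∈ C → x ∈ D → C = D := by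
    intro C hC D hD x hxC hxD
    by_contra hne
    exact (disjoint_left.1 (hPd' C hC D hD hne) hxC) hxD
  have h : A ∪ B ∈ insert (X ∪ Y) ((P'.erase X).erase Y) := hPP' ▸ hU
  rcases mem_insert.1 h with h | h
  · -- A ∪ B = X ∪ Y
    obtain ⟨x, hx⟩ := hPne' X hX
    obtain ⟨y, hy⟩ := hPne' Y hY
    have hxu : x ∈ A ∪ B := h ▸ (mem_union_left Y hx)
    have hyu : y ∈ A ∪ B := h ▸ (mem_union_right X hy)
    rcases mem_union.1 hxu with hxA | hxB
    · have hXA : X = A := heq X hX A hA x hx hxA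
      rcases mem_union.1 hyu with hyA | hyB
      · exact absurd ((heq X hX A hA x hx hxA).trans (heq Y hY A hA y hy hyA).symm) hXY
      · exact Or.inl ⟨hXA.symm, (heq Y hY B hB y hy hyB).symm⟩
    · have hXB : X = B := heq X hX B hB x hx hxB
      rcases mem_union.1 hyu with hyA | hyB
      · exact Or.inr ⟨(heq Y hY A hA y hy hyA).symm, hXB.symm⟩
      · exact absurd ((heq X hX B hB x hx hxB).trans (heq Y hY B hB y hy hyB).symm) hXY
  · -- A ∪ B ∈ P' itself: impossible
    have hUP' : A ∪ B ∈ P' := mem_of_mem_erase (mem_of_mem_erase h)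
    obtain ⟨a, ha⟩ := hPne' A hA
    have hAU : A = A ∪ B := heq A hA (A ∪ B) hUP' a ha (mem_union_left B ha)
    obtain ⟨b, hb⟩ := hPne' B hB
    have hBU : B = A ∪ B := heq B hB (A ∪ B) hUP' b hb (mem_union_right A hb)
    exact absurd (hAU.trans hBU.symm) hAB

end Steps


def upchain (S : ℕ → Finset V → Finset V) : ℕ → ℕ → Finset V → Finset V
  | _, 0, A => A
  | j, m + 1, A => upchain S (j + 1) m (S j A)

end TwwAux

open TwwAux

section MainAux

variable {V : Type*} [Fintype V] [DecidableEq V] (G : SimpleGraph V)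

lemma red_unique {P : Finpartition (Finset.univ : Finset V)} (hP : RedDegLE G P 1) :
    ∀ A ∈ P.parts, ∀ B ∈ P.parts, ∀ B' ∈ P.parts, B ≠ A → B' ≠ A →
      ¬ Homogeneous G A B → ¬ Homogeneous G A B' → B = B' := by
  intro A hA B hB B' hB' hBA hB'A hhB hhB'
  by_contra hne
  have hfin : {Y | Y ∈ P.parts ∧ Y ≠ A ∧ ¬ Homogeneous G A Y}.Finite :=
    Set.Finite.subset P.parts.finite_toSet (fun Y hY => hY.1)
  have : 1 < {Y | Y ∈ P.parts ∧ Y ≠ A ∧ ¬ Homogeneous G A Y}.ncard :=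
    (Set.one_lt_ncard_iff hfin).2 ⟨B, B', ⟨hB, hBA, hhB⟩, ⟨hB', hB'A, hhB'⟩, hne⟩
  exact absurd (hP A hA) (not_le.2 this)

lemma exists_chain (C : ContractionSeq V) (hC : IsDSeq G C 1) :
    ∀ i, 1 ≤ i → i ≤ Fintype.card V →
    ∃ (F Gg : ℕ → Finset V → ℚ) (S : ℕ → Finset V → Finset V),
    (∀ j, 1 ≤ j → j ≤ i →
      Set.InjOn (F j) ((C.parts j).parts : Set (Finset V)) ∧
      Set.InjOn (Gg j) ((C.parts j).parts : Set (Finset V)) ∧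
      RealOn G (C.parts j).parts (F j) (Gg j) ∧
      RedCons G (C.parts j).parts (F j) (Gg j) ∧
      (∀ A ∈ (C.parts j).parts, ∀ B ∈ (C.parts j).parts, A ≠ B →
        A ∪ B ∈ (C.parts (j - 1)).parts →
        ConsIn (C.parts j).parts (F j) A B ∨ ConsIn (C.parts j).parts (Gg j) A B)) ∧
    (∀ j, 1 ≤ j → j < i →
      (∀ A ∈ (C.parts j).parts, S j A ∈ (C.parts (j + 1)).parts ∧ S j A ⊆ A) ∧
      (∀ A ∈ (C.parts j).parts, ∀ B ∈ (C.parts j).parts,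
        (F j A < F j B ↔ F (j + 1) (S j A) < F (j + 1) (S j B)) ∧
        (Gg j A < Gg j B ↔ Gg (j + 1) (S j A) < Gg (j + 1) (S j B)))) := by
  classical
  have hPd : ∀ j, ∀ A ∈ (C.parts j).parts, ∀ B ∈ (C.parts j).parts, A ≠ B → Disjoint A B :=
    fun j A hA B hB hne => (C.parts j).disjoint (mem_coe.2 hA) (mem_coe.2 hB) hne
  have hPne : ∀ j, ∀ A ∈ (C.parts j).parts, A.Nonempty :=
    fun j A hA => (C.parts j).nonempty_of_mem_parts hA
  intro i
  induction i with
  | zero => omega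
  | succ k ih =>
    intro h1 hn
    by_cases hk : k = 0
    · subst hk
      refine ⟨fun _ _ => 0, fun _ _ => 0, fun _ A => A, ?_, by omega⟩
      intro j hj1 hj2
      have hj : j = 1 := by omega
      subst hj
      have huniq : ∀ A ∈ (C.parts 1).parts, ∀ B ∈ (C.parts 1).parts, A = B :=
        card_le_one.1 (le_of_eq (C.parts_card 1 le_rfl hn))
      refine ⟨fun A hA B hB _ => huniq A hA B hB, fun A hA B hB _ => huniq A hA B hB,
        ?_, ?_, ?_⟩
      · intro A hA B hB
        refine iff_of_false (fun h => h.1 (huniq A hA B hB)) ?_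
        rintro (⟨h, -⟩ | ⟨h, -⟩) <;> exact absurd h (lt_irrefl _)
      · intro A hA B hB hne _
        exact absurd (huniq A hA B hB) hne
      · intro A hA B hB hne _
        exact absurd (huniq A hA B hB) hne
    · have hk1 : 1 ≤ k := by omega
      have hkn : k ≤ Fintype.card V := by omega
      have hklt : k < Fintype.card V := by omega
      obtain ⟨F, Gg, S, hprops, hsecs⟩ := ih hk1 hkn
      obtain ⟨X, hX, Y, hY, hXY, hmerge⟩ := C.merge k hk1 hklt
      obtain ⟨hFinj, hGinj, hreal, hredcons, hmergecons⟩ := hprops k hk1 le_rfl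
      obtain ⟨f', g', hout⟩ := stepMain (Z := X ∪ Y) rfl hmerge
        (hPd k) (hPne k) (hPd (k + 1)) (hPne (k + 1)) hX hY hXY
        (red_unique G (hC k hk1 hkn)) (red_unique G (hC (k + 1) h1 hn))
        hFinj hGinj hreal hredcons
      obtain ⟨⟨D, hD, hfD, hgD⟩, hpres, hfi, hgi, hre, hrc, hcons⟩ := hout
      refine ⟨fun j => if j = k + 1 then f' else F j,
        fun j => if j = k + 1 then g' else Gg j,
        fun j A => if j = k then (if A = X ∪ Y then D else A) else S j A, ?_, ?_⟩
      · intro j hj1 hj2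
        rcases Nat.lt_or_ge j (k + 1) with hj | hj
        · have hne : j ≠ k + 1 := by omega
          simp only [if_neg hne]
          exact hprops j hj1 (by omega)
        · have hje : j = k + 1 := by omega
          subst hje
          simp only [if_pos rfl, if_true]
          refine ⟨hfi, hgi, hre, hrc, ?_⟩
          intro A hA B hB hne hun
          have hun' : A ∪ B ∈ (C.parts k).parts := by
            simpa using hun
          rcases merged_unique hmerge (hPd (k + 1)) (hPne (k + 1)) hX hY hXY
            A hA B hB hne hun' with ⟨rfl, rfl⟩ | ⟨rfl, rfl⟩
          · exact hcons
          · rcases hcons with h | h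
            · exact Or.inl h.symm
            · exact Or.inr h.symm
      · intro j hj1 hj2
        rcases Nat.lt_or_ge j k with hj | hj
        · have hne : j ≠ k := by omega
          have hne1 : j ≠ k + 1 := by omega
          have hne2 : j + 1 ≠ k + 1 := by omega
          simp only [if_neg hne, if_neg hne1, if_neg hne2]
          exact hsecs j hj1 (by omega)
        · have hje : j = k := by omega
          subst hje
          have hne1 : j ≠ j + 1 := by omega
          simp only [if_pos rfl, if_neg hne1, if_true]
          have hAXY : ∀ A ∈ (C.parts j).parts, A ≠ X ∪ Y → A ∈ (C.parts (j + 1)).parts ∧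
              A ≠ X ∧ A ≠ Y := by
            intro A hA hne
            have h : A ∈ insert (X ∪ Y) ((((C.parts (j + 1)).parts).erase X).erase Y) :=
              hmerge ▸ hA
            rcases mem_insert.1 h with h | h
            · exact absurd h hne
            · have h2 := mem_erase.1 h
              have h3 := mem_erase.1 h2.2
              exact ⟨h3.2, h3.1, h2.1⟩
          have hval : ∀ A ∈ (C.parts j).parts,
              f' (if A = X ∪ Y then D else A) = F j A ∧
              g' (if A = X ∪ Y then D else A) = Gg j A := by
            intro A hA
            by_cases hAe : A = X ∪ Y
            · rw [if_pos hAe, hAe]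
              exact ⟨hfD, hgD⟩
            · rw [if_neg hAe]
              obtain ⟨-, h1, h2⟩ := hAXY A hA hAe
              exact hpres A h1 h2
          constructor
          · intro A hA
            by_cases hAe : A = X ∪ Y
            · rw [if_pos hAe]
              rcases hD with rfl | rfl
              · exact ⟨hX, hAe ▸ subset_union_left⟩
              · exact ⟨hY, hAe ▸ subset_union_right⟩
            · rw [if_neg hAe]
              exact ⟨(hAXY A hA hAe).1, le_refl A⟩
          · intro A hA B hB
            rw [(hval A hA).1, (hval B hB).1, (hval A hA).2, (hval B hB).2]
            exact ⟨Iff.rfl, Iff.rfl⟩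


lemma exists_order_equiv {W : Type*} [Fintype W] (key : W → ℚ) (hinj : Function.Injective key) :
    ∃ σ : W ≃ Fin (Fintype.card W), ∀ u v, σ u < σ v ↔ key u < key v := by
  letI L : LinearOrder W := LinearOrder.lift' key hinj
  refine ⟨(monoEquivOfFin W rfl).symm.toEquiv, fun u v => ?_⟩
  rw [show ((monoEquivOfFin W rfl).symm.toEquiv u) = (monoEquivOfFin W rfl).symm u from rfl,
    show ((monoEquivOfFin W rfl).symm.toEquiv v) = (monoEquivOfFin W rfl).symm v from rfl,
    OrderIso.lt_iff_lt]
  exact Iff.rfl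


end MainAux

/-- Given a 1-contraction sequence of `G`, there are a realiser `(σ, τ)` of
`G` and, for each `i`, an injective system of representatives `r_i` of the parts of `G_i`
inducing the underlying graph of `G_i` as an induced subgraph of `G`, such that the two
vertices contracted at each step, as well as the endpoints of every red edge, are
consecutive for the induced realiser. -/
theorem stmt_7 {V : Type*} [Fintype V] [DecidableEq V] (G : SimpleGraph V)
    (C : ContractionSeq V) (hC : IsDSeq G C 1) :
    ∃ σ τ : V ≃ Fin (Fintype.card V), IsRealiser G σ τ ∧
      ∃ r : ∀ i : ℕ, {X : Finset V // X ∈ (C.parts i).parts} → V,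
        -- (i) representatives, injectivity, and induced-subgraph isomorphism
        (∀ i, 1 ≤ i → i ≤ Fintype.card V →
          Function.Injective (r i) ∧
          (∀ X, r i X ∈ X.1) ∧
          (∀ X Y, (QuotientGraph G (C.parts i)).Adj X Y ↔ G.Adj (r i X) (r i Y))) ∧
        -- (ii) the two vertices of `G_i` contracted to form `G_{i-1}` are consecutive
        (∀ i, 2 ≤ i → i ≤ Fintype.card V →
          ∀ X Y : {X : Finset V // X ∈ (C.parts i).parts}, X ≠ Y →
            X.1 ∪ Y.1 ∈ (C.parts (i - 1)).parts →
            ((∀ W, W ≠ X → W ≠ Y → ¬ StrictlyBetween σ (r i X) (r i W) (r i Y)) ∨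
             (∀ W, W ≠ X → W ≠ Y → ¬ StrictlyBetween τ (r i X) (r i W) (r i Y)))) ∧
        -- (iii) endpoints of red edges of `G_i` are consecutive
        (∀ i, 1 ≤ i → i ≤ Fintype.card V →
          ∀ X Y : {X : Finset V // X ∈ (C.parts i).parts}, X ≠ Y →
            ¬ Homogeneous G X.1 Y.1 →
            ((∀ W, W ≠ X → W ≠ Y → ¬ StrictlyBetween σ (r i X) (r i W) (r i Y)) ∨
             (∀ W, W ≠ X → W ≠ Y → ¬ StrictlyBetween τ (r i X) (r i W) (r i Y)))) := by
  classical
  rcases Nat.eq_zero_or_pos (Fintype.card V) with h0 | hpos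
  · refine ⟨Fintype.equivFin V, Fintype.equivFin V, ?_, ?_⟩
    · intro u
      haveI : IsEmpty V := Fintype.card_eq_zero_iff.1 h0
      exact isEmptyElim u
    · refine ⟨fun i X => ((C.parts i).nonempty_of_mem_parts X.2).choose, ?_, ?_, ?_⟩
      · intro i hi1 hi2; omega
      · intro i hi1 hi2; omega
      · intro i hi1 hi2; omega
  · obtain ⟨F, Gg, S, hprops, hsecs⟩ := exists_chain G C hC (Fintype.card V) hpos le_rfl
    set n := Fintype.card V with hn
    haveI hVne : Nonempty V := Fintype.card_pos_iff.1 hpos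
    have hPne : ∀ j : ℕ, ∀ A ∈ (C.parts j).parts, A.Nonempty :=
      fun j A hA => (C.parts j).nonempty_of_mem_parts hA
    have heqp : ∀ j : ℕ, ∀ A ∈ (C.parts j).parts, ∀ B ∈ (C.parts j).parts,
        ∀ x : V, x ∈ A → x ∈ B → A = B := by
      intro j A hA B hB x hxA hxB
      by_contra hne
      exact (disjoint_left.1 ((C.parts j).disjoint (mem_coe.2 hA) (mem_coe.2 hB) hne) hxA) hxB
    have hpartn : ∀ A ∈ (C.parts n).parts, ∀ x ∈ A, A = {x} := by
      intro A hA x hx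
      obtain ⟨a, ha⟩ := card_eq_one.1 (C.parts_top A hA)
      rw [ha] at hx ⊢
      rw [mem_singleton.1 hx]
    have hsingle : ∀ v : V, {v} ∈ (C.parts n).parts := by
      intro v
      obtain ⟨t, ht, hvt⟩ := (C.parts n).exists_mem (mem_univ v)
      rw [← hpartn t ht v hvt]
      exact ht
    -- chain lemmas
    have hup : ∀ m j, 1 ≤ j → j + m ≤ n → ∀ A ∈ (C.parts j).parts,
        (upchain S j m A ∈ (C.parts (j + m)).parts ∧ upchain S j m A ⊆ A) ∧
        (∀ B ∈ (C.parts j).parts,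
          (F j A < F j B ↔ F (j + m) (upchain S j m A) < F (j + m) (upchain S j m B)) ∧
          (Gg j A < Gg j B ↔ Gg (j + m) (upchain S j m A) < Gg (j + m) (upchain S j m B))) := by
      intro m
      induction m with
      | zero =>
        intro j h1 h2 A hA
        exact ⟨⟨hA, le_refl A⟩, fun B hB => ⟨Iff.rfl, Iff.rfl⟩⟩
      | succ m ihm =>
        intro j h1 h2 A hA
        have hjlt : j < n := by omega
        obtain ⟨hS1, hS2⟩ := hsecs j h1 hjlt
        have hSA := hS1 A hA
        have ihA := ihm (j + 1) (by omega) (by omega) (S j A) hSA.1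
        have hidx : j + (m + 1) = j + 1 + m := by omega
        have hch : ∀ B : Finset V, upchain S j (m + 1) B = upchain S (j + 1) m (S j B) :=
          fun B => rfl
        constructor
        · constructor
          · rw [hidx, hch A]
            exact ihA.1.1
          · rw [hch A]
            exact ihA.1.2.trans hSA.2
        · intro B hB
          have hSB := hS1 B hB
          have ihAB := ihA.2 (S j B) hSB.1
          rw [hidx, hch A, hch B]
          exact ⟨(hS2 A hA B hB).1.trans ihAB.1, (hS2 A hA B hB).2.trans ihAB.2⟩
    have hTmem : ∀ i, 1 ≤ i → i ≤ n → ∀ A ∈ (C.parts i).parts,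
        upchain S i (n - i) A ∈ (C.parts n).parts ∧ upchain S i (n - i) A ⊆ A := by
      intro i h1 h2 A hA
      have h := (hup (n - i) i h1 (by omega) A hA).1
      rwa [show i + (n - i) = n by omega] at h
    have hTiff : ∀ i, 1 ≤ i → i ≤ n → ∀ A ∈ (C.parts i).parts, ∀ B ∈ (C.parts i).parts,
        (F i A < F i B ↔ F n (upchain S i (n - i) A) < F n (upchain S i (n - i) B)) ∧
        (Gg i A < Gg i B ↔ Gg n (upchain S i (n - i) A) < Gg n (upchain S i (n - i) B)) := by
      intro i h1 h2 A hA B hB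
      have h := (hup (n - i) i h1 (by omega) A hA).2 B hB
      rwa [show i + (n - i) = n by omega] at h
    -- orders on V
    obtain ⟨hFinj, hGinj, hrealn, -, -⟩ := hprops n hpos le_rfl
    have keyinj : Function.Injective (fun v : V => F n {v}) := by
      intro u v h
      have := hFinj (mem_coe.2 (hsingle u)) (mem_coe.2 (hsingle v)) h
      exact Finset.singleton_injective this
    have geyinj : Function.Injective (fun v : V => Gg n {v}) := by
      intro u v h
      have := hGinj (mem_coe.2 (hsingle u)) (mem_coe.2 (hsingle v)) h
      exact Finset.singleton_injective this
    obtain ⟨σ, hσ⟩ := exists_order_equiv (fun v : V => F n {v}) keyinj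
    obtain ⟨τ, hτ⟩ := exists_order_equiv (fun v : V => Gg n {v}) geyinj
    -- representatives
    set pick : Finset V → V := fun A => if h : A.Nonempty then h.choose else Classical.arbitrary V
      with hpick
    have hpickmem : ∀ A : Finset V, A.Nonempty → pick A ∈ A := by
      intro A h
      rw [hpick]
      simp only [dif_pos h]
      exact h.choose_spec
    set r : ∀ i : ℕ, {X : Finset V // X ∈ (C.parts i).parts} → V :=
      fun i X => if 1 ≤ i ∧ i ≤ n then pick (upchain S i (n - i) X.1) else pick X.1 with hrdef
    have hrval : ∀ i, 1 ≤ i → i ≤ n → ∀ X : {X : Finset V // X ∈ (C.parts i).parts},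
        r i X = pick (upchain S i (n - i) X.1) := by
      intro i h1 h2 X
      rw [hrdef]
      simp only [if_pos (And.intro h1 h2)]
    have hrep : ∀ i, 1 ≤ i → i ≤ n → ∀ X : {X : Finset V // X ∈ (C.parts i).parts},
        r i X ∈ X.1 ∧ upchain S i (n - i) X.1 = {r i X} := by
      intro i h1 h2 X
      obtain ⟨hTn, hTs⟩ := hTmem i h1 h2 X.1 X.2
      have hne : (upchain S i (n - i) X.1).Nonempty := hPne n _ hTn
      have hm : r i X ∈ upchain S i (n - i) X.1 := by
        rw [hrval i h1 h2 X]
        exact hpickmem _ hne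
      exact ⟨hTs hm, hpartn _ hTn _ hm⟩
    have hkeyT : ∀ i, 1 ≤ i → i ≤ n → ∀ X : {X : Finset V // X ∈ (C.parts i).parts},
        F n (upchain S i (n - i) X.1) = F n {r i X} ∧
        Gg n (upchain S i (n - i) X.1) = Gg n {r i X} := by
      intro i h1 h2 X
      rw [(hrep i h1 h2 X).2]
      exact ⟨rfl, rfl⟩
    have hIff : ∀ i, 1 ≤ i → i ≤ n → ∀ X Y : {X : Finset V // X ∈ (C.parts i).parts},
        (F i X.1 < F i Y.1 ↔ σ (r i X) < σ (r i Y)) ∧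
        (Gg i X.1 < Gg i Y.1 ↔ τ (r i X) < τ (r i Y)) := by
      intro i h1 h2 X Y
      have h := hTiff i h1 h2 X.1 X.2 Y.1 Y.2
      constructor
      · rw [hσ (r i X) (r i Y)]
        rw [(hkeyT i h1 h2 X).1, (hkeyT i h1 h2 Y).1] at h
        exact h.1
      · rw [hτ (r i X) (r i Y)]
        rw [(hkeyT i h1 h2 X).2, (hkeyT i h1 h2 Y).2] at h
        exact h.2
    -- the realiser
    have hadj_singletons : ∀ u v : V, G.Adj u v ↔ TwwAux.QAdj G {u} {v} := by
      intro u v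
      constructor
      · intro h
        exact ⟨fun he => G.ne_of_adj h (Finset.singleton_injective he),
          u, mem_singleton_self u, v, mem_singleton_self v, h⟩
      · rintro ⟨-, a, ha, b, hb, hadj⟩
        rw [mem_singleton.1 ha, mem_singleton.1 hb] at hadj
        exact hadj
    have hreal : IsRealiser G σ τ := by
      intro u v
      rw [hadj_singletons u v, hrealn {u} (hsingle u) {v} (hsingle v)]
      constructor
      · rintro (⟨a, b⟩ | ⟨a, b⟩)
        · exact Or.inl ⟨(hσ u v).2 a, (hτ v u).2 b⟩
        · exact Or.inr ⟨(hσ v u).2 a, (hτ u v).2 b⟩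
      · rintro (⟨a, b⟩ | ⟨a, b⟩)
        · exact Or.inl ⟨(hσ u v).1 a, (hτ v u).1 b⟩
        · exact Or.inr ⟨(hσ v u).1 a, (hτ u v).1 b⟩
    have htransF : ∀ i, 1 ≤ i → i ≤ n → ∀ X Y : {X : Finset V // X ∈ (C.parts i).parts},
        TwwAux.ConsIn (C.parts i).parts (F i) X.1 Y.1 →
        ∀ W, W ≠ X → W ≠ Y → ¬ StrictlyBetween σ (r i X) (r i W) (r i Y) := by
      intro i h1 h2 X Y hc W hWX hWY hb
      have hWX' : W.1 ≠ X.1 := fun h => hWX (Subtype.ext h)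
      have hWY' : W.1 ≠ Y.1 := fun h => hWY (Subtype.ext h)
      rcases hb with ⟨a, b⟩ | ⟨a, b⟩
      · exact hc W.1 W.2 hWX' hWY'
          (Or.inl ⟨(hIff i h1 h2 X W).1.2 a, (hIff i h1 h2 W Y).1.2 b⟩)
      · exact hc W.1 W.2 hWX' hWY'
          (Or.inr ⟨(hIff i h1 h2 Y W).1.2 a, (hIff i h1 h2 W X).1.2 b⟩)
    have htransG : ∀ i, 1 ≤ i → i ≤ n → ∀ X Y : {X : Finset V // X ∈ (C.parts i).parts},
        TwwAux.ConsIn (C.parts i).parts (Gg i) X.1 Y.1 →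
        ∀ W, W ≠ X → W ≠ Y → ¬ StrictlyBetween τ (r i X) (r i W) (r i Y) := by
      intro i h1 h2 X Y hc W hWX hWY hb
      have hWX' : W.1 ≠ X.1 := fun h => hWX (Subtype.ext h)
      have hWY' : W.1 ≠ Y.1 := fun h => hWY (Subtype.ext h)
      rcases hb with ⟨a, b⟩ | ⟨a, b⟩
      · exact hc W.1 W.2 hWX' hWY'
          (Or.inl ⟨(hIff i h1 h2 X W).2.2 a, (hIff i h1 h2 W Y).2.2 b⟩)
      · exact hc W.1 W.2 hWX' hWY'
          (Or.inr ⟨(hIff i h1 h2 Y W).2.2 a, (hIff i h1 h2 W X).2.2 b⟩)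
    refine ⟨σ, τ, hreal, r, ?_, ?_, ?_⟩
    · intro i h1 h2
      refine ⟨?_, fun X => (hrep i h1 h2 X).1, ?_⟩
      · intro X Y hxy
        apply Subtype.ext
        exact heqp i X.1 X.2 Y.1 Y.2 (r i X) (hrep i h1 h2 X).1 (hxy ▸ (hrep i h1 h2 Y).1)
      · intro X Y
        have hq : (QuotientGraph G (C.parts i)).Adj X Y ↔ TwwAux.QAdj G X.1 Y.1 := by
          constructor
          · rintro ⟨hne, hx⟩
            exact ⟨fun h => hne (Subtype.ext h), hx⟩
          · rintro ⟨hne, hx⟩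
            exact ⟨fun h => hne (congrArg Subtype.val h), hx⟩
        obtain ⟨-, -, hrealm, -, -⟩ := hprops i h1 h2
        rw [hq, hrealm X.1 X.2 Y.1 Y.2, hreal (r i X) (r i Y)]
        constructor
        · rintro (⟨a, b⟩ | ⟨a, b⟩)
          · exact Or.inl ⟨(hIff i h1 h2 X Y).1.1 a, (hIff i h1 h2 Y X).2.1 b⟩
          · exact Or.inr ⟨(hIff i h1 h2 Y X).1.1 a, (hIff i h1 h2 X Y).2.1 b⟩
        · rintro (⟨a, b⟩ | ⟨a, b⟩)
          · exact Or.inl ⟨(hIff i h1 h2 X Y).1.2 a, (hIff i h1 h2 Y X).2.2 b⟩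
          · exact Or.inr ⟨(hIff i h1 h2 Y X).1.2 a, (hIff i h1 h2 X Y).2.2 b⟩
    · intro i h2i hin X Y hXY hun
      have h1i : 1 ≤ i := by omega
      obtain ⟨-, -, -, -, hm⟩ := hprops i h1i hin
      rcases hm X.1 X.2 Y.1 Y.2 (fun h => hXY (Subtype.ext h)) hun with hc | hc
      · exact Or.inl (htransF i h1i hin X Y hc)
      · exact Or.inr (htransG i h1i hin X Y hc)
    · intro i h1 h2 X Y hXY hnh
      obtain ⟨-, -, -, hrc, -⟩ := hprops i h1 h2
      rcases hrc X.1 X.2 Y.1 Y.2 (fun h => hXY (Subtype.ext h)) hnh with hc | hc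
      · exact Or.inl (htransF i h1 h2 X Y hc)
      · exact Or.inr (htransG i h1 h2 X Y hc)
end

section
/- Let G be a prime graph on at least 4 vertices, let G_n, …, G_1 be a 1-contraction sequence of G, and let s be a vertex of G such that for every i with 3 ≤ i ≤ n, the part of G_i containing s is incident to no red edge of G_i. Then for every i with 4 ≤ i ≤ n, the parts of the two vertices of G_i contracted to form G_{i-1} are either both subsets of N_G(s) or both subsets of V(G) ∖ N_G[s]. -/
open Finset

/-- In the situation of statement 9, the part containing `s` at any stage `3 ≤ j ≤ n`
is the singleton `{s}`. -/
lemma part_of_s_eq_singleton {V : Type*} [Fintype V] [DecidableEq V] (G : SimpleGraph V)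
    (hprime : IsPrimeGraph G) (C : ContractionSeq V) (s : V)
    (hs : ∀ i, 3 ≤ i → i ≤ Fintype.card V → ∀ X ∈ (C.parts i).parts, s ∈ X →
      ∀ Y ∈ (C.parts i).parts, Y ≠ X → Homogeneous G X Y)
    (j : ℕ) (hj3 : 3 ≤ j) (hjn : j ≤ Fintype.card V)
    (P : Finset V) (hP : P ∈ (C.parts j).parts) (hsP : s ∈ P) : P = {s} := by
  have hmod : IsModule G (↑P : Set V) := by
    intro v hv
    obtain ⟨Q, hQ, hvQ⟩ := (C.parts j).exists_mem (Finset.mem_univ v)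
    have hQP : Q ≠ P := by rintro rfl; exact hv hvQ
    rcases hs j hj3 hjn P hP hsP Q hQ hQP with h | h
    · exact Or.inl fun m hm => (h m hm v hvQ).symm
    · exact Or.inr fun m hm hadj => h m hm v hvQ hadj.symm
  rcases hprime _ hmod with h | h
  · ext x
    simp only [Finset.mem_singleton]
    constructor
    · intro hx
      exact h (Finset.mem_coe.mpr hx) (Finset.mem_coe.mpr hsP)
    · rintro rfl; exact hsP
  · exfalso
    have hall : ∀ x : V, x ∈ P := fun x => by
      have : (x : V) ∈ (↑P : Set V) := h ▸ Set.mem_univ x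
      exact this
    have hcard : 1 < (C.parts j).parts.card := by
      rw [C.parts_card j (by omega) hjn]; omega
    obtain ⟨Q, hQ, hQP⟩ := Finset.exists_mem_ne hcard P
    obtain ⟨q, hq⟩ := (C.parts j).nonempty_of_mem_parts hQ
    have hdisj : Disjoint Q P :=
      (C.parts j).disjoint (Finset.mem_coe.mpr hQ) (Finset.mem_coe.mpr hP) hQP
    exact Finset.disjoint_left.mp hdisj hq (hall q)

/-- Let `G` be prime on at least 4 vertices with a 1-contraction sequence,
and `s` a vertex whose part is never incident to a red edge in any `G_i`, `3 ≤ i ≤ n`.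
Then for `4 ≤ i ≤ n`, the two parts merged from `G_i` to `G_{i-1}` are both contained in
`N_G(s)` or both contained in `V(G) ∖ N_G[s]`. -/
theorem stmt_9 {V : Type*} [Fintype V] [DecidableEq V] (G : SimpleGraph V)
    (hprime : IsPrimeGraph G) (h4 : 4 ≤ Fintype.card V)
    (C : ContractionSeq V) (hC : IsDSeq G C 1) (s : V)
    (hs : ∀ i, 3 ≤ i → i ≤ Fintype.card V → ∀ X ∈ (C.parts i).parts, s ∈ X →
      ∀ Y ∈ (C.parts i).parts, Y ≠ X → Homogeneous G X Y)
    (i : ℕ) (hi4 : 4 ≤ i) (hin : i ≤ Fintype.card V)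
    (X Y : Finset V) (hX : X ∈ (C.parts i).parts) (hY : Y ∈ (C.parts i).parts)
    (hXY : X ≠ Y) (hmerge : X ∪ Y ∈ (C.parts (i - 1)).parts) :
    ((∀ x ∈ X, G.Adj s x) ∧ (∀ y ∈ Y, G.Adj s y)) ∨
    ((∀ x ∈ X, x ≠ s ∧ ¬ G.Adj s x) ∧ (∀ y ∈ Y, y ≠ s ∧ ¬ G.Adj s y)) := by
  have hi3 : 3 ≤ i - 1 := by omega
  have hin' : i - 1 ≤ Fintype.card V := by omega
  -- the part of s at stage i - 1 is {s}
  obtain ⟨P', hP', hsP'⟩ := (C.parts (i - 1)).exists_mem (Finset.mem_univ s)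
  have hP's : P' = {s} := part_of_s_eq_singleton G hprime C s hs (i - 1) hi3 hin' P' hP' hsP'
  obtain ⟨x₀, hx₀⟩ := (C.parts i).nonempty_of_mem_parts hX
  obtain ⟨y₀, hy₀⟩ := (C.parts i).nonempty_of_mem_parts hY
  -- s ∉ X ∪ Y
  have hsXY : s ∉ X ∪ Y := by
    intro hsXY
    have : X ∪ Y = P' := (C.parts (i - 1)).eq_of_mem_parts hmerge hP' hsXY hsP'
    rw [hP's] at this
    have hxs : x₀ = s := by
      have : x₀ ∈ ({s} : Finset V) := this ▸ Finset.mem_union_left Y hx₀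
      simpa using this
    have hys : y₀ = s := by
      have : y₀ ∈ ({s} : Finset V) := this ▸ Finset.mem_union_right X hy₀
      simpa using this
    have hXP : X = Y := (C.parts i).eq_of_mem_parts hX hY (hxs ▸ hx₀) (hys ▸ hy₀)
    exact hXY hXP
  have hsX : s ∉ X := fun h => hsXY (Finset.mem_union_left Y h)
  have hsY : s ∉ Y := fun h => hsXY (Finset.mem_union_right X h)
  -- the part of s at stage i is {s}
  obtain ⟨P, hP, hsP⟩ := (C.parts i).exists_mem (Finset.mem_univ s)
  have hPs : P = {s} := part_of_s_eq_singleton G hprime C s hs i (by omega) hin P hP hsP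
  have hPX : X ≠ P := fun h => hsX (h ▸ hsP)
  have hPY : Y ≠ P := fun h => hsY (h ▸ hsP)
  have hhX := hs i (by omega) hin P hP hsP X hX hPX
  have hhY := hs i (by omega) hin P hP hsP Y hY hPY
  rw [hPs] at hhX hhY
  simp only [Homogeneous, Finset.mem_singleton, forall_eq] at hhX hhY
  -- homogeneity of {s} with X ∪ Y at stage i - 1
  have hXYne : X ∪ Y ≠ P' := by
    rw [hP's]
    intro h
    exact hsXY (h ▸ Finset.mem_singleton_self s)
  have hhXY := hs (i - 1) hi3 hin' P' hP' hsP' (X ∪ Y) hmerge hXYne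
  rw [hP's] at hhXY
  simp only [Homogeneous, Finset.mem_singleton, forall_eq] at hhXY
  rcases hhX with hX1 | hX1
  · rcases hhY with hY1 | hY1
    · exact Or.inl ⟨hX1, hY1⟩
    · exfalso
      rcases hhXY with h | h
      · exact hY1 y₀ hy₀ (h y₀ (Finset.mem_union_right X hy₀))
      · exact h x₀ (Finset.mem_union_left Y hx₀) (hX1 x₀ hx₀)
  · rcases hhY with hY1 | hY1
    · exfalso
      rcases hhXY with h | h
      · exact hX1 x₀ hx₀ (h x₀ (Finset.mem_union_left Y hx₀))
      · exact h y₀ (Finset.mem_union_right X hy₀) (hY1 y₀ hy₀)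
    · exact Or.inr ⟨fun x hx => ⟨fun h => hsX (h ▸ hx), hX1 x hx⟩,
        fun y hy => ⟨fun h => hsY (h ▸ hy), hY1 y hy⟩⟩
end
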